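/- arXiv:1906.07832 — 8 statements merged into one kernel-verified Lean document; each statement's English description precedes it below -/
import Mathlib

section
/- Let N ≥ 1 and let g ∈ L²(dω) with ‖g‖_{L²(dω)} ≤ 1. Set ‖g‖_{dω,1} := ∑_{n=1}^N |⟨e_n, g⟩_{L²(dω)}| and r_N := ∑_{m≥N+1} σ_m. Then the expectation under the projection DPP of the squared approximation error of the mean element by its orthogonal projection onto T(x) satisfies E_DPP[ ‖μ_g − Π_{T(x)} μ_g‖_F² ] ≤ 2 σ_{N+1} + 2 ‖g‖_{dω,1}² ( N·r_N + ∑_{ℓ=2}^N (σ_1/ℓ!²) (N·r_N/σ_1)^ℓ ). -/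
open scoped RealInnerProductSpace BigOperators
open MeasureTheory
open scoped ENNReal NNReal

noncomputable instance spanRangeFiniteDimensional
    {F : Type*} [NormedAddCommGroup F] [InnerProductSpace ℝ F] {ι : Type*} [Finite ι]
    (f : ι → F) : FiniteDimensional ℝ (Submodule.span ℝ (Set.range f)) :=
  FiniteDimensional.span_of_finite ℝ (Set.finite_range f)

section auxLemmas
set_option linter.unusedSectionVars false

variable {X : Type*} [MeasurableSpace X] (ω : Measure X) [IsProbabilityMeasure ω]
  (e : ℕ → X → ℝ) (he_meas : ∀ m, Measurable (e m))
  (he_on : ∀ m n : ℕ, ∫ z, e m z * e n z ∂ω = if m = n then 1 else 0)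

lemma aux_int_mul {f g : X → ℝ}
    (hf : Measurable f) (hg : Measurable g)
    (hf2 : Integrable (fun z => f z ^ 2) ω) (hg2 : Integrable (fun z => g z ^ 2) ω) :
    Integrable (fun z => f z * g z) ω := by
  refine Integrable.mono' (((hf2.add hg2)).div_const 2)
    ((hf.mul hg).aestronglyMeasurable) (Filter.Eventually.of_forall fun z => ?_)
  simp only [Real.norm_eq_abs, abs_mul, Pi.add_apply]
  nlinarith [sq_nonneg (|f z| - |g z|), sq_abs (f z), sq_abs (g z), abs_nonneg (f z),
    abs_nonneg (g z)]

include he_on in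
lemma aux_esq_int (m : ℕ) : Integrable (fun z => e m z ^ 2) ω := by
  by_contra h
  have h0 : ¬ Integrable (fun z => e m z * e m z) ω := by
    simpa [pow_two] using h
  have := he_on m m
  rw [integral_undef h0] at this
  simp at this

include he_meas he_on in
lemma aux_ee_int (a b : ℕ) : Integrable (fun z => e a z * e b z) ω :=
  aux_int_mul ω (he_meas a) (he_meas b) (aux_esq_int ω e he_on a) (aux_esq_int ω e he_on b)

include he_meas he_on in
lemma aux_prodee_int {N : ℕ} (a b : Fin N → ℕ) :
    Integrable (fun x : Fin N → X => ∏ j, (e (a j) (x j) * e (b j) (x j)))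
      (Measure.pi fun _ : Fin N => ω) := by
  letI : MeasureSpace X := ⟨ω⟩
  haveI : SigmaFinite (volume : Measure X) := by
    exact (inferInstance : SigmaFinite ω)
  have h : Measure.pi (fun _ : Fin N => ω) = (volume : Measure (Fin N → X)) := by
    rw [MeasureTheory.volume_pi]; rfl
  rw [h]
  exact Integrable.fintype_prod (f := fun j z => e (a j) z * e (b j) z)
    (fun j => aux_ee_int ω e he_meas he_on (a j) (b j))

include he_meas he_on in
lemma aux_prodee_val {N : ℕ} (a b : Fin N → ℕ) :
    ∫ x : Fin N → X, ∏ j, (e (a j) (x j) * e (b j) (x j)) ∂(Measure.pi fun _ : Fin N => ω)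
      = ∏ j, (if a j = b j then (1:ℝ) else 0) := by
  letI : MeasureSpace X := ⟨ω⟩
  haveI : SigmaFinite (volume : Measure X) := by
    exact (inferInstance : SigmaFinite ω)
  have h : Measure.pi (fun _ : Fin N => ω) = (volume : Measure (Fin N → X)) := by
    rw [MeasureTheory.volume_pi]; rfl
  rw [h]
  rw [MeasureTheory.volume_pi, MeasureTheory.integral_fintype_prod_eq_prod (ι := Fin N)
    (f := fun j z => e (a j) z * e (b j) z)]
  exact Finset.prod_congr rfl fun j _ => he_on (a j) (b j)

lemma aux_det_eq {N : ℕ} (ρ : Fin N → ℕ) (x : Fin N → X) :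
    (Matrix.of fun i j : Fin N => e (ρ i) (x j)).det
      = ∑ π : Equiv.Perm (Fin N), ((Equiv.Perm.sign π : ℤ) : ℝ) * ∏ j, e (ρ (π j)) (x j) := by
  rw [Matrix.det_apply]
  simp [Units.smul_def, zsmul_eq_mul]

lemma aux_DD_expand {N : ℕ} (ρ ρ' : Fin N → ℕ) :
    (fun x : Fin N → X => (Matrix.of fun i j : Fin N => e (ρ i) (x j)).det *
        (Matrix.of fun i j : Fin N => e (ρ' i) (x j)).det)
      = fun x => ∑ π : Equiv.Perm (Fin N), ∑ τ : Equiv.Perm (Fin N),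
          (((Equiv.Perm.sign π : ℤ) : ℝ) * ((Equiv.Perm.sign τ : ℤ) : ℝ)) *
            ∏ j, (e (ρ (π j)) (x j) * e (ρ' (τ j)) (x j)) := by
  funext x
  rw [aux_det_eq, aux_det_eq, Finset.sum_mul_sum]
  refine Finset.sum_congr rfl fun π _ => Finset.sum_congr rfl fun τ _ => ?_
  rw [Finset.prod_mul_distrib]
  ring

include he_meas he_on in
lemma aux_DD_int {N : ℕ} (ρ ρ' : Fin N → ℕ) :
    Integrable (fun x : Fin N → X => (Matrix.of fun i j : Fin N => e (ρ i) (x j)).det *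
        (Matrix.of fun i j : Fin N => e (ρ' i) (x j)).det) (Measure.pi fun _ : Fin N => ω) := by
  rw [aux_DD_expand e ρ ρ']
  refine integrable_finset_sum _ fun π _ => integrable_finset_sum _ fun τ _ => ?_
  exact (aux_prodee_int ω e he_meas he_on (fun j => ρ (π j)) (fun j => ρ' (τ j))).const_mul _

include he_meas he_on in
lemma aux_DD_val {N : ℕ} (ρ ρ' : Fin N → ℕ) :
    ∫ x : Fin N → X, (Matrix.of fun i j : Fin N => e (ρ i) (x j)).det *
        (Matrix.of fun i j : Fin N => e (ρ' i) (x j)).det ∂(Measure.pi fun _ : Fin N => ω)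
      = ∑ π : Equiv.Perm (Fin N), ∑ τ : Equiv.Perm (Fin N),
          (((Equiv.Perm.sign π : ℤ) : ℝ) * ((Equiv.Perm.sign τ : ℤ) : ℝ)) *
            ∏ j, (if ρ (π j) = ρ' (τ j) then (1:ℝ) else 0) := by
  rw [aux_DD_expand e ρ ρ']
  rw [integral_finset_sum _ (fun π _ => integrable_finset_sum _ fun τ _ =>
    (aux_prodee_int ω e he_meas he_on (fun j => ρ (π j)) (fun j => ρ' (τ j))).const_mul _)]
  refine Finset.sum_congr rfl fun π _ => ?_
  rw [integral_finset_sum _ (fun τ _ =>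
    (aux_prodee_int ω e he_meas he_on (fun j => ρ (π j)) (fun j => ρ' (τ j))).const_mul _)]
  refine Finset.sum_congr rfl fun τ _ => ?_
  rw [MeasureTheory.integral_const_mul, aux_prodee_val ω e he_meas he_on]

include he_meas he_on in
lemma aux_DD_self {N : ℕ} (ρ : Fin N → ℕ) (hρ : Function.Injective ρ) :
    ∫ x : Fin N → X, (Matrix.of fun i j : Fin N => e (ρ i) (x j)).det *
        (Matrix.of fun i j : Fin N => e (ρ i) (x j)).det ∂(Measure.pi fun _ : Fin N => ω)
      = (N.factorial : ℝ) := by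
  rw [aux_DD_val ω e he_meas he_on]
  have h1 : ∀ π τ : Equiv.Perm (Fin N),
      (∏ j, (if ρ (π j) = ρ (τ j) then (1:ℝ) else 0)) = if π = τ then 1 else 0 := by
    intro π τ
    by_cases h : π = τ
    · simp [h]
    · have : ∃ j, π j ≠ τ j := by
        by_contra hc
        push_neg at hc
        exact h (Equiv.ext hc)
      obtain ⟨j, hj⟩ := this
      rw [if_neg h]
      refine Finset.prod_eq_zero (Finset.mem_univ j) ?_
      rw [if_neg (fun hee => hj (hρ hee))]
  calc ∑ π : Equiv.Perm (Fin N), ∑ τ : Equiv.Perm (Fin N),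
          (((Equiv.Perm.sign π : ℤ) : ℝ) * ((Equiv.Perm.sign τ : ℤ) : ℝ)) *
            ∏ j, (if ρ (π j) = ρ (τ j) then (1:ℝ) else 0)
      = ∑ π : Equiv.Perm (Fin N), (1:ℝ) := by
        refine Finset.sum_congr rfl fun π _ => ?_
        rw [Finset.sum_eq_single π]
        · rw [h1 π π, if_pos rfl, mul_one]
          rcases Int.units_eq_one_or (Equiv.Perm.sign π) with h | h <;> rw [h] <;> norm_num
        · intro τ _ hτ
          rw [h1 π τ, if_neg (fun hh => hτ hh.symm), mul_zero]
        · intro h; exact absurd (Finset.mem_univ π) h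
    _ = (N.factorial : ℝ) := by
        rw [Finset.sum_const, Finset.card_univ, Fintype.card_perm, Fintype.card_fin]
        simp

include he_meas he_on in
lemma aux_DD_zero {N : ℕ} (ρ ρ' : Fin N → ℕ)
    (hrange : Set.range ρ ≠ Set.range ρ') :
    ∫ x : Fin N → X, (Matrix.of fun i j : Fin N => e (ρ i) (x j)).det *
        (Matrix.of fun i j : Fin N => e (ρ' i) (x j)).det ∂(Measure.pi fun _ : Fin N => ω)
      = 0 := by
  rw [aux_DD_val ω e he_meas he_on]
  refine Finset.sum_eq_zero fun π _ => Finset.sum_eq_zero fun τ _ => ?_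
  have : ∃ j, ρ (π j) ≠ ρ' (τ j) := by
    by_contra hc
    push_neg at hc
    apply hrange
    have h1 : ρ ∘ π = ρ' ∘ τ := funext hc
    calc Set.range ρ = Set.range (ρ ∘ π) := (Function.Surjective.range_comp π.surjective ρ).symm
      _ = Set.range (ρ' ∘ τ) := by rw [h1]
      _ = Set.range ρ' := Function.Surjective.range_comp τ.surjective ρ'
  obtain ⟨j, hj⟩ := this
  have h0 : (∏ j, (if ρ (π j) = ρ' (τ j) then (1:ℝ) else 0)) = 0 :=
    Finset.prod_eq_zero (Finset.mem_univ j) (if_neg hj)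
  rw [h0, mul_zero]

include he_meas he_on in
lemma aux_bessel (g : X → ℝ) (hg_meas : Measurable g)
    (hg2 : Integrable (fun z => (g z) ^ 2) ω) (s : Finset ℕ) :
    ∑ m ∈ s, (∫ z, e m z * g z ∂ω) ^ 2 ≤ ∫ z, (g z) ^ 2 ∂ω := by
  set b : ℕ → ℝ := fun m => ∫ z, e m z * g z ∂ω with hbdef
  set S : X → ℝ := fun z => ∑ m ∈ s, b m * e m z with hS
  have hge : ∀ m : ℕ, Integrable (fun z => g z * e m z) ω := fun m =>
    aux_int_mul ω hg_meas (he_meas m) hg2 (aux_esq_int ω e he_on m)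
  have IS2 : Integrable (fun z => ∑ m ∈ s, ∑ n ∈ s, (b m * b n) * (e m z * e n z)) ω :=
    integrable_finset_sum _ fun m _ => integrable_finset_sum _ fun n _ =>
      (aux_ee_int ω e he_meas he_on m n).const_mul _
  have hS2 : (fun z => S z ^ 2) = fun z => ∑ m ∈ s, ∑ n ∈ s, (b m * b n) * (e m z * e n z) := by
    funext z
    rw [hS, pow_two, Finset.sum_mul_sum]
    exact Finset.sum_congr rfl fun m _ => Finset.sum_congr rfl fun n _ => by ring
  have IS2' : Integrable (fun z => S z ^ 2) ω := by rw [hS2]; exact IS2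
  have hgS : (fun z => g z * S z) = fun z => ∑ m ∈ s, b m * (g z * e m z) := by
    funext z
    rw [hS, Finset.mul_sum]
    exact Finset.sum_congr rfl fun m _ => by ring
  have IgS : Integrable (fun z => g z * S z) ω := by
    rw [hgS]; exact integrable_finset_sum _ fun m _ => (hge m).const_mul _
  have key : (0:ℝ) ≤ ∫ z, (g z - S z) ^ 2 ∂ω := integral_nonneg fun z => sq_nonneg _
  have expand : (fun z => (g z - S z) ^ 2)
      = fun z => (g z ^ 2 - 2 * (g z * S z)) + S z ^ 2 := by
    funext z; ring
  have I1 : Integrable (fun z => g z ^ 2 - 2 * (g z * S z)) ω := by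
    exact hg2.sub (IgS.const_mul 2)
  rw [expand, integral_add I1 IS2',
    integral_sub hg2 (IgS.const_mul 2), MeasureTheory.integral_const_mul] at key
  have vgS : ∫ z, g z * S z ∂ω = ∑ m ∈ s, b m ^ 2 := by
    rw [hgS, integral_finset_sum _ fun m _ => (hge m).const_mul _]
    refine Finset.sum_congr rfl fun m _ => ?_
    rw [MeasureTheory.integral_const_mul, pow_two, hbdef]
    congr 1
    refine integral_congr_ae (Filter.Eventually.of_forall fun z => mul_comm _ _)
  have vS2 : ∫ z, S z ^ 2 ∂ω = ∑ m ∈ s, b m ^ 2 := by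
    rw [hS2, integral_finset_sum _ fun m _ => integrable_finset_sum _ fun n _ =>
      (aux_ee_int ω e he_meas he_on m n).const_mul _]
    refine Finset.sum_congr rfl fun m hm => ?_
    rw [integral_finset_sum _ fun n _ => (aux_ee_int ω e he_meas he_on m n).const_mul _]
    rw [Finset.sum_eq_single m]
    · rw [MeasureTheory.integral_const_mul, he_on m m, if_pos rfl, mul_one, pow_two]
    · intro n _ hn
      rw [MeasureTheory.integral_const_mul, he_on m n, if_neg (fun h => hn h.symm), mul_zero]
    · intro h; exact absurd hm h
  rw [vgS, vS2] at key
  linarith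

end auxLemmas

set_option maxHeartbeats 1000000 in
/-- **Theorem 1 of the paper.** Under the projection DPP with kernel
`∑_{n∈[N]} e_n(x)e_n(y)` and reference measure `dω`, the expected squared approximation
error of the mean element `μ_g` by its orthogonal projection onto `T(x)` is at most
`2 σ_{N+1} + 2 ‖g‖_{dω,1}² (N r_N + ∑_{ℓ=2}^N (σ_1/ℓ!²) (N r_N/σ_1)^ℓ)`.
(Indices are 0-based: `σ 0` is the paper's `σ_1`, `σ N` is `σ_{N+1}`.) -/
theorem stmt0 {X : Type*} [MeasurableSpace X] (ω : Measure X) [IsProbabilityMeasure ω]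
    (e : ℕ → X → ℝ) (he_meas : ∀ m, Measurable (e m))
    (he_on : ∀ m n : ℕ, ∫ z, e m z * e n z ∂ω = if m = n then 1 else 0)
    (σ : ℕ → ℝ) (hσpos : ∀ m, 0 < σ m) (hσanti : Antitone σ) (hσsum : Summable σ)
    (hdiag : ∀ z : X, Summable fun m => σ m * (e m z) ^ 2)
    {F : Type*} [NormedAddCommGroup F] [InnerProductSpace ℝ F] [CompleteSpace F]
    (eF : ℕ → F) (heF : Orthonormal ℝ eF)
    (heFtot : (Submodule.span ℝ (Set.range eF)).topologicalClosure = ⊤)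
    (Kf : X → F) (hKf : ∀ (z : X) (m : ℕ), ⟪eF m, Kf z⟫ = Real.sqrt (σ m) * e m z)
    (N : ℕ) (hN : 0 < N)
    (g : X → ℝ) (hg_meas : Measurable g)
    (hg2 : Integrable (fun z => (g z) ^ 2) ω)
    (hgnorm : ∫ z, (g z) ^ 2 ∂ω ≤ 1)
    (μg : F) (hμg : μg = ∑' m : ℕ, (Real.sqrt (σ m) * ∫ z, e m z * g z ∂ω) • eF m)
    (gnorm1 : ℝ) (hgnorm1 : gnorm1 = ∑ n : Fin N, |∫ z, e n.val z * g z ∂ω|)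
    (rN : ℝ) (hrN : rN = ∑' m : ℕ, σ (N + m)) :
    (1 / (N.factorial : ℝ)) *
        ∫ x : Fin N → X,
          ‖μg - (Submodule.orthogonalProjectionOnto (Submodule.span ℝ (Set.range fun j => Kf (x j))) μg :
              F)‖ ^ 2 *
            (Matrix.of fun i j : Fin N => e i.val (x j)).det ^ 2
          ∂(Measure.pi fun _ : Fin N => ω)
      ≤ 2 * σ N + 2 * gnorm1 ^ 2 *
          ((N : ℝ) * rN +
            ∑ ℓ ∈ Finset.Icc 2 N, (σ 0 / (ℓ.factorial : ℝ) ^ 2) * ((N : ℝ) * rN / σ 0) ^ ℓ) := by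
  classical
  -- abbreviations
  set μπ : Measure (Fin N → X) := Measure.pi fun _ : Fin N => ω with hμπ
  let bb : ℕ → ℝ := fun m => ∫ z, e m z * g z ∂ω
  let cc : ℕ → ℝ := fun m => Real.sqrt (σ m) * bb m
  have hcc_sq : ∀ m, cc m ^ 2 = σ m * bb m ^ 2 := fun m => by
    show (Real.sqrt (σ m) * bb m) ^ 2 = _
    rw [mul_pow, Real.sq_sqrt (hσpos m).le]
  -- Hilbert basis
  let hB : HilbertBasis ℕ ℝ F := HilbertBasis.mk heF heFtot.ge
  have hBc : ⇑hB = eF := HilbertBasis.coe_mk heF heFtot.ge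
  have PVh : ∀ v : F, HasSum (fun m => ⟪eF m, v⟫ ^ 2) (‖v‖ ^ 2) := by
    intro v
    have h := hB.hasSum_inner_mul_inner v v
    rw [real_inner_self_eq_norm_sq] at h
    have heq : (fun m => ⟪eF m, v⟫ ^ 2) = fun i => ⟪v, hB i⟫ * ⟪hB i, v⟫ := by
      funext i
      rw [hBc, real_inner_comm v (eF i)]
      ring
    rw [heq]
    exact h
  have PV : ∀ v : F, ‖v‖ ^ 2 = ∑' m, ⟪eF m, v⟫ ^ 2 := fun v => (PVh v).tsum_eq.symm
  have SV : ∀ v : F, Summable (fun m => ⟪eF m, v⟫ ^ 2) := fun v => (PVh v).summable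
  have hinner : ∀ m k : ℕ, ⟪eF m, eF k⟫ = if m = k then (1:ℝ) else 0 :=
    orthonormal_iff_ite.mp heF
  -- Bessel
  have hbsq_bdd : ∀ s : Finset ℕ, ∑ m ∈ s, (bb m) ^ 2 ≤ 1 := fun s =>
    (aux_bessel ω e he_meas he_on g hg_meas hg2 s).trans hgnorm
  have hbsq : Summable fun m => (bb m) ^ 2 :=
    summable_of_sum_range_le (fun m => sq_nonneg _) (fun n => hbsq_bdd (Finset.range n))
  have htsum_b2 : ∑' m, (bb m) ^ 2 ≤ 1 :=
    Real.tsum_le_of_sum_range_le (fun m => sq_nonneg _) (fun n => hbsq_bdd (Finset.range n))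
  have hccsq : Summable fun m => (cc m) ^ 2 := by
    refine Summable.of_nonneg_of_le (fun m => sq_nonneg _) (fun m => ?_) (hbsq.mul_left (σ 0))
    rw [hcc_sq m]
    have h1 : σ m ≤ σ 0 := hσanti (Nat.zero_le m)
    exact mul_le_mul_of_nonneg_right h1 (sq_nonneg _)
  -- μg coordinates
  have hcl2 : Memℓp cc 2 := by
    apply memℓp_gen
    have : (fun m => ‖cc m‖ ^ (2:ℝ≥0∞).toReal) = fun m => (cc m) ^ 2 := by
      funext m
      rw [ENNReal.toReal_ofNat, Real.norm_eq_abs]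
      rw [show ((2:ℝ)) = ((2:ℕ):ℝ) by norm_num, Real.rpow_natCast, sq_abs]
    rw [this]
    exact hccsq
  let y : lp (fun _ : ℕ => ℝ) 2 := ⟨cc, hcl2⟩
  have hy : HasSum (fun m => cc m • eF m) (hB.repr.symm y) := by
    have h := hB.hasSum_repr_symm y
    have heq : (fun i => y i • hB i) = fun m => cc m • eF m := by
      funext i
      rw [hBc]
    rwa [heq] at h
  have hμg' : μg = hB.repr.symm y := by
    have hμg2 : μg = ∑' m : ℕ, cc m • eF m := hμg
    rw [hμg2]
    exact hy.tsum_eq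
  have hcoord : ∀ m, ⟪eF m, μg⟫ = cc m := by
    intro m
    have h1 : hB.repr μg m = ⟪hB m, μg⟫ := hB.repr_apply_apply μg m
    rw [hμg', LinearIsometryEquiv.apply_symm_apply] at h1
    rw [← hBc, hμg']
    exact h1.symm
  -- f0 and its coordinates
  let f0 : F := ∑ n : Fin N, cc n.val • eF n.val
  have hcoordf0 : ∀ m : ℕ, ⟪eF m, f0⟫ = if m < N then cc m else 0 := by
    intro m
    have h1 : ⟪eF m, f0⟫ = ∑ n : Fin N, cc n.val * ⟪eF m, eF n.val⟫ := by
      rw [inner_sum]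
      exact Finset.sum_congr rfl fun n _ => real_inner_smul_right _ _ _
    rw [h1]
    by_cases hm : m < N
    · rw [if_pos hm, Finset.sum_eq_single (⟨m, hm⟩ : Fin N)]
      · rw [hinner, if_pos rfl, mul_one]
      · intro n _ hn
        rw [hinner, if_neg, mul_zero]
        intro hc
        exact hn (by ext; exact hc.symm)
      · intro h; exact absurd (Finset.mem_univ _) h
    · rw [if_neg hm]
      refine Finset.sum_eq_zero fun n _ => ?_
      rw [hinner, if_neg, mul_zero]
      intro hc
      rw [hc] at hm
      exact hm n.isLt
  -- tail splitting helper
  have tail_split : ∀ φ : ℕ → ℝ, Summable φ → (∀ m, m < N → φ m = 0) →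
      ∑' m, φ m = ∑' k, φ (N + k) := by
    intro φ hsum hz
    have h := Summable.sum_add_tsum_nat_add (f := φ) N hsum
    have h0 : ∑ i ∈ Finset.range N, φ i = 0 :=
      Finset.sum_eq_zero fun i hi => hz i (Finset.mem_range.mp hi)
    rw [h0, zero_add] at h
    rw [← h]
    exact tsum_congr fun k => by rw [Nat.add_comm]
  -- ‖μg - f0‖² ≤ σ N
  have hcoordd : ∀ m, ⟪eF m, μg - f0⟫ = if m < N then 0 else cc m := by
    intro m
    rw [inner_sub_right, hcoord, hcoordf0]
    by_cases hm : m < N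
    · rw [if_pos hm, if_pos hm, sub_self]
    · rw [if_neg hm, if_neg hm, sub_zero]
  have hshiftb : Summable (fun k => bb (N + k) ^ 2) := by
    have h := (summable_nat_add_iff (f := fun m => bb m ^ 2) N).2 hbsq
    exact h.congr fun k => by rw [Nat.add_comm]
  have htailb : ∑' k, bb (N + k) ^ 2 ≤ 1 := by
    have h := Summable.sum_add_tsum_nat_add (f := fun m => bb m ^ 2) N hbsq
    have h1 : ∑' (i : ℕ), bb (i + N) ^ 2 = ∑' k, bb (N + k) ^ 2 :=
      tsum_congr fun k => by rw [Nat.add_comm]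
    have h2 : (0:ℝ) ≤ ∑ i ∈ Finset.range N, bb i ^ 2 :=
      Finset.sum_nonneg fun i _ => sq_nonneg _
    nlinarith [htsum_b2, h]
  have hμgf0 : ‖μg - f0‖ ^ 2 ≤ σ N := by
    rw [PV (μg - f0)]
    have hφ : ∀ m, ⟪eF m, μg - f0⟫ ^ 2 = (if m < N then 0 else cc m ^ 2) := by
      intro m
      rw [hcoordd]
      by_cases hm : m < N
      · simp [hm]
      · simp [hm]
    have hs : Summable (fun m => ⟪eF m, μg - f0⟫ ^ 2) := SV _
    rw [tail_split _ hs (fun m hm => by rw [hφ m, if_pos hm])]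
    have hval : ∀ k : ℕ, ⟪eF (N + k), μg - f0⟫ ^ 2 = σ (N + k) * bb (N + k) ^ 2 := by
      intro k
      rw [hφ, if_neg (by omega), hcc_sq]
    have hsum1 : Summable (fun k => ⟪eF (N + k), μg - f0⟫ ^ 2) := by
      have h := (summable_nat_add_iff (f := fun m => ⟪eF m, μg - f0⟫ ^ 2) N).2 hs
      exact h.congr fun k => by rw [Nat.add_comm]
    calc ∑' k, ⟪eF (N + k), μg - f0⟫ ^ 2
        ≤ ∑' k, σ N * bb (N + k) ^ 2 := by
          refine Summable.tsum_le_tsum (fun k => ?_) hsum1 (hshiftb.mul_left _)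
          rw [hval k]
          exact mul_le_mul_of_nonneg_right (hσanti (by omega)) (sq_nonneg _)
      _ = σ N * ∑' k, bb (N + k) ^ 2 := tsum_mul_left
      _ ≤ σ N * 1 := mul_le_mul_of_nonneg_left htailb (hσpos N).le
      _ = σ N := mul_one _
  -- determinant abbreviations
  let D : (Fin N → ℕ) → (Fin N → X) → ℝ := fun ρ x =>
    (Matrix.of fun i j : Fin N => e (ρ i) (x j)).det
  let ρid : Fin N → ℕ := fun i => i.val
  let ρr : Fin N → ℕ → Fin N → ℕ := fun n m i => if i = n then m else i.val
  let hh : ℕ → (Fin N → X) → ℝ := fun m x => ∑ n : Fin N, bb n.val * D (ρr n m) x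
  let Hfun : (Fin N → X) → ℝ := fun x => ∑' k, σ (N + k) * (hh (N + k) x) ^ 2
  -- injectivity facts
  have hρid_inj : Function.Injective ρid := fun i j h => Fin.ext h
  have hρr_inj : ∀ (n : Fin N) (m : ℕ), N ≤ m → Function.Injective (ρr n m) := by
    intro n m hm i j hij
    by_cases hi : i = n <;> by_cases hj : j = n
    · rw [hi, hj]
    · exfalso; simp only [ρr, if_pos hi, if_neg hj] at hij
      have := j.isLt; omega
    · exfalso; simp only [ρr, if_neg hi, if_pos hj] at hij
      have := i.isLt; omega
    · simp only [ρr, if_neg hi, if_neg hj] at hij; exact Fin.ext hij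
  have hρr_range : ∀ (n n' : Fin N) (m : ℕ), N ≤ m → n ≠ n' →
      Set.range (ρr n m) ≠ Set.range (ρr n' m) := by
    intro n n' m hm hne heq
    have h1 : (n'.val : ℕ) ∈ Set.range (ρr n m) := by
      refine ⟨n', ?_⟩
      have hne' : n' ≠ n := fun h => hne h.symm
      simp only [ρr, if_neg hne']
    have h2 : (n'.val : ℕ) ∉ Set.range (ρr n' m) := by
      rintro ⟨i, hi⟩
      by_cases hii : i = n'
      · simp only [ρr, if_pos hii] at hi
        have := n'.isLt
        omega
      · simp only [ρr, if_neg hii] at hi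
        exact hii (Fin.ext hi)
    rw [heq] at h1
    exact h2 h1

  -- pointwise analysis
  have claimB : ∀ (x : Fin N → X) (m : ℕ) (n : Fin N),
      ∑ j, e m (x j) * (Matrix.of fun i j : Fin N => e i.val (x j)).adjugate j n
        = ((Matrix.of fun i j : Fin N => e i.val (x j)).updateRow n (fun j => e m (x j))).det := by
    intro x m n
    set Ex : Matrix (Fin N) (Fin N) ℝ := Matrix.of fun i j : Fin N => e i.val (x j) with hEx
    have h1 : ∀ j : Fin N, Ex.adjugate j n = Matrix.cramer Ex.transpose (Pi.single j 1) n := fun j => by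
      rw [Matrix.adjugate_def]
      rfl
    calc ∑ j, e m (x j) * Ex.adjugate j n
        = ∑ j, (Matrix.cramer Ex.transpose (Pi.single j (e m (x j)))) n := by
          refine Finset.sum_congr rfl fun j _ => ?_
          rw [h1 j]
          have h2 : (Pi.single j (e m (x j)) : Fin N → ℝ)
              = e m (x j) • (Pi.single j (1:ℝ) : Fin N → ℝ) := by
            funext k
            simp [Pi.single_apply, mul_ite]
          rw [h2, _root_.map_smul]
          rfl
      _ = (Matrix.cramer Ex.transpose (∑ j, Pi.single j (e m (x j)))) n := by
          rw [map_sum]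
          rw [Finset.sum_apply]
      _ = (Matrix.cramer Ex.transpose (fun j => e m (x j))) n := by
          rw [Finset.univ_sum_single (fun j => e m (x j))]
      _ = (Ex.updateRow n (fun j => e m (x j))).det :=
          Matrix.cramer_transpose_apply Ex (fun j => e m (x j)) n
  have claimA : ∀ (x : Fin N → X) (i n : Fin N),
      ∑ j, (Matrix.of fun i j : Fin N => e i.val (x j)) i j *
          (Matrix.of fun i j : Fin N => e i.val (x j)).adjugate j n
        = (Matrix.of fun i j : Fin N => e i.val (x j)).det * (if i = n then 1 else 0) := by
    intro x i n
    set Ex : Matrix (Fin N) (Fin N) ℝ := Matrix.of fun i j : Fin N => e i.val (x j) with hEx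
    have h := Matrix.mul_adjugate Ex
    have h2 : (Ex * Ex.adjugate) i n = (Ex.det • (1 : Matrix (Fin N) (Fin N) ℝ)) i n := by
      rw [h]
    rw [Matrix.mul_apply] at h2
    rw [h2, Matrix.smul_apply, Matrix.one_apply, smul_eq_mul]
  -- updateRow matrices as D
  have hupd : ∀ (x : Fin N → X) (m : ℕ) (n : Fin N),
      ((Matrix.of fun i j : Fin N => e i.val (x j)).updateRow n (fun j => e m (x j))).det
        = D (ρr n m) x := by
    intro x m n
    have : (Matrix.of fun i j : Fin N => e i.val (x j)).updateRow n (fun j => e m (x j))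
        = Matrix.of fun i j : Fin N => e (ρr n m i) (x j) := by
      ext i j
      rw [Matrix.updateRow_apply]
      by_cases hi : i = n
      · rw [if_pos hi]
        simp only [ρr, if_pos hi, Matrix.of_apply]
      · rw [if_neg hi]
        simp only [ρr, if_neg hi, Matrix.of_apply]
    rw [this]
  -- the main pointwise bound
  have key : ∀ x : Fin N → X,
      (Summable fun k => σ (N + k) * (hh (N + k) x) ^ 2) ∧ 0 ≤ Hfun x ∧
      ‖μg - (Submodule.orthogonalProjectionOnto (Submodule.span ℝ (Set.range fun j => Kf (x j))) μg : F)‖ ^ 2 *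
          (Matrix.of fun i j : Fin N => e i.val (x j)).det ^ 2
        ≤ 2 * σ N * (D ρid x) ^ 2 + 2 * Hfun x := by
    intro x
    set Ex : Matrix (Fin N) (Fin N) ℝ := Matrix.of fun i j : Fin N => e i.val (x j) with hEx
    set dx : ℝ := Ex.det with hdx
    have hdxD : dx = D ρid x := by
      rw [hdx]
    set α : Fin N → ℝ := fun j => ∑ n : Fin N, bb n.val * Ex.adjugate j n with hα
    set W : F := ∑ j : Fin N, α j • Kf (x j) with hW
    set v : F := dx • f0 - W with hv
    -- coordinates of W
    have coordW : ∀ m : ℕ, ⟪eF m, W⟫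
        = Real.sqrt (σ m) * ∑ n : Fin N, bb n.val * (∑ j, e m (x j) * Ex.adjugate j n) := by
      intro m
      rw [hW, inner_sum]
      calc ∑ j, ⟪eF m, α j • Kf (x j)⟫
          = ∑ j : Fin N, α j * (Real.sqrt (σ m) * e m (x j)) := by
            refine Finset.sum_congr rfl fun j _ => ?_
            rw [real_inner_smul_right, hKf]
        _ = Real.sqrt (σ m) * ∑ j : Fin N, α j * e m (x j) := by
            rw [Finset.mul_sum]
            exact Finset.sum_congr rfl fun j _ => by ring
        _ = Real.sqrt (σ m) * ∑ n : Fin N, bb n.val * (∑ j, e m (x j) * Ex.adjugate j n) := by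
            congr 1
            calc ∑ j, α j * e m (x j)
                = ∑ j, ∑ n : Fin N, bb n.val * Ex.adjugate j n * e m (x j) := by
                  refine Finset.sum_congr rfl fun j _ => ?_
                  simp only [hα]
                  rw [Finset.sum_mul]
              _ = ∑ n : Fin N, ∑ j, bb n.val * Ex.adjugate j n * e m (x j) := Finset.sum_comm
              _ = ∑ n : Fin N, bb n.val * (∑ j, e m (x j) * Ex.adjugate j n) := by
                  refine Finset.sum_congr rfl fun n _ => ?_
                  rw [Finset.mul_sum]
                  exact Finset.sum_congr rfl fun j _ => by ring
    -- coordinates of v below N vanish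
    have coordvlow : ∀ m : ℕ, m < N → ⟪eF m, v⟫ = 0 := by
      intro m hm
      rw [hv, inner_sub_right, real_inner_smul_right, hcoordf0, if_pos hm, coordW]
      have him : ∀ j, e m (x j) = Ex (⟨m, hm⟩ : Fin N) j := fun j => rfl
      have h2 : ∑ n : Fin N, bb n.val * (∑ j, e m (x j) * Ex.adjugate j n) = dx * bb m := by
        calc ∑ n : Fin N, bb n.val * (∑ j, e m (x j) * Ex.adjugate j n)
            = ∑ n : Fin N, bb n.val * (dx * (if (⟨m, hm⟩ : Fin N) = n then 1 else 0)) := by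
              refine Finset.sum_congr rfl fun n _ => ?_
              congr 1
              calc ∑ j, e m (x j) * Ex.adjugate j n
                  = ∑ j, Ex (⟨m, hm⟩ : Fin N) j * Ex.adjugate j n := by
                    exact Finset.sum_congr rfl fun j _ => by rw [him j]
                _ = dx * (if (⟨m, hm⟩ : Fin N) = n then 1 else 0) := claimA x _ n
          _ = dx * bb m := by
              rw [Finset.sum_eq_single (⟨m, hm⟩ : Fin N)]
              · rw [if_pos rfl, mul_one]; ring
              · intro n _ hn
                rw [if_neg (fun h => hn h.symm), mul_zero, mul_zero]
              · intro h; exact absurd (Finset.mem_univ _) h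
      rw [h2]
      show dx * (Real.sqrt (σ m) * bb m) - Real.sqrt (σ m) * (dx * bb m) = 0
      ring
    -- coordinates of v at or above N
    have coordvhigh : ∀ m : ℕ, N ≤ m → ⟪eF m, v⟫ = -(Real.sqrt (σ m) * hh m x) := by
      intro m hm
      rw [hv, inner_sub_right, real_inner_smul_right, hcoordf0, if_neg (by omega), mul_zero,
        coordW, zero_sub]
      congr 1
      congr 1
      refine Finset.sum_congr rfl fun n _ => ?_
      congr 1
      rw [claimB x m n, hupd x m n]
    -- norm of v equals Hfun x
    have hsummv : Summable fun m => ⟪eF m, v⟫ ^ 2 := SV v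
    have hsummshift : Summable fun k => σ (N + k) * (hh (N + k) x) ^ 2 := by
      have h := (summable_nat_add_iff (f := fun m => ⟪eF m, v⟫ ^ 2) N).2 hsummv
      have h2 : (fun k => ⟪eF (k + N), v⟫ ^ 2) = fun k => σ (N + k) * (hh (N + k) x) ^ 2 := by
        funext k
        rw [Nat.add_comm k N, coordvhigh (N + k) (by omega)]
        rw [neg_pow, mul_pow]
        rw [Real.sq_sqrt (hσpos (N + k)).le]
        ring
      rwa [h2] at h
    have normv : ‖v‖ ^ 2 = Hfun x := by
      rw [PV v]
      rw [tail_split _ hsummv (fun m hm => by rw [coordvlow m hm]; ring)]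
      refine tsum_congr fun k => ?_
      rw [coordvhigh (N + k) (by omega), neg_pow, mul_pow, Real.sq_sqrt (hσpos (N + k)).le]
      ring
    have hHnn : 0 ≤ Hfun x := by
      rw [← normv]; exact sq_nonneg _
    refine ⟨hsummshift, hHnn, ?_⟩
    -- case analysis on dx
    rcases eq_or_ne dx 0 with hdx0 | hdx0
    · rw [hdx0]
      have h00 : (0:ℝ) ≤ 2 * σ N * D ρid x ^ 2 :=
        mul_nonneg (mul_nonneg (by norm_num) (hσpos N).le) (sq_nonneg _)
      nlinarith [hHnn]
    · -- nonzero determinant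
      set T : Submodule ℝ F := Submodule.span ℝ (Set.range fun j => Kf (x j)) with hT
      have hWT : W ∈ T := by
        rw [hW]
        refine Submodule.sum_mem _ fun j _ => Submodule.smul_mem _ _ ?_
        exact Submodule.subset_span ⟨j, rfl⟩
      set w : F := dx⁻¹ • W with hw
      have hwT : w ∈ T := Submodule.smul_mem _ _ hWT
      have hmin : ‖μg - (Submodule.orthogonalProjectionOnto T μg : F)‖ ≤ ‖μg - w‖ := by
        rw [← Submodule.starProjection_apply, Submodule.starProjection_minimal]
        have hbdd : BddBelow (Set.range fun z : T => ‖μg - (z : F)‖) := by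
          refine ⟨0, ?_⟩
          rintro r ⟨z, rfl⟩
          exact norm_nonneg _
        exact ciInf_le hbdd (⟨w, hwT⟩ : T)
      have htri : ‖μg - w‖ ≤ ‖μg - f0‖ + ‖f0 - w‖ := by
        have := norm_sub_le_norm_sub_add_norm_sub μg f0 w
        exact this
      have hsq : ‖μg - (Submodule.orthogonalProjectionOnto T μg : F)‖ ^ 2
          ≤ 2 * ‖μg - f0‖ ^ 2 + 2 * ‖f0 - w‖ ^ 2 := by
        have h1 : ‖μg - (Submodule.orthogonalProjectionOnto T μg : F)‖ ≤ ‖μg - f0‖ + ‖f0 - w‖ :=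
          hmin.trans htri
        have h2 : (0:ℝ) ≤ ‖μg - (Submodule.orthogonalProjectionOnto T μg : F)‖ := norm_nonneg _
        nlinarith [norm_nonneg (μg - f0), norm_nonneg (f0 - w), sq_nonneg (‖μg - f0‖ - ‖f0 - w‖)]
      have hdval : dx • (f0 - w) = v := by
        rw [hw, hv, smul_sub, smul_smul, mul_inv_cancel₀ hdx0, one_smul]
      have hnormdw : dx ^ 2 * ‖f0 - w‖ ^ 2 = Hfun x := by
        rw [← normv, ← hdval, norm_smul]
        rw [mul_pow, Real.norm_eq_abs, sq_abs]
      calc ‖μg - (Submodule.orthogonalProjectionOnto T μg : F)‖ ^ 2 * dx ^ 2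
          ≤ (2 * ‖μg - f0‖ ^ 2 + 2 * ‖f0 - w‖ ^ 2) * dx ^ 2 := by
            exact mul_le_mul_of_nonneg_right hsq (sq_nonneg _)
        _ = 2 * ‖μg - f0‖ ^ 2 * dx ^ 2 + 2 * (dx ^ 2 * ‖f0 - w‖ ^ 2) := by ring
        _ ≤ 2 * σ N * dx ^ 2 + 2 * (dx ^ 2 * ‖f0 - w‖ ^ 2) := by
            have := mul_le_mul_of_nonneg_right hμgf0 (sq_nonneg dx)
            nlinarith
        _ = 2 * σ N * (D ρid x) ^ 2 + 2 * Hfun x := by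
            rw [hnormdw, hdxD]
  -- measurability of determinants and h functions
  have Dmeas : ∀ ρ : Fin N → ℕ, Measurable (D ρ) := by
    intro ρ
    have heq : D ρ = fun x => ∑ π : Equiv.Perm (Fin N),
        ((Equiv.Perm.sign π : ℤ) : ℝ) * ∏ j, e (ρ (π j)) (x j) :=
      funext fun x => aux_det_eq e ρ x
    rw [heq]
    refine Finset.measurable_sum _ fun π _ => Measurable.const_mul ?_ _
    refine Finset.measurable_prod _ fun j _ => ?_
    exact (he_meas _).comp (measurable_pi_apply j)
  have hhmeas : ∀ m, Measurable (hh m) := by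
    intro m
    refine Finset.measurable_sum _ fun n _ => ?_
    exact (Dmeas (ρr n m)).const_mul _
  -- integrability and value of ∫ (hh m)²
  have hsq_expand : ∀ m : ℕ, (fun x : Fin N → X => (hh m x) ^ 2)
      = fun x => ∑ n : Fin N, ∑ n' : Fin N,
          (bb n.val * bb n'.val) * (D (ρr n m) x * D (ρr n' m) x) := by
    intro m
    funext x
    show (∑ n : Fin N, bb n.val * D (ρr n m) x) ^ 2 = _
    rw [pow_two, Finset.sum_mul_sum]
    exact Finset.sum_congr rfl fun n _ => Finset.sum_congr rfl fun n' _ => by ring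
  have Ih : ∀ m : ℕ, Integrable (fun x => (hh m x) ^ 2) μπ := by
    intro m
    rw [hsq_expand m]
    exact integrable_finset_sum _ fun n _ => integrable_finset_sum _ fun n' _ =>
      ((aux_DD_int ω e he_meas he_on (ρr n m) (ρr n' m)).const_mul _)
  set B2 : ℝ := ∑ n : Fin N, (bb n.val) ^ 2 with hB2
  have Vh : ∀ m : ℕ, N ≤ m → ∫ x, (hh m x) ^ 2 ∂μπ = (N.factorial : ℝ) * B2 := by
    intro m hm
    rw [hsq_expand m]
    rw [integral_finset_sum _ (fun n _ => integrable_finset_sum _ fun n' _ =>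
      ((aux_DD_int ω e he_meas he_on (ρr n m) (ρr n' m)).const_mul _))]
    have hterm : ∀ n : Fin N,
        ∫ x, ∑ n' : Fin N, (bb n.val * bb n'.val) * (D (ρr n m) x * D (ρr n' m) x) ∂μπ
          = (bb n.val) ^ 2 * (N.factorial : ℝ) := by
      intro n
      rw [integral_finset_sum _ (fun n' _ =>
        ((aux_DD_int ω e he_meas he_on (ρr n m) (ρr n' m)).const_mul _))]
      rw [Finset.sum_eq_single n]
      · rw [MeasureTheory.integral_const_mul,
          aux_DD_self ω e he_meas he_on (ρr n m) (hρr_inj n m hm)]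
        ring
      · intro n' _ hn'
        rw [MeasureTheory.integral_const_mul,
          aux_DD_zero ω e he_meas he_on (ρr n m) (ρr n' m) (hρr_range n n' m hm (Ne.symm hn'))]
        rw [mul_zero]
      · intro hcon; exact absurd (Finset.mem_univ n) hcon
    rw [Finset.sum_congr rfl (fun n _ => hterm n)]
    rw [← Finset.sum_mul, hB2]
    ring
  have rNnn : 0 ≤ rN := by
    rw [hrN]; exact tsum_nonneg fun m => (hσpos _).le
  have B2nn : 0 ≤ B2 := Finset.sum_nonneg fun n _ => sq_nonneg _
  have hshiftσ : Summable fun k => σ (N + k) := by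
    have h := (summable_nat_add_iff (f := σ) N).2 hσsum
    exact h.congr fun k => by rw [Nat.add_comm]
  -- measurability of Hfun
  have Hmeas : Measurable Hfun := by
    refine measurable_of_tendsto_metrizable
      (f := fun K x => ∑ k ∈ Finset.range K, σ (N + k) * (hh (N + k) x) ^ 2)
      (fun K => Finset.measurable_sum _ fun k _ =>
        ((hhmeas (N + k)).pow_const 2).const_mul _) ?_
    rw [tendsto_pi_nhds]
    intro x
    exact (key x).1.hasSum.tendsto_sum_nat
  -- integral of Hfun
  have hTk_int : ∀ k : ℕ, Integrable (fun x => σ (N + k) * (hh (N + k) x) ^ 2) μπ :=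
    fun k => (Ih (N + k)).const_mul _
  have hTk_nn : ∀ k : ℕ, 0 ≤ᵐ[μπ] fun x => σ (N + k) * (hh (N + k) x) ^ 2 := fun k =>
    Filter.Eventually.of_forall fun x => mul_nonneg (hσpos _).le (sq_nonneg _)
  have hlint : ∫⁻ x, ENNReal.ofReal (Hfun x) ∂μπ
      = ENNReal.ofReal ((N.factorial : ℝ) * B2 * rN) := by
    have h1 : ∀ x, ENNReal.ofReal (Hfun x)
        = ∑' k, ENNReal.ofReal (σ (N + k) * (hh (N + k) x) ^ 2) := fun x =>
      ENNReal.ofReal_tsum_of_nonneg (fun k => mul_nonneg (hσpos _).le (sq_nonneg _)) (key x).1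
    calc ∫⁻ x, ENNReal.ofReal (Hfun x) ∂μπ
        = ∫⁻ x, ∑' k, ENNReal.ofReal (σ (N + k) * (hh (N + k) x) ^ 2) ∂μπ :=
          lintegral_congr fun x => h1 x
      _ = ∑' k, ∫⁻ x, ENNReal.ofReal (σ (N + k) * (hh (N + k) x) ^ 2) ∂μπ :=
          lintegral_tsum fun k => (ENNReal.measurable_ofReal.comp
            (((hhmeas (N + k)).pow_const 2).const_mul _)).aemeasurable
      _ = ∑' k, ENNReal.ofReal (σ (N + k) * ((N.factorial : ℝ) * B2)) := by
          refine tsum_congr fun k => ?_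
          rw [← ofReal_integral_eq_lintegral_ofReal (hTk_int k) (hTk_nn k)]
          congr 1
          rw [MeasureTheory.integral_const_mul, Vh (N + k) (by omega)]
      _ = ENNReal.ofReal (∑' k, σ (N + k) * ((N.factorial : ℝ) * B2)) :=
          (ENNReal.ofReal_tsum_of_nonneg
            (fun k => mul_nonneg (hσpos _).le
              (mul_nonneg (Nat.cast_nonneg _) B2nn))
            (hshiftσ.mul_right _)).symm
      _ = ENNReal.ofReal ((N.factorial : ℝ) * B2 * rN) := by
          rw [tsum_mul_right]
          congr 1
          rw [← hrN]
          ring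
  have HfunInt : Integrable Hfun μπ := by
    refine ⟨Hmeas.aestronglyMeasurable, ?_⟩
    rw [hasFiniteIntegral_iff_ofReal (Filter.Eventually.of_forall fun x => (key x).2.1)]
    rw [hlint]
    exact ENNReal.ofReal_lt_top
  have Hval : ∫ x, Hfun x ∂μπ = (N.factorial : ℝ) * B2 * rN := by
    rw [integral_eq_lintegral_of_nonneg_ae (Filter.Eventually.of_forall fun x => (key x).2.1)
      Hmeas.aestronglyMeasurable]
    rw [hlint, ENNReal.toReal_ofReal]
    exact mul_nonneg (mul_nonneg (Nat.cast_nonneg _) B2nn) rNnn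
  -- integral of (D ρid)²
  have hd2_int : Integrable (fun x => (D ρid x) ^ 2) μπ := by
    have heq : (fun x : Fin N → X => (D ρid x) ^ 2) = fun x => D ρid x * D ρid x :=
      funext fun x => pow_two _
    rw [heq]
    exact aux_DD_int ω e he_meas he_on ρid ρid
  have hd2_val : ∫ x, (D ρid x) ^ 2 ∂μπ = (N.factorial : ℝ) := by
    have heq : (fun x : Fin N → X => (D ρid x) ^ 2) = fun x => D ρid x * D ρid x :=
      funext fun x => pow_two _
    rw [heq]
    exact aux_DD_self ω e he_meas he_on ρid hρid_inj
  -- assembly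
  have Gint : Integrable (fun x => 2 * σ N * (D ρid x) ^ 2 + 2 * Hfun x) μπ :=
    (hd2_int.const_mul _).add (HfunInt.const_mul 2)
  have hmono : (∫ x : Fin N → X,
        ‖μg - (Submodule.orthogonalProjectionOnto (Submodule.span ℝ (Set.range fun j => Kf (x j))) μg : F)‖ ^ 2 *
          (Matrix.of fun i j : Fin N => e i.val (x j)).det ^ 2 ∂μπ)
      ≤ ∫ x, 2 * σ N * (D ρid x) ^ 2 + 2 * Hfun x ∂μπ := by
    refine integral_mono_of_nonneg (Filter.Eventually.of_forall fun x => ?_) Gint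
      (Filter.Eventually.of_forall fun x => (key x).2.2)
    exact mul_nonneg (pow_nonneg (norm_nonneg _) 2) (sq_nonneg _)
  have hGval : ∫ x, 2 * σ N * (D ρid x) ^ 2 + 2 * Hfun x ∂μπ
      = 2 * σ N * (N.factorial : ℝ) + 2 * ((N.factorial : ℝ) * B2 * rN) := by
    rw [integral_add (hd2_int.const_mul _) (HfunInt.const_mul 2)]
    rw [MeasureTheory.integral_const_mul, MeasureTheory.integral_const_mul, hd2_val, Hval]
  have hfac_pos : (0:ℝ) < (N.factorial : ℝ) := by
    exact_mod_cast Nat.factorial_pos N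
  have hstep : (1 / (N.factorial : ℝ)) *
      (∫ x : Fin N → X,
        ‖μg - (Submodule.orthogonalProjectionOnto (Submodule.span ℝ (Set.range fun j => Kf (x j))) μg : F)‖ ^ 2 *
          (Matrix.of fun i j : Fin N => e i.val (x j)).det ^ 2 ∂μπ)
      ≤ 2 * σ N + 2 * B2 * rN := by
    have h1 := hmono.trans_eq hGval
    have h2 := mul_le_mul_of_nonneg_left h1
      (le_of_lt (div_pos one_pos hfac_pos))
    calc (1 / (N.factorial : ℝ)) * _ ≤ (1 / (N.factorial : ℝ)) *
          (2 * σ N * (N.factorial : ℝ) + 2 * ((N.factorial : ℝ) * B2 * rN)) := h2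
      _ = 2 * σ N + 2 * B2 * rN := by
          field_simp
  refine hstep.trans ?_
  -- final arithmetic
  have hgnorm1G : gnorm1 = ∑ n : Fin N, |bb n.val| := hgnorm1
  have hB2g : B2 ≤ gnorm1 ^ 2 := by
    rw [hgnorm1G, pow_two, Finset.sum_mul_sum, hB2]
    refine Finset.sum_le_sum fun n _ => ?_
    have h1 : (bb n.val) ^ 2 = |bb n.val| * |bb n.val| := by
      rw [← abs_mul, ← pow_two, abs_of_nonneg (sq_nonneg _)]
    rw [h1]
    refine Finset.single_le_sum (f := fun n' => |bb n.val| * |bb n'.val|)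
      (fun n' _ => mul_nonneg (abs_nonneg _) (abs_nonneg _)) (Finset.mem_univ n)
  have hβnn : 0 ≤ ∑ ℓ ∈ Finset.Icc 2 N,
      (σ 0 / (ℓ.factorial : ℝ) ^ 2) * ((N : ℝ) * rN / σ 0) ^ ℓ := by
    refine Finset.sum_nonneg fun ℓ _ => ?_
    refine mul_nonneg (div_nonneg (hσpos 0).le (sq_nonneg _)) (pow_nonneg ?_ ℓ)
    exact div_nonneg (mul_nonneg (Nat.cast_nonneg _) rNnn) (hσpos 0).le
  have hN1 : (1:ℝ) ≤ (N : ℝ) := by exact_mod_cast hN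
  have h1 : B2 * rN ≤ gnorm1 ^ 2 * rN := mul_le_mul_of_nonneg_right hB2g rNnn
  nlinarith [h1, mul_nonneg (mul_nonneg (sq_nonneg gnorm1) rNnn) (sub_nonneg.mpr hN1),
    mul_nonneg (sq_nonneg gnorm1) hβnn]
end

section
/- Let x = (x_1,…,x_N) ∈ X^N be such that the matrix E(x) = (e_i(x_j))_{i,j∈[N]} is invertible. Then the kernel matrix K(x) = (k(x_i,x_j))_{i,j∈[N]} satisfies det K(x) ≥ (∏_{i=1}^N σ_i) · det(E(x))² > 0; in particular K(x) is invertible. -/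
open scoped BigOperators

open Matrix

open scoped BigOperators

lemma one_le_det_one_add {n : Type*} [Fintype n] [DecidableEq n]
    {C : Matrix n n ℝ} (hC : C.PosSemidef) : (1 : ℝ) ≤ (1 + C).det := by
  have hH : C.IsHermitian := hC.isHermitian
  have hU : (hH.eigenvectorUnitary : Matrix n n ℝ) * star (hH.eigenvectorUnitary : Matrix n n ℝ) = 1 :=
    (Matrix.mem_unitaryGroup_iff).mp hH.eigenvectorUnitary.2
  have hspec := hH.spectral_theorem
  have key : 1 + C = (hH.eigenvectorUnitary : Matrix n n ℝ) *
      (1 + diagonal (RCLike.ofReal ∘ hH.eigenvalues)) *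
      star (hH.eigenvectorUnitary : Matrix n n ℝ) := by
    rw [mul_add, add_mul, mul_one, hU]
    exact congrArg (1 + ·) hspec
  have hdetU : (hH.eigenvectorUnitary : Matrix n n ℝ).det *
      (star (hH.eigenvectorUnitary : Matrix n n ℝ)).det = 1 := by
    rw [← det_mul, hU, det_one]
  rw [key, det_mul, det_mul]
  have : (1 : Matrix n n ℝ) + diagonal (RCLike.ofReal ∘ hH.eigenvalues)
      = diagonal (fun i => 1 + hH.eigenvalues i) := by
    rw [← diagonal_one, diagonal_add]
    congr 1
  rw [mul_comm, ← mul_assoc, mul_comm (det _), hdetU, one_mul, this, det_diagonal]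
  calc (1:ℝ) = ∏ _i : n, (1:ℝ) := by simp
    _ ≤ ∏ i, (1 + hH.eigenvalues i) :=
      Finset.prod_le_prod (fun _ _ => zero_le_one)
        (fun i _ => le_add_of_nonneg_right (hC.eigenvalues_nonneg i))

lemma det_le_det_add {n : Type*} [Fintype n] [DecidableEq n]
    {P Q : Matrix n n ℝ} (hP : P.PosSemidef) (hPd : P.det ≠ 0)
    (hQ : Q.PosSemidef) : P.det ≤ (P + Q).det := by
  obtain ⟨B, rfl⟩ : ∃ B : Matrix n n ℝ, P = Bᴴ * B := by
    open scoped MatrixOrder in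
    obtain ⟨X, hX, -, rfl⟩ := CFC.exists_sqrt_of_isSelfAdjoint_of_quasispectrumRestricts
      hP.isHermitian (QuasispectrumRestricts.nnreal_of_nonneg hP.nonneg)
    exact ⟨X, by rw [← star_eq_conjTranspose, hX.star_eq]⟩
  have hBdet : IsUnit B.det := by
    rw [det_mul] at hPd
    exact (IsUnit.mul_iff.mp (Ne.isUnit hPd)).2
  have hC : ((B⁻¹)ᴴ * Q * B⁻¹).PosSemidef := hQ.conjTranspose_mul_mul_same B⁻¹
  have key : Bᴴ * B + Q = Bᴴ * (1 + (B⁻¹)ᴴ * Q * B⁻¹) * B := by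
    rw [mul_add, mul_one, add_mul]
    congr 1
    calc Q = (B⁻¹ * B)ᴴ * Q * (B⁻¹ * B) := by
          rw [nonsing_inv_mul B hBdet]; simp
      _ = Bᴴ * ((B⁻¹)ᴴ * Q * B⁻¹) * B := by
          rw [conjTranspose_mul]; noncomm_ring
  rw [key, det_mul, det_mul]
  have h1 := one_le_det_one_add hC
  have hd : Bᴴ.det = B.det := by rw [det_conjTranspose]; exact star_trivial _
  have hpos : 0 < (Bᴴ * B).det := by
    rcases lt_or_gt_of_ne hPd with h | h
    · exfalso
      rw [det_mul, hd] at h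
      nlinarith
    · exact h
  rw [det_mul, hd] at hpos ⊢
  nlinarith

/-- If the matrix `E(x) = (e_i(x_j))` is invertible, then the kernel matrix
`K(x) = (k(x_i,x_j))`, where `k(x,y) = ∑ σ_m e_m(x) e_m(y)`, satisfies
`det K(x) ≥ (∏ σ_i) · det(E(x))² > 0`; in particular `K(x)` is invertible. -/
theorem stmt1 {X : Type*} (N : ℕ)
    (e : ℕ → X → ℝ) (σ : ℕ → ℝ)
    (hσpos : ∀ m, 0 < σ m) (hσanti : Antitone σ) (hσsum : Summable σ)
    (hdiag : ∀ x : X, Summable fun m => σ m * (e m x) ^ 2)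
    (habs : ∀ x y : X, Summable fun m => |σ m * e m x * e m y|)
    (k : X → X → ℝ) (hk : ∀ x y, k x y = ∑' m, σ m * e m x * e m y)
    (x : Fin N → X)
    (E : Matrix (Fin N) (Fin N) ℝ) (hE : E = Matrix.of fun i j : Fin N => e i.val (x j))
    (K : Matrix (Fin N) (Fin N) ℝ) (hK : K = Matrix.of fun i j : Fin N => k (x i) (x j))
    (hEinv : IsUnit E) :
    (∏ i : Fin N, σ i.val) * E.det ^ 2 ≤ K.det ∧
    0 < (∏ i : Fin N, σ i.val) * E.det ^ 2 ∧
    IsUnit K := by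
  have hsum : ∀ i j : Fin N, Summable fun m => σ m * e m (x i) * e m (x j) :=
    fun i j => (habs (x i) (x j)).of_abs
  have hsumtail : ∀ i j : Fin N, Summable fun m => σ (m + N) * e (m + N) (x i) * e (m + N) (x j) :=
    fun i j => (summable_nat_add_iff N).mpr (hsum i j)
  set Sm : Matrix (Fin N) (Fin N) ℝ := Matrix.diagonal (fun i : Fin N => σ i.val) with hSm
  set A : Matrix (Fin N) (Fin N) ℝ := Eᴴ * Sm * E with hA
  set R : Matrix (Fin N) (Fin N) ℝ :=
    Matrix.of (fun i j : Fin N => ∑' m, σ (m + N) * e (m + N) (x i) * e (m + N) (x j)) with hR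
  have hAentry : ∀ i j : Fin N, A i j = ∑ m ∈ Finset.range N, σ m * e m (x i) * e m (x j) := by
    intro i j
    rw [hA, Matrix.mul_apply]
    simp only [Matrix.mul_diagonal, Matrix.conjTranspose_apply, star_trivial, hE,
      Matrix.of_apply, hSm]
    rw [← Fin.sum_univ_eq_sum_range (fun m => σ m * e m (x i) * e m (x j)) N]
    exact Finset.sum_congr rfl fun l _ => by ring
  have hsplit : K = A + R := by
    rw [hK]
    ext i j
    show k (x i) (x j) = A i j + R i j
    rw [hk, hAentry, ← Summable.sum_add_tsum_nat_add N (hsum i j)]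
    rfl
  have hRpsd : R.PosSemidef := by
    refine Matrix.PosSemidef.of_dotProduct_mulVec_nonneg ?_ ?_
    · ext i j
      show star (R j i) = R i j
      simp only [hR, Matrix.of_apply, star_trivial]
      exact tsum_congr fun m => by ring
    · intro v
      have hterm : ∀ (i j : Fin N), Summable fun m =>
          v i * (σ (m + N) * e (m + N) (x i) * e (m + N) (x j)) * v j :=
        fun i j => ((hsumtail i j).mul_left (v i)).mul_right (v j)
      have key : dotProduct (star v) (R *ᵥ v)
          = ∑' m, σ (m + N) * (∑ i, v i * e (m + N) (x i)) ^ 2 := by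
        have h1 : dotProduct (star v) (R *ᵥ v)
            = ∑ i, ∑ j, v i * ((∑' m, σ (m + N) * e (m + N) (x i) * e (m + N) (x j)) * v j) := by
          simp [dotProduct, Matrix.mulVec, hR, Finset.mul_sum]
        have h2 : ∀ i j : Fin N,
            v i * ((∑' m, σ (m + N) * e (m + N) (x i) * e (m + N) (x j)) * v j)
            = ∑' m, v i * (σ (m + N) * e (m + N) (x i) * e (m + N) (x j)) * v j := by
          intro i j
          rw [tsum_mul_right, tsum_mul_left]; ring
        have expand : ∀ m : ℕ, σ (m + N) * (∑ i, v i * e (m + N) (x i)) ^ 2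
            = ∑ i, ∑ j, v i * (σ (m + N) * e (m + N) (x i) * e (m + N) (x j)) * v j := by
          intro m
          rw [sq, Finset.sum_mul_sum, Finset.mul_sum]
          refine Finset.sum_congr rfl fun i _ => ?_
          rw [Finset.mul_sum]
          exact Finset.sum_congr rfl fun j _ => by ring
        calc dotProduct (star v) (R *ᵥ v)
            = ∑ i, ∑ j, ∑' m, v i * (σ (m + N) * e (m + N) (x i) * e (m + N) (x j)) * v j := by
              rw [h1]
              exact Finset.sum_congr rfl fun i _ => Finset.sum_congr rfl fun j _ => h2 i j
          _ = ∑ i, ∑' m, ∑ j, v i * (σ (m + N) * e (m + N) (x i) * e (m + N) (x j)) * v j :=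
              Finset.sum_congr rfl fun i _ => (Summable.tsum_finsetSum fun j _ => hterm i j).symm
          _ = ∑' m, ∑ i, ∑ j, v i * (σ (m + N) * e (m + N) (x i) * e (m + N) (x j)) * v j :=
              (Summable.tsum_finsetSum fun i _ => summable_sum fun j _ => hterm i j).symm
          _ = ∑' m, σ (m + N) * (∑ i, v i * e (m + N) (x i)) ^ 2 :=
              tsum_congr fun m => (expand m).symm
      rw [key]
      exact tsum_nonneg fun m => mul_nonneg (hσpos _).le (sq_nonneg _)
  have hApsd : A.PosSemidef := by
    rw [hA]
    exact (Matrix.PosSemidef.diagonal fun i => (hσpos _).le).conjTranspose_mul_mul_same E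
  have hdetA : A.det = (∏ i : Fin N, σ i.val) * E.det ^ 2 := by
    rw [hA, det_mul, det_mul, det_conjTranspose, star_trivial, hSm, det_diagonal]
    ring
  have hEdet : E.det ≠ 0 := ((Matrix.isUnit_iff_isUnit_det E).mp hEinv).ne_zero
  have hpos : 0 < (∏ i : Fin N, σ i.val) * E.det ^ 2 :=
    mul_pos (Finset.prod_pos fun i _ => hσpos _)
      ((sq_nonneg E.det).lt_of_ne' (pow_ne_zero 2 hEdet))
  have hle : (∏ i : Fin N, σ i.val) * E.det ^ 2 ≤ K.det := by
    rw [hsplit, ← hdetA]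
    exact det_le_det_add hApsd (by rw [hdetA]; exact hpos.ne') hRpsd
  refine ⟨hle, hpos, ?_⟩
  exact (Matrix.isUnit_iff_isUnit_det K).mpr ((lt_of_lt_of_le hpos hle).ne'.isUnit)
end

section
/- Let x = (x_1,…,x_N) ∈ X^N with det E(x) ≠ 0 and let g ∈ L²(dω) with ‖g‖_{L²(dω)} ≤ 1. Set ‖g‖_{dω,1} := ∑_{n=1}^N |⟨e_n, g⟩_{L²(dω)}|. Then ‖Π_{T(x)^⊥} μ_g‖_F² ≤ 2 ( σ_{N+1} + ‖g‖_{dω,1}² · max_{n∈[N]} σ_n ‖Π_{T(x)^⊥} e_n^F‖_F² ). -/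
open scoped RealInnerProductSpace BigOperators
open MeasureTheory

set_option maxHeartbeats 1000000 in
/-- For nodes with `det E(x) ≠ 0` and `‖g‖_{L²} ≤ 1`,
`‖Π_{T(x)^⊥} μ_g‖_F² ≤ 2 (σ_{N+1} + ‖g‖_{dω,1}² · max_{n∈[N]} σ_n ‖Π_{T(x)^⊥} e_n^F‖_F²)`.
(Indices are 0-based: `σ 0` is the paper's `σ_1`, `σ N` is `σ_{N+1}`.) -/
theorem stmt3 {X : Type*} [MeasurableSpace X] (ω : Measure X) [IsProbabilityMeasure ω]
    (e : ℕ → X → ℝ) (he_meas : ∀ m, Measurable (e m))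
    (he_on : ∀ m n : ℕ, ∫ z, e m z * e n z ∂ω = if m = n then 1 else 0)
    (σ : ℕ → ℝ) (hσpos : ∀ m, 0 < σ m) (hσanti : Antitone σ) (hσsum : Summable σ)
    (hdiag : ∀ z : X, Summable fun m => σ m * (e m z) ^ 2)
    {F : Type*} [NormedAddCommGroup F] [InnerProductSpace ℝ F] [CompleteSpace F]
    (eF : ℕ → F) (heF : Orthonormal ℝ eF)
    (heFtot : (Submodule.span ℝ (Set.range eF)).topologicalClosure = ⊤)
    (Kf : X → F) (hKf : ∀ (z : X) (m : ℕ), ⟪eF m, Kf z⟫ = Real.sqrt (σ m) * e m z)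
    (N : ℕ) (hN : 0 < N) (x : Fin N → X)
    (hEdet : (Matrix.of fun i j : Fin N => e i.val (x j)).det ≠ 0)
    (g : X → ℝ) (hg_meas : Measurable g)
    (hg2 : Integrable (fun z => (g z) ^ 2) ω)
    (hgnorm : ∫ z, (g z) ^ 2 ∂ω ≤ 1)
    (μg : F) (hμg : μg = ∑' m : ℕ, (Real.sqrt (σ m) * ∫ z, e m z * g z ∂ω) • eF m) :
    ‖(Submodule.orthogonalProjection (Submodule.span ℝ (Set.range fun j => Kf (x j)))ᗮ μg : F)‖ ^ 2
      ≤ 2 * (σ N + (∑ n : Fin N, |∫ z, e n.val z * g z ∂ω|) ^ 2 *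
          Finset.univ.sup' (Finset.univ_nonempty_iff.mpr ⟨⟨0, hN⟩⟩)
            (fun n : Fin N =>
              σ n.val *
                ‖(Submodule.orthogonalProjection (Submodule.span ℝ (Set.range fun j => Kf (x j)))ᗮ
                    (eF n.val) : F)‖ ^ 2)) := by
  classical
  set K := (Submodule.span ℝ (Set.range fun j => Kf (x j)))ᗮ with hK
  set P := Submodule.orthogonalProjection K with hP
  set c : ℕ → ℝ := fun m => ∫ z, e m z * g z ∂ω with hc
  set a : ℕ → ℝ := fun m => Real.sqrt (σ m) * c m with ha
  have ha2 : ∀ m, a m ^ 2 = σ m * c m ^ 2 := by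
    intro m
    rw [ha]
    simp only [mul_pow, Real.sq_sqrt (hσpos m).le]
  -- L² space setup
  have hmemE : ∀ m, MemLp (e m) 2 ω := by
    intro m
    rw [memLp_two_iff_integrable_sq (he_meas m).aestronglyMeasurable]
    have h1 : ∫ z, e m z * e m z ∂ω = 1 := by simpa using he_on m m
    have : Integrable (fun z => e m z * e m z) ω := by
      by_contra hnot
      rw [integral_undef hnot] at h1; norm_num at h1
    simpa [sq] using this
  have hmemG : MemLp g 2 ω := by
    rw [memLp_two_iff_integrable_sq hg_meas.aestronglyMeasurable]; exact hg2
  set EL : ℕ → Lp ℝ 2 ω := fun m => (hmemE m).toLp (e m) with hEL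
  set gL : Lp ℝ 2 ω := hmemG.toLp g with hGL
  have hinnerL2 : ∀ (f₁ f₂ : X → ℝ) (h₁ : MemLp f₁ 2 ω) (h₂ : MemLp f₂ 2 ω),
      ⟪h₁.toLp f₁, h₂.toLp f₂⟫ = ∫ z, f₁ z * f₂ z ∂ω := by
    intro f₁ f₂ h₁ h₂
    rw [MeasureTheory.L2.inner_def]
    refine integral_congr_ae ?_
    filter_upwards [h₁.coeFn_toLp, h₂.coeFn_toLp] with z hz1 hz2
    simp [hz1, hz2, mul_comm]
  have hONL : Orthonormal ℝ EL := by
    rw [orthonormal_iff_ite]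
    intro m n
    rw [hEL]; simp only []
    rw [hinnerL2 _ _ _ _, he_on m n]
  have hELG : ∀ m, ⟪EL m, gL⟫ = c m := fun m => hinnerL2 _ _ _ _
  have hGLnorm : ‖gL‖ ^ 2 ≤ 1 := by
    rw [← real_inner_self_eq_norm_sq, hGL, hinnerL2 _ _ _ _]
    simpa [sq] using hgnorm
  -- Bessel
  have hsum_c2 : Summable (fun m => c m ^ 2) := by
    have := hONL.inner_products_summable gL
    simpa [hELG, Real.norm_eq_abs, sq_abs] using this
  have htsum_c2 : ∑' m, c m ^ 2 ≤ 1 := by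
    have h1 := hONL.tsum_inner_products_le gL
    simp only [hELG, Real.norm_eq_abs, sq_abs] at h1
    exact h1.trans hGLnorm
  -- summability of the vector series
  have hsum_a2 : Summable (fun m => a m ^ 2) := by
    refine Summable.of_nonneg_of_le (fun m => sq_nonneg _) (fun m => ?_)
      (hsum_c2.mul_left (σ 0))
    rw [ha2 m]
    exact mul_le_mul_of_nonneg_right (hσanti (Nat.zero_le m)) (sq_nonneg _)
  have hsumvec : Summable (fun m => a m • eF m) := by
    have h := (heF.orthogonalFamily.summable_iff_norm_sq_summable (fun m => a m)).mpr
      (by simpa [Real.norm_eq_abs, sq_abs] using hsum_a2)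
    simpa [LinearIsometry.toSpanSingleton_apply] using h
  have hHasSum : HasSum (fun m => a m • eF m) μg := by
    have h := hsumvec.hasSum
    rwa [← hμg] at h
  -- coefficients of μg
  have hinnerμ : ∀ n, ⟪eF n, μg⟫ = a n := by
    intro n
    have h1 := (innerSL ℝ (eF n)).hasSum hHasSum
    have h2 : (fun m => (innerSL ℝ (eF n)) (a m • eF m)) = fun m =>
        if m = n then a n else 0 := by
      funext m
      simp only [innerSL_apply_apply, real_inner_smul_right, orthonormal_iff_ite.mp heF n m]
      rcases eq_or_ne m n with h | h
      · simp [h]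
      · simp [h, h.symm]
    rw [h2] at h1
    have h3 := h1.unique (hasSum_ite_eq n (a n))
    simpa using h3
  set A : F := ∑ m ∈ Finset.range N, a m • eF m with hA
  set B : F := μg - A with hB
  have hinnerA : ∀ n, ⟪eF n, A⟫ = if n < N then a n else 0 := by
    intro n
    rw [hA, inner_sum]
    have : ∀ m ∈ Finset.range N, ⟪eF n, a m • eF m⟫ = if m = n then a m else 0 := by
      intro m _
      rw [real_inner_smul_right, orthonormal_iff_ite.mp heF n m]
      rcases eq_or_ne m n with h | h
      · simp [h]
      · simp [h, h.symm]
    rw [Finset.sum_congr rfl this, Finset.sum_ite_eq' (Finset.range N) n (fun m => a m)]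
    simp [Finset.mem_range]
  have hinnerB : ∀ n, ⟪eF n, B⟫ = if n < N then 0 else a n := by
    intro n
    rw [hB, inner_sub_right, hinnerμ n, hinnerA n]
    by_cases h : n < N <;> simp [h]
  -- Parseval for B
  set b : HilbertBasis ℕ ℝ F := HilbertBasis.mk heF (le_of_eq heFtot.symm) with hb
  have hbcoe : ⇑b = eF := HilbertBasis.coe_mk _ _
  have hBnorm : ‖B‖ ^ 2 = ∑' m, ⟪eF m, B⟫ ^ 2 := by
    have h := b.tsum_inner_mul_inner B B
    rw [real_inner_self_eq_norm_sq] at h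
    rw [← h]
    congr 1; funext m
    rw [hbcoe, real_inner_comm, sq]
  have hβsummable : Summable (fun m => ⟪eF m, B⟫ ^ 2) := by
    have := heF.inner_products_summable B
    simpa [Real.norm_eq_abs, sq_abs] using this
  have hB2 : ‖B‖ ^ 2 ≤ σ N := by
    rw [hBnorm]
    have h1 : ∑' m, ⟪eF m, B⟫ ^ 2 ≤ ∑' m, σ N * c m ^ 2 := by
      refine Summable.tsum_le_tsum (fun m => ?_) hβsummable (hsum_c2.mul_left (σ N))
      rw [hinnerB m]
      by_cases h : m < N
      · rw [if_pos h]
        simpa using mul_nonneg (hσpos N).le (sq_nonneg (c m))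
      · rw [if_neg h, ha2 m]
        exact mul_le_mul_of_nonneg_right (hσanti (Nat.le_of_not_lt h)) (sq_nonneg _)
    rw [tsum_mul_left] at h1
    calc ∑' m, ⟪eF m, B⟫ ^ 2 ≤ σ N * ∑' m, c m ^ 2 := h1
      _ ≤ σ N * 1 := mul_le_mul_of_nonneg_left htsum_c2 (hσpos N).le
      _ = σ N := mul_one _
  -- projection bounds
  set M : ℝ := Finset.univ.sup' (Finset.univ_nonempty_iff.mpr ⟨⟨0, hN⟩⟩)
      (fun n : Fin N => σ n.val * ‖(P (eF n.val) : F)‖ ^ 2) with hM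
  have hMle : ∀ m (hm : m < N), σ m * ‖(P (eF m) : F)‖ ^ 2 ≤ M := by
    intro m hm
    exact Finset.le_sup' (fun n : Fin N => σ n.val * ‖(P (eF n.val) : F)‖ ^ 2)
      (Finset.mem_univ (⟨m, hm⟩ : Fin N))
  have hMnonneg : 0 ≤ M := by
    exact le_trans (mul_nonneg (hσpos 0).le (sq_nonneg _)) (hMle 0 hN)
  set S : ℝ := ∑ m ∈ Finset.range N, |c m| with hS
  have hSnonneg : 0 ≤ S := Finset.sum_nonneg fun m _ => abs_nonneg _
  have hPA : ‖(P A : F)‖ ≤ S * Real.sqrt M := by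
    have h1 : (P A : F) = ∑ m ∈ Finset.range N, a m • (P (eF m) : F) := by
      rw [hA, map_sum]
      push_cast
      exact Finset.sum_congr rfl fun m _ => by
        rw [ContinuousLinearMap.map_smul]; simp
    rw [h1]
    refine (norm_sum_le _ _).trans ?_
    rw [hS, Finset.sum_mul]
    refine Finset.sum_le_sum fun m hm => ?_
    have hmN : m < N := Finset.mem_range.mp hm
    rw [norm_smul, Real.norm_eq_abs, ha]
    simp only
    rw [abs_mul, abs_of_nonneg (Real.sqrt_nonneg _), mul_comm (Real.sqrt (σ m)) |c m|,
      mul_assoc]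
    refine mul_le_mul_of_nonneg_left ?_ (abs_nonneg _)
    have h3 : Real.sqrt (σ m) * ‖(P (eF m) : F)‖ = Real.sqrt (σ m * ‖(P (eF m) : F)‖ ^ 2) := by
      rw [Real.sqrt_mul (hσpos m).le, Real.sqrt_sq (norm_nonneg _)]
    rw [h3]
    exact Real.sqrt_le_sqrt (hMle m hmN)
  have hPA2 : ‖(P A : F)‖ ^ 2 ≤ S ^ 2 * M := by
    calc ‖(P A : F)‖ ^ 2 ≤ (S * Real.sqrt M) ^ 2 :=
          pow_le_pow_left₀ (norm_nonneg _) hPA 2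
      _ = S ^ 2 * M := by rw [mul_pow, Real.sq_sqrt hMnonneg]
  have hPB : ‖(P B : F)‖ ≤ ‖B‖ := by
    calc ‖(P B : F)‖ ≤ ‖P‖ * ‖B‖ := by
          simpa using (P : F →L[ℝ] K).le_opNorm B
      _ ≤ 1 * ‖B‖ := mul_le_mul_of_nonneg_right (Submodule.orthogonalProjection_norm_le K) (norm_nonneg _)
      _ = ‖B‖ := one_mul _
  have hμAB : μg = A + B := by rw [hB]; abel
  have hsplit : ‖(P μg : F)‖ ≤ ‖(P A : F)‖ + ‖(P B : F)‖ := by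
    have : (P μg : F) = (P A : F) + (P B : F) := by
      rw [hμAB, map_add]; rfl
    rw [this]
    exact norm_add_le _ _
  have hfinal : ‖(P μg : F)‖ ^ 2 ≤ 2 * (σ N + S ^ 2 * M) := by
    have h0 : 0 ≤ ‖(P A : F)‖ := norm_nonneg _
    have h1 : 0 ≤ ‖(P B : F)‖ := norm_nonneg _
    have h2 : ‖(P μg : F)‖ ≤ ‖(P A : F)‖ + ‖B‖ := hsplit.trans (by linarith)
    have hq : ‖(P μg : F)‖ ^ 2 ≤ (‖(P A : F)‖ + ‖B‖) ^ 2 :=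
      pow_le_pow_left₀ (norm_nonneg _) h2 2
    nlinarith [sq_nonneg (‖(P A : F)‖ - ‖B‖), hPA2, hB2]
  have hSgoal : (∑ n : Fin N, |∫ z, e n.val z * g z ∂ω|) = S := by
    rw [hS, hc]
    exact Fin.sum_univ_eq_sum_range (fun m => |∫ z, e m z * g z ∂ω|) N
  rw [hSgoal]
  linarith [hfinal]
end

section
/- Let x = (x_1,…,x_N) ∈ X^N with det E(x) ≠ 0, and let E_N^F := span{e_1^F,…,e_N^F} ⊆ F. Then all principal cosines between T(x) and E_N^F are positive, and max_{n∈[N]} ‖Π_{T(x)^⊥} e_n^F‖_F² ≤ 1/cos²θ_N(T(x), E_N^F) − 1 ≤ ∏_{n=1}^N 1/cos²θ_n(T(x), E_N^F) − 1. -/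
open scoped RealInnerProductSpace BigOperators Matrix


section auxA
open Polynomial Matrix

lemma aux_eval_charpoly {n : Type*} [Fintype n] [DecidableEq n] (M : Matrix n n ℝ) (t : ℝ) :
    M.charpoly.eval t = (Matrix.diagonal (fun _ => t) - M).det := by
  rw [Matrix.charpoly, ← Polynomial.coe_evalRingHom, RingHom.map_det]
  congr 1
  ext i j
  by_cases h : i = j <;>
    simp [Matrix.charmatrix_apply, Matrix.diagonal_apply, h]

lemma aux_charpoly_comm {n : Type*} [Fintype n] [DecidableEq n]
    (W : Matrix n n ℝ) (hW : IsUnit W.det) :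
    (Wᵀ * W).charpoly = (W * Wᵀ).charpoly := by
  apply Polynomial.funext
  intro t
  rw [aux_eval_charpoly, aux_eval_charpoly]
  have hd : (Matrix.diagonal (fun _ : n => t)) = t • (1 : Matrix n n ℝ) := by
    rw [Matrix.smul_one_eq_diagonal]
  have key : W⁻¹ * (Matrix.diagonal (fun _ : n => t) - W * Wᵀ) * W
      = Matrix.diagonal (fun _ : n => t) - Wᵀ * W := by
    rw [hd, Matrix.mul_sub, Matrix.sub_mul]
    congr 1
    · rw [Matrix.mul_smul, Matrix.mul_one, Matrix.smul_mul, Matrix.nonsing_inv_mul _ hW]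
    · rw [← Matrix.mul_assoc W⁻¹ W Wᵀ, Matrix.nonsing_inv_mul _ hW, Matrix.one_mul]
  rw [← key, Matrix.det_mul, Matrix.det_mul, mul_comm, ← mul_assoc, ← Matrix.det_mul,
    Matrix.mul_nonsing_inv _ hW, Matrix.det_one, one_mul]

lemma aux_herm_charpoly {n : Type*} [Fintype n] [DecidableEq n] {M : Matrix n n ℝ}
    (hM : M.IsHermitian) :
    M.charpoly = ∏ i : n, (Polynomial.X - Polynomial.C (hM.eigenvalues i)) := by
  apply Polynomial.funext
  intro t
  rw [aux_eval_charpoly]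
  set V : Matrix n n ℝ := (hM.eigenvectorUnitary : Matrix n n ℝ) with hV
  have hVV : V * star V = 1 := Matrix.mem_unitaryGroup_iff.mp hM.eigenvectorUnitary.2
  have key : Matrix.diagonal (fun _ : n => t) - M
      = V * (Matrix.diagonal fun i => t - hM.eigenvalues i) * star V := by
    conv_lhs => rw [hM.spectral_theorem]
    have hdd : (Matrix.diagonal fun i => t - hM.eigenvalues i)
        = Matrix.diagonal (fun _ : n => t) - Matrix.diagonal (RCLike.ofReal ∘ hM.eigenvalues) := by
      rw [Matrix.diagonal_sub]; rfl
    rw [hdd, Matrix.mul_sub, Matrix.sub_mul]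
    congr 1
    have hd : (Matrix.diagonal (fun _ : n => t)) = t • (1 : Matrix n n ℝ) := by
      rw [Matrix.smul_one_eq_diagonal]
    rw [hd, Matrix.mul_smul, Matrix.mul_one, Matrix.smul_mul, hVV]
  rw [key, Matrix.det_mul, Matrix.det_mul, mul_right_comm, ← Matrix.det_mul, hVV,
    Matrix.det_one, one_mul, Matrix.det_diagonal, Polynomial.eval_prod]
  simp

lemma aux_quad_lower {n : Type*} [Fintype n] [DecidableEq n] {M : Matrix n n ℝ}
    (hM : M.IsHermitian) (a : ℝ) (ha : ∀ i, a ≤ hM.eigenvalues i) (y : n → ℝ) :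
    a * (y ⬝ᵥ y) ≤ y ⬝ᵥ (M *ᵥ y) := by
  classical
  set b := hM.eigenvectorBasis with hb
  set y' : EuclideanSpace ℝ n := (WithLp.equiv 2 (n → ℝ)).symm y with hy'
  set r : n → ℝ := fun i => ⟪b i, y'⟫ with hr
  have hsum : (∑ i, r i • b i) = y' := b.sum_repr' y'
  have horth := b.orthonormal
  have hM2 : Matrix.toEuclideanLin M y' = ∑ i, (hM.eigenvalues i * r i) • b i := by
    conv_lhs => rw [← hsum]
    rw [map_sum]
    refine Finset.sum_congr rfl fun i _ => ?_
    rw [_root_.map_smul]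
    have hbi : Matrix.toEuclideanLin M (b i) = hM.eigenvalues i • b i := by
      apply (WithLp.equiv 2 (n → ℝ)).injective
      simpa using hM.mulVec_eigenvectorBasis i
    rw [hbi, smul_smul, mul_comm]
  have key1 : y ⬝ᵥ (M *ᵥ y) = ⟪y', Matrix.toEuclideanLin M y'⟫ := by
    rw [hy', Matrix.toEuclideanLin_apply_piLp_toLp]
    simp [PiLp.inner_apply, RCLike.inner_apply, dotProduct]
    exact Finset.sum_congr rfl fun i _ => mul_comm _ _
  have key2 : y ⬝ᵥ y = ⟪y', y'⟫ := by
    rw [hy']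
    simp [PiLp.inner_apply, RCLike.inner_apply, dotProduct]
    rw [EuclideanSpace.real_norm_sq_eq]; simp [sq]
  have e1 : ⟪y', Matrix.toEuclideanLin M y'⟫ = ∑ i, r i * (hM.eigenvalues i * r i) := by
    rw [hM2]
    conv_lhs => rw [← hsum]
    simpa using horth.inner_sum r (fun i => hM.eigenvalues i * r i) Finset.univ
  have e2 : ⟪y', y'⟫ = ∑ i, r i * r i := by
    conv_lhs => rw [← hsum]
    simpa using horth.inner_sum r r Finset.univ
  rw [key1, key2, e1, e2, Finset.mul_sum]
  refine Finset.sum_le_sum fun i _ => ?_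
  have h1 : a * (r i * r i) ≤ hM.eigenvalues i * (r i * r i) :=
    mul_le_mul_of_nonneg_right (ha i) (mul_self_nonneg _)
  nlinarith [h1]

end auxA

section auxB
variable {F : Type*} [NormedAddCommGroup F] [InnerProductSpace ℝ F]
  {ι : Type*} [Fintype ι] [DecidableEq ι] {u : ι → F}

noncomputable def onbOfSpan (hu : Orthonormal ℝ u) :
    OrthonormalBasis ι ℝ (Submodule.span ℝ (Set.range u)) := by
  refine OrthonormalBasis.mk (v := fun i =>
    (⟨u i, Submodule.subset_span (Set.mem_range_self i)⟩ :
      Submodule.span ℝ (Set.range u))) ?_ ?_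
  · rw [orthonormal_iff_ite] at hu ⊢
    intro i j
    simpa [Submodule.coe_inner] using hu i j
  · have : Submodule.span ℝ (Set.range fun i =>
        (⟨u i, Submodule.subset_span (Set.mem_range_self i)⟩ :
          Submodule.span ℝ (Set.range u))) = ⊤ := by
      apply Submodule.map_injective_of_injective
        (Submodule.injective_subtype (Submodule.span ℝ (Set.range u)))
      rw [Submodule.map_span, Submodule.map_top, Submodule.range_subtype]
      congr 1
      rw [← Set.range_comp]
      rfl
    rw [this]

@[simp] lemma onbOfSpan_coe (hu : Orthonormal ℝ u) (i : ι) :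
    ((onbOfSpan hu i : Submodule.span ℝ (Set.range u)) : F) = u i := by
  simp [onbOfSpan]

lemma aux_span_expand (hu : Orthonormal ℝ u) {w : F}
    (hw : w ∈ Submodule.span ℝ (Set.range u)) :
    w = ∑ i, ⟪u i, w⟫ • u i := by
  have h := (onbOfSpan hu).sum_repr'
    (⟨w, hw⟩ : Submodule.span ℝ (Set.range u))
  have h2 := congrArg (Submodule.subtype _) h
  simp only [map_sum, map_smul, Submodule.subtype_apply] at h2
  conv_lhs => rw [← h2]
  exact Finset.sum_congr rfl fun i _ => by simp [Submodule.coe_inner]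

lemma aux_proj_eq_sum [CompleteSpace F] (hu : Orthonormal ℝ u) (w : F) :
    ((Submodule.orthogonalProjection (Submodule.span ℝ (Set.range u)) w : F))
      = ∑ i, ⟪u i, w⟫ • u i := by
  have := (onbOfSpan hu).orthogonalProjectionOnto_apply_eq_sum w
  have h2 := congrArg (Submodule.subtype _) this
  simp only [map_sum, map_smul, Submodule.subtype_apply, onbOfSpan_coe] at h2
  exact h2

omit [DecidableEq ι] in
lemma aux_norm_sq_sum (hu : Orthonormal ℝ u) (l : ι → ℝ) :
    ‖∑ i, l i • u i‖ ^ 2 = ∑ i, l i ^ 2 := by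
  rw [← real_inner_self_eq_norm_sq]
  simpa [sq] using hu.inner_sum l l Finset.univ

lemma aux_proj_congr {F : Type*} [NormedAddCommGroup F] [InnerProductSpace ℝ F]
    {S₁ S₂ : Submodule ℝ F} [S₁.HasOrthogonalProjection] [S₂.HasOrthogonalProjection]
    (h : S₁ = S₂) (w : F) :
    ((Submodule.orthogonalProjection S₁ w : F)) = ((Submodule.orthogonalProjection S₂ w : F)) := by
  subst h
  rfl

end auxB
/-- **Lemma 2 of the paper.** If `det E(x) ≠ 0` then all principal cosines
between `T(x)` and `E_N^F` are positive and
`max_{n∈[N]} ‖Π_{T(x)^⊥} e_n^F‖² ≤ 1/cos²θ_N − 1 ≤ ∏_{n∈[N]} 1/cos²θ_n − 1`.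
The squared principal cosines are encoded as any nonincreasing enumeration `c` of the
eigenvalues of `W Wᵀ`, `W` a cross-Gram matrix of orthonormal bases of the two subspaces;
`c ⟨N-1,·⟩` is the smallest one, `cos²θ_N`. Indices are 0-based. -/
theorem stmt4 {X : Type*}
    (e : ℕ → X → ℝ) (σ : ℕ → ℝ)
    (hσpos : ∀ m, 0 < σ m) (hσanti : Antitone σ) (hσsum : Summable σ)
    (hdiag : ∀ z : X, Summable fun m => σ m * (e m z) ^ 2)
    {F : Type*} [NormedAddCommGroup F] [InnerProductSpace ℝ F] [CompleteSpace F]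
    (eF : ℕ → F) (heF : Orthonormal ℝ eF)
    (Kf : X → F) (hKf : ∀ (z : X) (m : ℕ), ⟪eF m, Kf z⟫ = Real.sqrt (σ m) * e m z)
    (N : ℕ) (hN : 0 < N) (x : Fin N → X)
    (hEdet : (Matrix.of fun i j : Fin N => e i.val (x j)).det ≠ 0)
    (u v : Fin N → F) (hu : Orthonormal ℝ u) (hv : Orthonormal ℝ v)
    (huT : Submodule.span ℝ (Set.range u) = Submodule.span ℝ (Set.range fun j => Kf (x j)))
    (hvE : Submodule.span ℝ (Set.range v)
      = Submodule.span ℝ (Set.range fun n : Fin N => eF n.val))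
    (W : Matrix (Fin N) (Fin N) ℝ) (hW : W = Matrix.of fun i j : Fin N => ⟪u i, v j⟫)
    (c : Fin N → ℝ) (hc : Antitone c)
    (hchar : (W * Wᵀ).charpoly = ∏ i : Fin N, (Polynomial.X - Polynomial.C (c i))) :
    (∀ i : Fin N, 0 < c i) ∧
    (Finset.univ.sup' (Finset.univ_nonempty_iff.mpr ⟨⟨0, hN⟩⟩)
        (fun n : Fin N =>
          ‖(Submodule.orthogonalProjection (Submodule.span ℝ (Set.range fun j => Kf (x j)))ᗮ
              (eF n.val) : F)‖ ^ 2)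
      ≤ 1 / c ⟨N - 1, Nat.sub_lt hN one_pos⟩ - 1) ∧
    1 / c ⟨N - 1, Nat.sub_lt hN one_pos⟩ - 1 ≤ (∏ i : Fin N, 1 / c i) - 1 := by
  classical
  set T : Submodule ℝ F := Submodule.span ℝ (Set.range fun j => Kf (x j)) with hTdef
  set eN : Fin N → F := fun n => eF n.val with heNdef
  have heN : Orthonormal ℝ eN := heF.comp Fin.val Fin.val_injective
  set i₀ : Fin N := ⟨N - 1, Nat.sub_lt hN one_pos⟩ with hi₀
  -- membership facts
  have hKmem : ∀ j, Kf (x j) ∈ Submodule.span ℝ (Set.range u) := by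
    intro j
    rw [huT]
    exact Submodule.subset_span (Set.mem_range_self j)
  have hvmem : ∀ n, v n ∈ Submodule.span ℝ (Set.range eN) := by
    intro n
    have : v n ∈ Submodule.span ℝ (Set.range v) :=
      Submodule.subset_span (Set.mem_range_self n)
    rwa [hvE] at this
  have heFmem : ∀ n : Fin N, eN n ∈ Submodule.span ℝ (Set.range v) := by
    intro n
    rw [hvE]
    exact Submodule.subset_span (Set.mem_range_self n)
  -- matrices
  set A : Matrix (Fin N) (Fin N) ℝ := Matrix.of fun i j => ⟪u i, Kf (x j)⟫ with hA
  set G : Matrix (Fin N) (Fin N) ℝ := Matrix.of fun n m => ⟪eN m, v n⟫ with hG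
  set M : Matrix (Fin N) (Fin N) ℝ := Matrix.of fun n j => ⟪v n, Kf (x j)⟫ with hM
  set D : Matrix (Fin N) (Fin N) ℝ := Matrix.diagonal fun m => Real.sqrt (σ m.val) with hD
  have hM1 : M = Wᵀ * A := by
    ext n j
    rw [Matrix.mul_apply]
    show ⟪v n, Kf (x j)⟫ = _
    conv_lhs => rw [aux_span_expand hu (hKmem j)]
    rw [inner_sum]
    refine Finset.sum_congr rfl fun i _ => ?_
    rw [real_inner_smul_right, hW]
    simp only [Matrix.transpose_apply, Matrix.of_apply, hA]
    rw [real_inner_comm (v n) (u i), mul_comm]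
  have hM2 : M = G * (D * (Matrix.of fun i j : Fin N => e i.val (x j))) := by
    ext n j
    rw [Matrix.mul_apply]
    show ⟪v n, Kf (x j)⟫ = _
    conv_lhs => rw [aux_span_expand heN (hvmem n)]
    rw [sum_inner]
    refine Finset.sum_congr rfl fun m _ => ?_
    rw [real_inner_smul_left]
    have : (D * Matrix.of fun i j : Fin N => e i.val (x j)) m j
        = Real.sqrt (σ m.val) * e m.val (x j) := by
      simp [hD, Matrix.diagonal_mul]
    rw [this]
    have h2 : ⟪eN m, Kf (x j)⟫ = Real.sqrt (σ m.val) * e m.val (x j) := hKf (x j) m.val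
    rw [h2]
    rfl
  have hGG : G * Gᵀ = 1 := by
    ext n m
    rw [Matrix.mul_apply]
    have hp : ⟪v n, v m⟫ = ∑ k, G n k * Gᵀ k m := by
      conv_lhs => rw [aux_span_expand heN (hvmem m)]
      rw [inner_sum]
      refine Finset.sum_congr rfl fun k _ => ?_
      rw [real_inner_smul_right]
      simp only [hG, Matrix.transpose_apply, Matrix.of_apply]
      rw [real_inner_comm (v n) (eN k), mul_comm]
    rw [← hp, orthonormal_iff_ite.mp hv n m, Matrix.one_apply]
  have hdetG : G.det ≠ 0 := by
    have h := congrArg Matrix.det hGG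
    rw [Matrix.det_mul, Matrix.det_one] at h
    exact left_ne_zero_of_mul_eq_one h
  have hdetD : D.det ≠ 0 := by
    rw [hD, Matrix.det_diagonal]
    exact Finset.prod_ne_zero_iff.mpr fun m _ =>
      ne_of_gt (Real.sqrt_pos.mpr (hσpos m.val))
  have hdetM : M.det ≠ 0 := by
    rw [hM2, Matrix.det_mul, Matrix.det_mul]
    exact mul_ne_zero hdetG (mul_ne_zero hdetD hEdet)
  have hdetW : W.det ≠ 0 := by
    intro h0
    apply hdetM
    rw [hM1, Matrix.det_mul, Matrix.det_transpose, h0, zero_mul]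
  have hdetWT : IsUnit (Wᵀ).det := by
    rw [Matrix.det_transpose]
    exact isUnit_iff_ne_zero.mpr hdetW
  -- hermitian
  have hH1 : (W * Wᵀ).IsHermitian := by
    show (W * Wᵀ)ᴴ = W * Wᵀ
    ext i j
    simp only [Matrix.conjTranspose_apply, Matrix.mul_apply, Matrix.transpose_apply, star_trivial]
    exact Finset.sum_congr rfl fun k _ => mul_comm _ _
  have hH2 : (Wᵀ * W).IsHermitian := by
    show (Wᵀ * W)ᴴ = Wᵀ * W
    ext i j
    simp only [Matrix.conjTranspose_apply, Matrix.mul_apply, Matrix.transpose_apply, star_trivial]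
    exact Finset.sum_congr rfl fun k _ => mul_comm _ _
  -- roots machinery
  have hroots : ∀ f : Fin N → ℝ,
      (∏ i : Fin N, (Polynomial.X - Polynomial.C (f i))).roots = Finset.univ.val.map f := by
    intro f
    rw [Finset.prod_eq_multiset_prod]
    have h : Multiset.map (fun i => Polynomial.X - Polynomial.C (f i)) Finset.univ.val
        = Multiset.map (fun a => Polynomial.X - Polynomial.C a) (Finset.univ.val.map f) := by
      rw [Multiset.map_map]
      rfl
    rw [h, Polynomial.roots_multiset_prod_X_sub_C]
  have hms1 : Finset.univ.val.map hH1.eigenvalues = Finset.univ.val.map c := by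
    have h1 : (∏ i : Fin N, (Polynomial.X - Polynomial.C (hH1.eigenvalues i)))
        = ∏ i : Fin N, (Polynomial.X - Polynomial.C (c i)) := by
      rw [← aux_herm_charpoly hH1, hchar]
    have h2 := congrArg Polynomial.roots h1
    rwa [hroots, hroots] at h2
  have hms2 : Finset.univ.val.map hH2.eigenvalues = Finset.univ.val.map c := by
    have h1 : (∏ i : Fin N, (Polynomial.X - Polynomial.C (hH2.eigenvalues i)))
        = ∏ i : Fin N, (Polynomial.X - Polynomial.C (c i)) := by
      rw [← aux_herm_charpoly hH2, aux_charpoly_comm W (isUnit_iff_ne_zero.mpr hdetW), hchar]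
    have h2 := congrArg Polynomial.roots h1
    rwa [hroots, hroots] at h2
  -- invertibility of Wᵀ on vectors
  have hWTz : ∀ z : Fin N → ℝ, z ≠ 0 → Wᵀ *ᵥ z ≠ 0 := by
    intro z hz h0
    apply hz
    have h : (Wᵀ)⁻¹ *ᵥ (Wᵀ *ᵥ z) = z := by
      rw [Matrix.mulVec_mulVec, Matrix.nonsing_inv_mul _ hdetWT, Matrix.one_mulVec]
    rw [h0, Matrix.mulVec_zero] at h
    exact h.symm
  -- Bessel-type bound
  have hBessel : ∀ y : Fin N → ℝ, (Wᵀ *ᵥ y) ⬝ᵥ (Wᵀ *ᵥ y) ≤ y ⬝ᵥ y := by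
    intro y
    set z : F := ∑ i, y i • u i with hz
    have h1 : ∀ j, (Wᵀ *ᵥ y) j = ⟪z, v j⟫ := by
      intro j
      rw [hz, sum_inner]
      show ∑ i, Wᵀ j i * y i = _
      refine Finset.sum_congr rfl fun i _ => ?_
      rw [real_inner_smul_left, hW]
      simp only [Matrix.transpose_apply, Matrix.of_apply]
      rw [mul_comm]
    have h2 : (Wᵀ *ᵥ y) ⬝ᵥ (Wᵀ *ᵥ y) = ∑ j, ⟪z, v j⟫ * ⟪z, v j⟫ := by
      refine Finset.sum_congr rfl fun j _ => ?_
      rw [h1 j]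
    have h3 := hv.sum_inner_products_le (s := Finset.univ) (x := z)
    have h4 : ∑ j, ⟪z, v j⟫ * ⟪z, v j⟫ ≤ ‖z‖ ^ 2 := by
      refine le_trans (le_of_eq ?_) h3
      refine Finset.sum_congr rfl fun j _ => ?_
      rw [real_inner_comm z (v j), Real.norm_eq_abs, pow_two, abs_mul_abs_self]
    have h5 : ‖z‖ ^ 2 = ∑ i, y i ^ 2 := aux_norm_sq_sum hu y
    have h6 : y ⬝ᵥ y = ∑ i, y i ^ 2 := by
      refine Finset.sum_congr rfl fun i _ => ?_
      rw [sq]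
    rw [h2, h6, ← h5]
    exact h4
  -- eigenvalue range for W * Wᵀ
  have hμran : ∀ i, 0 < hH1.eigenvalues i ∧ hH1.eigenvalues i ≤ 1 := by
    intro i
    set z : Fin N → ℝ := ⇑(hH1.eigenvectorBasis i) with hzdef
    have hz1 : z ⬝ᵥ z = 1 := by
      have h1 : ⟪hH1.eigenvectorBasis i, hH1.eigenvectorBasis i⟫ = (1 : ℝ) :=
        orthonormal_iff_ite.mp hH1.eigenvectorBasis.orthonormal i i |>.trans (by simp)
      rw [← h1]
      simp only [PiLp.inner_apply, RCLike.inner_apply, starRingEnd_apply, star_trivial]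
      rfl
    have hzne : z ≠ 0 := by
      intro h0
      rw [h0] at hz1
      simp [dotProduct] at hz1
    have hre : hH1.eigenvalues i = (Wᵀ *ᵥ z) ⬝ᵥ (Wᵀ *ᵥ z) := by
      have he := hH1.eigenvalues_eq i
      rw [he]
      have : star z = z := by simp
      rw [this, ← Matrix.mulVec_mulVec, Matrix.dotProduct_mulVec]
      have h7 : z ᵥ* W = Wᵀ *ᵥ z := by
        rw [← Matrix.transpose_transpose W, Matrix.vecMul_transpose, Matrix.transpose_transpose]
      rw [h7]
      simp
      rfl
    constructor
    · rw [hre]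
      have hnn : 0 ≤ (Wᵀ *ᵥ z) ⬝ᵥ (Wᵀ *ᵥ z) :=
        Finset.sum_nonneg fun k _ => mul_self_nonneg _
      rcases hnn.lt_or_eq with h | h
      · exact h
      · exact absurd (dotProduct_self_eq_zero.mp h.symm) (hWTz z hzne)
    · rw [hre]
      calc (Wᵀ *ᵥ z) ⬝ᵥ (Wᵀ *ᵥ z) ≤ z ⬝ᵥ z := hBessel z
        _ = 1 := hz1
  -- transfer to c
  have hcval : ∀ i : Fin N, ∃ j, hH1.eigenvalues j = c i := by
    intro i
    have hmem : c i ∈ Finset.univ.val.map c :=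
      Multiset.mem_map_of_mem c (Finset.mem_univ i)
    rw [← hms1] at hmem
    obtain ⟨j, _, hj⟩ := Multiset.mem_map.mp hmem
    exact ⟨j, hj⟩
  have part1 : ∀ i : Fin N, 0 < c i := by
    intro i
    obtain ⟨j, hj⟩ := hcval i
    rw [← hj]
    exact (hμran j).1
  have hcle1 : ∀ i : Fin N, c i ≤ 1 := by
    intro i
    obtain ⟨j, hj⟩ := hcval i
    rw [← hj]
    exact (hμran j).2
  have hcmin : ∀ i : Fin N, c i₀ ≤ c i := by
    intro i
    exact hc (Fin.le_def.mpr (Nat.le_pred_of_lt i.isLt))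
  -- quadratic lower bound
  have hμ'min : ∀ j, c i₀ ≤ hH2.eigenvalues j := by
    intro j
    have hmem : hH2.eigenvalues j ∈ Finset.univ.val.map hH2.eigenvalues :=
      Multiset.mem_map_of_mem _ (Finset.mem_univ j)
    rw [hms2] at hmem
    obtain ⟨i, _, hi⟩ := Multiset.mem_map.mp hmem
    rw [← hi]
    exact hcmin i
  have hquad : ∀ y : Fin N → ℝ, c i₀ * (y ⬝ᵥ y) ≤ (W *ᵥ y) ⬝ᵥ (W *ᵥ y) := by
    intro y
    refine le_trans (aux_quad_lower hH2 (c i₀) hμ'min y) (le_of_eq ?_)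
    rw [← Matrix.mulVec_mulVec, Matrix.dotProduct_mulVec, Matrix.vecMul_transpose]
  -- projection bound
  have hproj : ∀ n : Fin N, ‖(Submodule.orthogonalProjection Tᗮ (eN n) : F)‖ ^ 2 ≤ 1 - c i₀ := by
    intro n
    have hsplit : ‖eN n‖ ^ 2 = ‖Submodule.orthogonalProjection T (eN n)‖ ^ 2
        + ‖Submodule.orthogonalProjection Tᗮ (eN n)‖ ^ 2 :=
      Submodule.norm_sq_eq_add_norm_sq_projection (eN n) T
    have hn1 : ‖eN n‖ = 1 := heN.1 n
    have hcoe1 : ‖Submodule.orthogonalProjection T (eN n)‖ = ‖(Submodule.orthogonalProjection T (eN n) : F)‖ := rfl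
    have hcoe2 : ‖Submodule.orthogonalProjection Tᗮ (eN n)‖ = ‖(Submodule.orthogonalProjection Tᗮ (eN n) : F)‖ := rfl
    rw [hn1, hcoe1, hcoe2, one_pow] at hsplit
    -- now bound the T-projection from below
    set y : Fin N → ℝ := fun j => ⟪v j, eN n⟫ with hy
    have hexp : eN n = ∑ j, y j • v j := aux_span_expand hv (heFmem n)
    have hWy : ∀ i, ⟪u i, eN n⟫ = (W *ᵥ y) i := by
      intro i
      conv_lhs => rw [hexp]
      rw [inner_sum]
      show _ = ∑ j, W i j * y j
      refine Finset.sum_congr rfl fun j _ => ?_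
      rw [real_inner_smul_right, hW]
      simp only [Matrix.of_apply]
      rw [mul_comm]
    have hy1 : y ⬝ᵥ y = 1 := by
      have h1 : ⟪eN n, eN n⟫ = (1 : ℝ) := by
        rw [real_inner_self_eq_norm_sq, hn1, one_pow]
      have h2 : ⟪eN n, eN n⟫ = ∑ j, y j * y j := by
        have h := hv.inner_sum y y Finset.univ
        rw [← hexp] at h
        simpa using h
      calc y ⬝ᵥ y = ∑ j, y j * y j := rfl
        _ = ⟪eN n, eN n⟫ := h2.symm
        _ = 1 := h1
    have hprojT : ‖(Submodule.orthogonalProjection T (eN n) : F)‖ ^ 2 = (W *ᵥ y) ⬝ᵥ (W *ᵥ y) := by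
      rw [← aux_proj_congr huT (eN n), aux_proj_eq_sum hu, aux_norm_sq_sum hu]
      refine Finset.sum_congr rfl fun i _ => ?_
      rw [hWy i, sq]
    have hlow : c i₀ ≤ ‖(Submodule.orthogonalProjection T (eN n) : F)‖ ^ 2 := by
      rw [hprojT]
      have := hquad y
      rwa [hy1, mul_one] at this
    linarith [hsplit, hlow]
  have hstep : 1 - c i₀ ≤ 1 / c i₀ - 1 := by
    have hpos : 0 < c i₀ := part1 i₀
    have hd : c i₀ * (1 / c i₀) = 1 := by
      field_simp
    nlinarith [sq_nonneg (1 - c i₀), hpos, hd, one_div_pos.mpr hpos]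
  refine ⟨part1, ?_, ?_⟩
  · refine Finset.sup'_le _ _ fun n _ => ?_
    exact le_trans (hproj n) hstep
  · have h1 : 1 / c i₀ ≤ ∏ i : Fin N, 1 / c i := by
      have hsplit : ∏ i : Fin N, 1 / c i
          = (1 / c i₀) * ∏ i ∈ Finset.univ.erase i₀, 1 / c i :=
        (Finset.mul_prod_erase Finset.univ _ (Finset.mem_univ i₀)).symm
      have h2 : (1:ℝ) ≤ ∏ i ∈ Finset.univ.erase i₀, 1 / c i := by
        have h3 := Finset.prod_le_prod (s := Finset.univ.erase i₀)
          (f := fun _ => (1:ℝ)) (g := fun i => 1 / c i)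
          (fun i _ => zero_le_one) (fun i _ => by
            rw [le_div_iff₀ (part1 i), one_mul]
            exact hcle1 i)
        simpa using h3
      calc 1 / c i₀ = (1 / c i₀) * 1 := (mul_one _).symm
        _ ≤ (1 / c i₀) * ∏ i ∈ Finset.univ.erase i₀, 1 / c i :=
            mul_le_mul_of_nonneg_left h2 (le_of_lt (one_div_pos.mpr (part1 i₀)))
        _ = ∏ i : Fin N, 1 / c i := hsplit.symm
    linarith [h1]
end

section
/- Let (e_m)_{m≥1} be an orthonormal family in L²(dω), (σ_m)_{m≥1} a summable sequence of nonnegative reals, and k(x,y) = ∑_{m≥1} σ_m e_m(x) e_m(y) (pointwise absolutely convergent). Then for every N ≥ 1, (1/N!) ∫_{X^N} det( (k(x_i,x_j))_{i,j∈[N]} ) dω(x_1)⋯dω(x_N) = ∑_{T ⊂ ℕ*, |T| = N} ∏_{t∈T} σ_t, where the sum on the right is over all N-element subsets of ℕ* = {1,2,…} and is finite. -/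
open scoped BigOperators
open MeasureTheory

lemma aux_prod_tsum : ∀ (n : ℕ) (g : Fin n → ℕ → ℝ), (∀ i, Summable fun m => ‖g i m‖) →
    Summable (fun f : Fin n → ℕ => ‖∏ i, g i (f i)‖) ∧
      (∏ i, ∑' m, g i m) = ∑' f : Fin n → ℕ, ∏ i, g i (f i) := by
  intro n
  induction n with
  | zero =>
    intro g hg
    constructor
    · exact Summable.of_finite
    · rw [tsum_eq_single (fun i => i.elim0) (fun b hb => absurd (Subsingleton.elim b _) hb)]
      simp
  | succ n ih =>
    intro g hg
    obtain ⟨ihs, ihe⟩ := ih (fun i => g i.succ) (fun i => hg _)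
    let E : (ℕ × (Fin n → ℕ)) ≃ (Fin (n+1) → ℕ) := Fin.consEquiv (fun _ => ℕ)
    have hEapp : ∀ p : ℕ × (Fin n → ℕ), E p = Fin.cons p.1 p.2 := fun p => rfl
    have key : ∀ p : ℕ × (Fin n → ℕ),
        (∏ i, g i (E p i)) = g 0 p.1 * ∏ i, g i.succ (p.2 i) := by
      intro p
      rw [hEapp, Fin.prod_univ_succ]
      simp
    have hs := (hg 0).mul_norm ihs
    constructor
    · refine E.summable_iff.mp ?_
      refine (summable_congr ?_).mpr hs
      intro p
      simp only [Function.comp_apply, key p]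
    · rw [Fin.prod_univ_succ]
      have h2 : (∏ i : Fin n, ∑' m, g i.succ m) = ∑' f : Fin n → ℕ, ∏ i, g i.succ (f i) := ihe
      rw [h2, tsum_mul_tsum_of_summable_norm (hg 0) ihs, ← E.tsum_eq]
      exact tsum_congr fun p => (key p).symm

lemma aux_sign_sum {N : ℕ} (f : Fin N → ℕ) :
    ∑ π : Equiv.Perm (Fin N), ((Equiv.Perm.sign π : ℤ) : ℝ) *
        (∏ i, if f (π⁻¹ i) = f i then (1:ℝ) else 0) =
      if Function.Injective f then 1 else 0 := by
  classical
  have hD : ∀ π : Equiv.Perm (Fin N),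
      (∏ i, if f (π⁻¹ i) = f i then (1:ℝ) else 0) =
        if (∀ i, f (π i) = f i) then 1 else 0 := by
    intro π
    by_cases h : ∀ i, f (π i) = f i
    · rw [if_pos h]
      refine Finset.prod_eq_one fun i _ => ?_
      rw [if_pos]
      have := h (π⁻¹ i)
      simpa using this.symm
    · rw [if_neg h]
      push_neg at h
      obtain ⟨i, hi⟩ := h
      refine Finset.prod_eq_zero (Finset.mem_univ (π i)) ?_
      rw [if_neg]
      simpa using fun hcon => hi hcon.symm
  simp_rw [hD, mul_ite, mul_one, mul_zero, ← Finset.sum_filter]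
  by_cases hinj : Function.Injective f
  · rw [if_pos hinj]
    have hfilter : Finset.univ.filter (fun π : Equiv.Perm (Fin N) => ∀ i, f (π i) = f i)
        = {1} := by
      ext π
      simp only [Finset.mem_filter, Finset.mem_univ, true_and, Finset.mem_singleton]
      constructor
      · intro h
        exact Equiv.ext fun i => hinj (h i)
      · rintro rfl i
        rfl
    rw [hfilter, Finset.sum_singleton]
    simp
  · rw [if_neg hinj]
    rw [Function.not_injective_iff] at hinj
    obtain ⟨i, j, hfij, hij⟩ := hinj
    refine Finset.sum_involution (fun π _ => Equiv.swap i j * π) ?_ ?_ ?_ ?_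
    · intro π _
      have : Equiv.Perm.sign (Equiv.swap i j * π) = - Equiv.Perm.sign π := by
        rw [Equiv.Perm.sign_mul, Equiv.Perm.sign_swap hij]
        simp
      rw [this]
      push_cast
      ring
    · intro π _ _
      intro hcon
      have : Equiv.swap i j = 1 := by
        have := congrArg (· * π⁻¹) hcon
        simpa [mul_assoc] using this
      exact hij (Equiv.swap_eq_one_iff.mp this)
    · intro π hπ
      simp only [Finset.mem_filter, Finset.mem_univ, true_and] at hπ ⊢
      intro l
      have hswap : ∀ m, f (Equiv.swap i j m) = f m := by
        intro m
        rcases eq_or_ne m i with rfl | hmi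
        · rw [Equiv.swap_apply_left]; exact hfij.symm
        rcases eq_or_ne m j with rfl | hmj
        · rw [Equiv.swap_apply_right]; exact hfij
        · rw [Equiv.swap_apply_of_ne_of_ne hmi hmj]
      rw [Equiv.Perm.mul_apply, hswap, hπ l]
    · intro π _
      show Equiv.swap i j * (Equiv.swap i j * π) = π
      rw [← mul_assoc, Equiv.swap_mul_self, one_mul]

lemma aux_inj_equiv (σ : ℕ → ℝ) (N : ℕ)
    (hPsum : Summable (fun f : Fin N → ℕ => ∏ i, σ (f i))) :
    Summable (fun T : {s : Finset ℕ // s.card = N} => ∏ t ∈ (T : Finset ℕ), σ t) ∧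
    ∑' f : {f : Fin N → ℕ // Function.Injective f}, ∏ i, σ (f.1 i)
      = (N.factorial : ℝ) * ∑' T : {s : Finset ℕ // s.card = N}, ∏ t ∈ (T : Finset ℕ), σ t := by
  classical
  let Φ : {s : Finset ℕ // s.card = N} × Equiv.Perm (Fin N) →
      {f : Fin N → ℕ // Function.Injective f} :=
    fun p => ⟨fun i => p.1.1.orderEmbOfFin p.1.2 (p.2 i),
      fun a b hab => p.2.injective ((p.1.1.orderEmbOfFin p.1.2).injective hab)⟩
  have hbij : Function.Bijective Φ := by
    constructor
    · rintro ⟨⟨s, hs⟩, τ⟩ ⟨⟨s', hs'⟩, τ'⟩ h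
      have hfun : (fun i => s.orderEmbOfFin hs (τ i)) = fun i => s'.orderEmbOfFin hs' (τ' i) :=
        congrArg Subtype.val h
      have hss' : s = s' := by
        have h1 : Set.range (fun i => s.orderEmbOfFin hs (τ i)) = (s : Set ℕ) := by
          rw [show (fun i => s.orderEmbOfFin hs (τ i)) = (s.orderEmbOfFin hs) ∘ τ from rfl,
            τ.surjective.range_comp, Finset.range_orderEmbOfFin]
        have h2 : Set.range (fun i => s'.orderEmbOfFin hs' (τ' i)) = (s' : Set ℕ) := by
          rw [show (fun i => s'.orderEmbOfFin hs' (τ' i)) = (s'.orderEmbOfFin hs') ∘ τ' from rfl,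
            τ'.surjective.range_comp, Finset.range_orderEmbOfFin]
        exact_mod_cast Finset.coe_injective (h1 ▸ h2 ▸ congrArg Set.range hfun)
      subst hss'
      have hττ' : τ = τ' := by
        refine Equiv.ext fun i => ?_
        exact (s.orderEmbOfFin hs).injective (congrFun hfun i)
      subst hττ'
      rfl
    · rintro ⟨f, hf⟩
      set s : Finset ℕ := Finset.image f Finset.univ with hsdef
      have hs : s.card = N := by
        rw [hsdef, Finset.card_image_of_injective _ hf, Finset.card_univ, Fintype.card_fin]
      have hmem : ∀ i, f i ∈ s := fun i => Finset.mem_image_of_mem f (Finset.mem_univ i)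
      have hginj : Function.Injective (fun i => (⟨f i, hmem i⟩ : {x // x ∈ s})) := by
        intro a b hab
        exact hf (congrArg Subtype.val hab)
      have hgbij : Function.Bijective (fun i => (⟨f i, hmem i⟩ : {x // x ∈ s})) := by
        rw [Fintype.bijective_iff_injective_and_card]
        exact ⟨hginj, by simp [hs]⟩
      let g : Fin N ≃ {x // x ∈ s} := Equiv.ofBijective _ hgbij
      let oi := s.orderIsoOfFin hs
      refine ⟨⟨⟨s, hs⟩, g.trans oi.toEquiv.symm⟩, ?_⟩
      refine Subtype.ext ?_
      funext i
      show s.orderEmbOfFin hs (oi.toEquiv.symm (g i)) = f i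
      have : s.orderEmbOfFin hs (oi.toEquiv.symm (g i)) = (oi (oi.toEquiv.symm (g i)) : ℕ) := by
        rw [← Finset.coe_orderIsoOfFin_apply]
      rw [this]
      simp [g]
  let E := Equiv.ofBijective Φ hbij
  have htrans : ∀ p : {s : Finset ℕ // s.card = N} × Equiv.Perm (Fin N),
      (∏ i, σ ((Φ p).1 i)) = ∏ t ∈ (p.1 : Finset ℕ), σ t := by
    rintro ⟨⟨s, hs⟩, τ⟩
    show (∏ i, σ (s.orderEmbOfFin hs (τ i))) = ∏ t ∈ s, σ t
    rw [Equiv.prod_comp τ (fun i => σ (s.orderEmbOfFin hs i))]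
    refine Finset.prod_nbij (s.orderEmbOfFin hs) (fun i _ => s.orderEmbOfFin_mem hs i)
      (fun a _ b _ hab => (s.orderEmbOfFin hs).injective hab) ?_ (fun _ _ => rfl)
    · intro t ht
      have : t ∈ Set.range (s.orderEmbOfFin hs) := by
        rw [Finset.range_orderEmbOfFin]
        exact_mod_cast ht
      obtain ⟨i, hi⟩ := this
      exact ⟨i, by simp, hi⟩
  have hsub : Summable (fun f : {f : Fin N → ℕ // Function.Injective f} => ∏ i, σ (f.1 i)) :=
    hPsum.subtype {f : Fin N → ℕ | Function.Injective f}
  have hEsum : Summable (fun p : {s : Finset ℕ // s.card = N} × Equiv.Perm (Fin N) =>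
      ∏ t ∈ (p.1 : Finset ℕ), σ t) := by
    have := E.summable_iff.mpr hsub
    refine (summable_congr ?_).mp this
    intro p
    exact htrans p
  constructor
  · have := hEsum.comp_injective
      (i := fun T : {s : Finset ℕ // s.card = N} => (T, (1 : Equiv.Perm (Fin N))))
      (fun a b hab => (Prod.ext_iff.mp hab).1)
    exact this
  · calc ∑' f : {f : Fin N → ℕ // Function.Injective f}, ∏ i, σ (f.1 i)
        = ∑' p, ∏ t ∈ ((p : {s : Finset ℕ // s.card = N} × Equiv.Perm (Fin N)).1 : Finset ℕ),
            σ t := by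
          rw [← E.tsum_eq]
          exact tsum_congr fun p => htrans p
      _ = ∑' T : {s : Finset ℕ // s.card = N}, ∑' τ : Equiv.Perm (Fin N),
            ∏ t ∈ (T : Finset ℕ), σ t := by
          rw [Summable.tsum_prod' hEsum (fun T => Summable.of_finite)]
      _ = (N.factorial : ℝ) * ∑' T : {s : Finset ℕ // s.card = N}, ∏ t ∈ (T : Finset ℕ), σ t := by
          rw [← tsum_mul_left]
          refine tsum_congr fun T => ?_
          rw [tsum_fintype, Finset.sum_const, Finset.card_univ, Fintype.card_perm,
            Fintype.card_fin, nsmul_eq_mul]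

/-- For an orthonormal family `(e_m)` in `L²(dω)`, nonnegative summable
`(σ_m)` and `k(x,y) = ∑_m σ_m e_m(x) e_m(y)` (pointwise absolutely convergent),
`(1/N!) ∫_{X^N} det (k(x_i,x_j))_{i,j} dω^N = ∑_{T ⊂ ℕ*, |T|=N} ∏_{t∈T} σ_t`,
and the right-hand sum is finite. Indices are 0-based. -/
theorem stmt7 {X : Type*} [MeasurableSpace X] (ω : Measure X) [IsProbabilityMeasure ω]
    (e : ℕ → X → ℝ) (he_meas : ∀ m, Measurable (e m))
    (he_on : ∀ m n : ℕ, ∫ z, e m z * e n z ∂ω = if m = n then 1 else 0)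
    (σ : ℕ → ℝ) (hσ : ∀ m, 0 ≤ σ m) (hσsum : Summable σ)
    (hdiag : ∀ z : X, Summable fun m => σ m * (e m z) ^ 2)
    (habs : ∀ z w : X, Summable fun m => |σ m * e m z * e m w|)
    (k : X → X → ℝ) (hk : ∀ z w, k z w = ∑' m, σ m * e m z * e m w)
    (N : ℕ) (hN : 1 ≤ N) :
    Summable (fun T : {s : Finset ℕ // s.card = N} => ∏ t ∈ (T : Finset ℕ), σ t) ∧
    (1 / (N.factorial : ℝ)) *
        ∫ x : Fin N → X, (Matrix.of fun i j : Fin N => k (x i) (x j)).det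
          ∂(Measure.pi fun _ : Fin N => ω)
      = ∑' T : {s : Finset ℕ // s.card = N}, ∏ t ∈ (T : Finset ℕ), σ t := by
  classical
  letI : MeasureSpace X := ⟨ω⟩
  have hvol : (volume : Measure X) = ω := rfl
  haveI : IsProbabilityMeasure (volume : Measure X) := by rw [hvol]; infer_instance
  -- Integrability of products of the orthonormal family
  have hsq : ∀ m, Integrable (fun z => e m z * e m z) ω := by
    intro m
    by_contra h
    have h1 := he_on m m
    rw [if_pos rfl, integral_undef h] at h1
    norm_num at h1
  have hptbd : ∀ (m n : ℕ) (z : X),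
      |e m z * e n z| ≤ (e m z * e m z + e n z * e n z) / 2 := by
    intro m n z
    rw [abs_mul]
    nlinarith [sq_nonneg (|e m z| - |e n z|), abs_mul_abs_self (e m z),
      abs_mul_abs_self (e n z), abs_nonneg (e m z), abs_nonneg (e n z)]
  have hmul : ∀ m n, Integrable (fun z => e m z * e n z) ω := by
    intro m n
    refine Integrable.mono' (((hsq m).add (hsq n)).div_const 2)
      (((he_meas m).mul (he_meas n)).aestronglyMeasurable) ?_
    exact Filter.Eventually.of_forall fun z => by
      rw [Real.norm_eq_abs]; exact hptbd m n z
  have habs_le : ∀ m n, ∫ z, |e m z * e n z| ∂ω ≤ 1 := by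
    intro m n
    calc ∫ z, |e m z * e n z| ∂ω
        ≤ ∫ z, (e m z * e m z + e n z * e n z) / 2 ∂ω :=
          integral_mono ((hmul m n).abs) (((hsq m).add (hsq n)).div_const 2)
            (fun z => hptbd m n z)
      _ = 1 := by
          rw [integral_div, integral_add (hsq m) (hsq n), he_on m m, he_on n n]
          norm_num
  -- summability of products of σ
  have hσn : Summable fun m => ‖σ m‖ := by
    simpa [Real.norm_eq_abs, abs_of_nonneg (hσ _)] using hσsum
  have hP : Summable (fun f : Fin N → ℕ => ∏ i, σ (f i)) :=
    ((aux_prod_tsum N (fun _ => σ) (fun _ => hσn)).1).of_norm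
  have hP0 : ∀ f : Fin N → ℕ, (0:ℝ) ≤ ∏ i, σ (f i) :=
    fun f => Finset.prod_nonneg fun i _ => hσ _
  have hsgn : ∀ π : Equiv.Perm (Fin N), ‖((Equiv.Perm.sign π : ℤ) : ℝ)‖ = 1 := by
    intro π
    rcases Int.units_eq_one_or (Equiv.Perm.sign π) with h | h <;> simp [h]
  -- the expansion functions
  have hGet : ∀ (π : Equiv.Perm (Fin N)) (f : Fin N → ℕ) (x : Fin N → X),
      (∏ i, (σ (f i) * e (f i) (x (π i)) * e (f i) (x i)))
        = (∏ i, σ (f i)) * ∏ i, (e (f (π⁻¹ i)) (x i) * e (f i) (x i)) := by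
    intro π f x
    calc (∏ i, (σ (f i) * e (f i) (x (π i)) * e (f i) (x i)))
        = (∏ i, σ (f i)) * (∏ i, e (f i) (x (π i))) * (∏ i, e (f i) (x i)) := by
          rw [Finset.prod_mul_distrib, Finset.prod_mul_distrib]
      _ = (∏ i, σ (f i)) * (∏ i, e (f (π⁻¹ i)) (x i)) * (∏ i, e (f i) (x i)) := by
          have := Equiv.prod_comp π (fun i => e (f (π⁻¹ i)) (x i))
          simp only [show ∀ j, π⁻¹ (π j) = j from fun j => π.symm_apply_apply j] at this
          rw [this]
      _ = (∏ i, σ (f i)) * ∏ i, (e (f (π⁻¹ i)) (x i) * e (f i) (x i)) := by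
          rw [Finset.prod_mul_distrib]; ring
  have hgnorm : ∀ (π : Equiv.Perm (Fin N)) (x : Fin N → X) (i : Fin N),
      Summable fun m => ‖σ m * e m (x (π i)) * e m (x i)‖ := by
    intro π x i
    simpa only [Real.norm_eq_abs] using habs (x (π i)) (x i)
  have hknorm : ∀ (π : Equiv.Perm (Fin N)) (x : Fin N → X),
      Summable fun f : Fin N → ℕ =>
        ‖(∏ i, σ (f i)) * ∏ i, (e (f (π⁻¹ i)) (x i) * e (f i) (x i))‖ := by
    intro π x
    have h1 := (aux_prod_tsum N (fun i m => σ m * e m (x (π i)) * e m (x i))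
      (fun i => hgnorm π x i)).1
    refine (summable_congr ?_).mp h1
    intro f
    rw [hGet π f x]
  have hkprod : ∀ (π : Equiv.Perm (Fin N)) (x : Fin N → X),
      (∏ i, k (x (π i)) (x i))
        = ∑' f : Fin N → ℕ,
            (∏ i, σ (f i)) * ∏ i, (e (f (π⁻¹ i)) (x i) * e (f i) (x i)) := by
    intro π x
    have h2 := (aux_prod_tsum N (fun i m => σ m * e m (x (π i)) * e m (x i))
      (fun i => hgnorm π x i)).2
    calc (∏ i, k (x (π i)) (x i))
        = ∏ i, ∑' m, σ m * e m (x (π i)) * e m (x i) :=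
          Finset.prod_congr rfl fun i _ => hk _ _
      _ = ∑' f : Fin N → ℕ, ∏ i, (σ (f i) * e (f i) (x (π i)) * e (f i) (x i)) := h2
      _ = _ := tsum_congr fun f => hGet π f x
  -- integrability over the product space
  have hGint : ∀ (π : Equiv.Perm (Fin N)) (f : Fin N → ℕ),
      Integrable (fun x : Fin N → X =>
        (∏ i, σ (f i)) * ∏ i, (e (f (π⁻¹ i)) (x i) * e (f i) (x i)))
        (Measure.pi fun _ : Fin N => ω) := by
    intro π f
    have h1 : Integrable (fun x : Fin N → X =>
        ∏ i, (fun i (z : X) => e (f (π⁻¹ i)) z * e (f i) z) i (x i)) volume :=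
      Integrable.fintype_prod (fun i => hmul _ _)
    exact h1.const_mul _
  have hGintegral : ∀ (π : Equiv.Perm (Fin N)) (f : Fin N → ℕ),
      ∫ x : Fin N → X, (∏ i, σ (f i)) * ∏ i, (e (f (π⁻¹ i)) (x i) * e (f i) (x i))
          ∂(Measure.pi fun _ : Fin N => ω)
        = (∏ i, σ (f i)) * ∏ i, (if f (π⁻¹ i) = f i then (1:ℝ) else 0) := by
    intro π f
    rw [MeasureTheory.integral_const_mul]
    congr 1
    have h1 := MeasureTheory.integral_fintype_prod_eq_prod (𝕜 := ℝ) (ι := Fin N) (μ := fun _ => volume)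
      (fun i (z : X) => e (f (π⁻¹ i)) z * e (f i) z)
    rw [show (∫ x : Fin N → X, ∏ i, (e (f (π⁻¹ i)) (x i) * e (f i) (x i))
          ∂(Measure.pi fun _ : Fin N => ω))
        = ∫ x : Fin N → X, ∏ i, (fun i (z : X) => e (f (π⁻¹ i)) z * e (f i) z) i (x i) from rfl]
    beta_reduce
    rw [MeasureTheory.volume_pi, h1]
    exact Finset.prod_congr rfl fun i _ => he_on _ _
  have hGnormint : ∀ (π : Equiv.Perm (Fin N)) (f : Fin N → ℕ),
      ∫ x : Fin N → X, ‖(∏ i, σ (f i)) * ∏ i, (e (f (π⁻¹ i)) (x i) * e (f i) (x i))‖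
          ∂(Measure.pi fun _ : Fin N => ω)
        ≤ ∏ i, σ (f i) := by
    intro π f
    have heq : (fun x : Fin N → X =>
        ‖(∏ i, σ (f i)) * ∏ i, (e (f (π⁻¹ i)) (x i) * e (f i) (x i))‖)
        = fun x => (∏ i, σ (f i)) * ∏ i, |e (f (π⁻¹ i)) (x i) * e (f i) (x i)| := by
      funext x
      rw [Real.norm_eq_abs, abs_mul, abs_of_nonneg (hP0 f), Finset.abs_prod]
    rw [heq, MeasureTheory.integral_const_mul]
    have h1 := MeasureTheory.integral_fintype_prod_eq_prod (𝕜 := ℝ) (ι := Fin N) (μ := fun _ => volume)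
      (fun i (z : X) => |e (f (π⁻¹ i)) z * e (f i) z|)
    rw [show (∫ x : Fin N → X, ∏ i, |e (f (π⁻¹ i)) (x i) * e (f i) (x i)|
          ∂(Measure.pi fun _ : Fin N => ω))
        = ∫ x : Fin N → X, ∏ i, (fun i (z : X) => |e (f (π⁻¹ i)) z * e (f i) z|) i (x i) from rfl]
    beta_reduce
    rw [MeasureTheory.volume_pi, h1]
    have hle1 : (∏ i, ∫ z, |e (f (π⁻¹ i)) z * e (f i) z| ∂ω) ≤ 1 :=
      Finset.prod_le_one (fun i _ => integral_nonneg fun z => abs_nonneg _)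
        (fun i _ => habs_le _ _)
    calc (∏ i, σ (f i)) * ∏ i, ∫ z, |e (f (π⁻¹ i)) z * e (f i) z| ∂ω
        ≤ (∏ i, σ (f i)) * 1 := mul_le_mul_of_nonneg_left hle1 (hP0 f)
      _ = ∏ i, σ (f i) := mul_one _
  -- bounds on the delta products
  have hD0 : ∀ (π : Equiv.Perm (Fin N)) (f : Fin N → ℕ),
      (0:ℝ) ≤ ∏ i, (if f (π⁻¹ i) = f i then (1:ℝ) else 0) :=
    fun π f => Finset.prod_nonneg fun i _ => by split_ifs <;> norm_num
  have hD1 : ∀ (π : Equiv.Perm (Fin N)) (f : Fin N → ℕ),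
      (∏ i, (if f (π⁻¹ i) = f i then (1:ℝ) else 0)) ≤ 1 :=
    fun π f => Finset.prod_le_one (fun i _ => by split_ifs <;> norm_num)
      (fun i _ => by split_ifs <;> norm_num)
  have hPsum2 : Summable (fun p : Equiv.Perm (Fin N) × (Fin N → ℕ) => ∏ i, σ (p.2 i)) := by
    refine (summable_prod_of_nonneg ?_).mpr ⟨fun π => hP, Summable.of_finite⟩
    intro p
    exact hP0 p.2
  -- pointwise summability of the full expansion
  have hsumFx : ∀ x : Fin N → X, Summable (fun p : Equiv.Perm (Fin N) × (Fin N → ℕ) =>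
      ((Equiv.Perm.sign p.1 : ℤ) : ℝ) *
        ((∏ i, σ (p.2 i)) * ∏ i, (e (p.2 (p.1⁻¹ i)) (x i) * e (p.2 i) (x i)))) := by
    intro x
    apply Summable.of_norm
    have hb : Summable (fun p : Equiv.Perm (Fin N) × (Fin N → ℕ) =>
        ‖(∏ i, σ (p.2 i)) * ∏ i, (e (p.2 (p.1⁻¹ i)) (x i) * e (p.2 i) (x i))‖) := by
      refine (summable_prod_of_nonneg ?_).mpr ⟨fun π => hknorm π x, Summable.of_finite⟩
      intro p
      exact norm_nonneg _
    refine (summable_congr ?_).mpr hb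
    intro p
    rw [norm_mul, hsgn p.1, one_mul]
  have hslicesum : ∀ (x : Fin N → X) (π : Equiv.Perm (Fin N)),
      Summable (fun f : Fin N → ℕ => ((Equiv.Perm.sign π : ℤ) : ℝ) *
        ((∏ i, σ (f i)) * ∏ i, (e (f (π⁻¹ i)) (x i) * e (f i) (x i)))) := by
    intro x π
    have h1 := (hknorm π x).of_norm
    have h2 := h1.mul_left (((Equiv.Perm.sign π : ℤ) : ℝ))
    exact h2
  -- pointwise identity for the determinant
  have hpt : ∀ x : Fin N → X, (Matrix.of fun i j : Fin N => k (x i) (x j)).det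
      = ∑' p : Equiv.Perm (Fin N) × (Fin N → ℕ),
          ((Equiv.Perm.sign p.1 : ℤ) : ℝ) *
            ((∏ i, σ (p.2 i)) * ∏ i, (e (p.2 (p.1⁻¹ i)) (x i) * e (p.2 i) (x i))) := by
    intro x
    rw [Summable.tsum_prod' (hsumFx x) (fun π => hslicesum x π),
      tsum_fintype, Matrix.det_apply']
    refine Finset.sum_congr rfl fun π _ => ?_
    have hM : (∏ i, (Matrix.of fun i j : Fin N => k (x i) (x j)) (π i) i)
        = ∏ i, k (x (π i)) (x i) := rfl
    rw [hM, hkprod π x, ← tsum_mul_left]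
  -- integrability of each term
  have hFint : ∀ p : Equiv.Perm (Fin N) × (Fin N → ℕ),
      Integrable (fun x : Fin N → X =>
        ((Equiv.Perm.sign p.1 : ℤ) : ℝ) *
          ((∏ i, σ (p.2 i)) * ∏ i, (e (p.2 (p.1⁻¹ i)) (x i) * e (p.2 i) (x i))))
        (Measure.pi fun _ : Fin N => ω) :=
    fun p => (hGint p.1 p.2).const_mul _
  have hFnorm : ∀ p : Equiv.Perm (Fin N) × (Fin N → ℕ),
      (∫ x : Fin N → X, ‖((Equiv.Perm.sign p.1 : ℤ) : ℝ) *
          ((∏ i, σ (p.2 i)) * ∏ i, (e (p.2 (p.1⁻¹ i)) (x i) * e (p.2 i) (x i)))‖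
        ∂(Measure.pi fun _ : Fin N => ω)) ≤ ∏ i, σ (p.2 i) := by
    intro p
    have heq : (fun x : Fin N → X => ‖((Equiv.Perm.sign p.1 : ℤ) : ℝ) *
          ((∏ i, σ (p.2 i)) * ∏ i, (e (p.2 (p.1⁻¹ i)) (x i) * e (p.2 i) (x i)))‖)
        = fun x : Fin N → X =>
          ‖(∏ i, σ (p.2 i)) * ∏ i, (e (p.2 (p.1⁻¹ i)) (x i) * e (p.2 i) (x i))‖ := by
      funext x
      rw [norm_mul, hsgn p.1, one_mul]
    rw [heq]
    exact hGnormint p.1 p.2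
  have hFnormsum : Summable (fun p : Equiv.Perm (Fin N) × (Fin N → ℕ) =>
      ∫ x : Fin N → X, ‖((Equiv.Perm.sign p.1 : ℤ) : ℝ) *
          ((∏ i, σ (p.2 i)) * ∏ i, (e (p.2 (p.1⁻¹ i)) (x i) * e (p.2 i) (x i)))‖
        ∂(Measure.pi fun _ : Fin N => ω)) :=
    Summable.of_nonneg_of_le (fun p => integral_nonneg fun x => norm_nonneg _)
      (fun p => hFnorm p) hPsum2
  have hswap := integral_tsum_of_summable_integral_norm hFint hFnormsum
  -- value of each term's integral
  have hFval : ∀ p : Equiv.Perm (Fin N) × (Fin N → ℕ),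
      (∫ x : Fin N → X, ((Equiv.Perm.sign p.1 : ℤ) : ℝ) *
          ((∏ i, σ (p.2 i)) * ∏ i, (e (p.2 (p.1⁻¹ i)) (x i) * e (p.2 i) (x i)))
        ∂(Measure.pi fun _ : Fin N => ω))
      = ((Equiv.Perm.sign p.1 : ℤ) : ℝ) *
          ((∏ i, σ (p.2 i)) * ∏ i, (if p.2 (p.1⁻¹ i) = p.2 i then (1:ℝ) else 0)) := by
    intro p
    rw [MeasureTheory.integral_const_mul, hGintegral p.1 p.2]
  have hQsum : ∀ π : Equiv.Perm (Fin N), Summable (fun f : Fin N → ℕ =>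
      ((Equiv.Perm.sign π : ℤ) : ℝ) *
        ((∏ i, σ (f i)) * ∏ i, (if f (π⁻¹ i) = f i then (1:ℝ) else 0))) := by
    intro π
    apply Summable.of_norm
    refine Summable.of_nonneg_of_le (fun f => norm_nonneg _) ?_ hP
    intro f
    rw [norm_mul, hsgn π, one_mul, Real.norm_eq_abs, abs_mul, abs_of_nonneg (hP0 f),
      abs_of_nonneg (hD0 π f)]
    calc (∏ i, σ (f i)) * ∏ i, (if f (π⁻¹ i) = f i then (1:ℝ) else 0)
        ≤ (∏ i, σ (f i)) * 1 := mul_le_mul_of_nonneg_left (hD1 π f) (hP0 f)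
      _ = ∏ i, σ (f i) := mul_one _
  have hQsum2 : Summable (fun p : Equiv.Perm (Fin N) × (Fin N → ℕ) =>
      ∫ x : Fin N → X, ((Equiv.Perm.sign p.1 : ℤ) : ℝ) *
          ((∏ i, σ (p.2 i)) * ∏ i, (e (p.2 (p.1⁻¹ i)) (x i) * e (p.2 i) (x i)))
        ∂(Measure.pi fun _ : Fin N => ω)) := by
    apply Summable.of_norm
    refine Summable.of_nonneg_of_le (fun p => norm_nonneg _) ?_ hPsum2
    intro p
    exact le_trans (norm_integral_le_integral_norm _) (hFnorm p)
  obtain ⟨hsummT, hval⟩ := aux_inj_equiv σ N hP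
  refine ⟨hsummT, ?_⟩
  have hdet : (∫ x : Fin N → X, (Matrix.of fun i j : Fin N => k (x i) (x j)).det
      ∂(Measure.pi fun _ : Fin N => ω))
      = (N.factorial : ℝ) * ∑' T : {s : Finset ℕ // s.card = N}, ∏ t ∈ (T : Finset ℕ), σ t := by
    calc (∫ x : Fin N → X, (Matrix.of fun i j : Fin N => k (x i) (x j)).det
        ∂(Measure.pi fun _ : Fin N => ω))
        = ∫ x : Fin N → X, (∑' p : Equiv.Perm (Fin N) × (Fin N → ℕ),
            ((Equiv.Perm.sign p.1 : ℤ) : ℝ) *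
              ((∏ i, σ (p.2 i)) * ∏ i, (e (p.2 (p.1⁻¹ i)) (x i) * e (p.2 i) (x i))))
            ∂(Measure.pi fun _ : Fin N => ω) := by
          exact integral_congr_ae (Filter.Eventually.of_forall fun x => hpt x)
      _ = ∑' p : Equiv.Perm (Fin N) × (Fin N → ℕ),
            ∫ x : Fin N → X, ((Equiv.Perm.sign p.1 : ℤ) : ℝ) *
              ((∏ i, σ (p.2 i)) * ∏ i, (e (p.2 (p.1⁻¹ i)) (x i) * e (p.2 i) (x i)))
            ∂(Measure.pi fun _ : Fin N => ω) := hswap.symm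
      _ = ∑' π : Equiv.Perm (Fin N), ∑' f : Fin N → ℕ,
            ∫ x : Fin N → X, ((Equiv.Perm.sign π : ℤ) : ℝ) *
              ((∏ i, σ (f i)) * ∏ i, (e (f (π⁻¹ i)) (x i) * e (f i) (x i)))
            ∂(Measure.pi fun _ : Fin N => ω) := by
          exact Summable.tsum_prod' hQsum2 (fun π => by
            refine (summable_congr ?_).mpr (hQsum π)
            intro f
            exact hFval (π, f))
      _ = ∑ π : Equiv.Perm (Fin N), ∑' f : Fin N → ℕ,
            ((Equiv.Perm.sign π : ℤ) : ℝ) *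
              ((∏ i, σ (f i)) * ∏ i, (if f (π⁻¹ i) = f i then (1:ℝ) else 0)) := by
          rw [tsum_fintype]
          exact Finset.sum_congr rfl fun π _ => tsum_congr fun f => hFval (π, f)
      _ = ∑' f : Fin N → ℕ, ∑ π : Equiv.Perm (Fin N),
            ((Equiv.Perm.sign π : ℤ) : ℝ) *
              ((∏ i, σ (f i)) * ∏ i, (if f (π⁻¹ i) = f i then (1:ℝ) else 0)) :=
          (Summable.tsum_finsetSum (fun π _ => hQsum π)).symm
      _ = ∑' f : Fin N → ℕ, (∏ i, σ (f i)) *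
            (if Function.Injective f then (1:ℝ) else 0) := by
          refine tsum_congr fun f => ?_
          rw [← aux_sign_sum f, Finset.mul_sum]
          exact Finset.sum_congr rfl fun π _ => by ring
      _ = ∑' f : {f : Fin N → ℕ // Function.Injective f}, ∏ i, σ (f.1 i) := by
          have hts := tsum_subtype {f : Fin N → ℕ | Function.Injective f}
            (fun f => ∏ i, σ (f i))
          have h2 : (∑' f : Fin N → ℕ, (∏ i, σ (f i)) *
              (if Function.Injective f then (1:ℝ) else 0))
              = ∑' f : Fin N → ℕ, Set.indicator {f : Fin N → ℕ | Function.Injective f}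
                  (fun f => ∏ i, σ (f i)) f := by
            refine tsum_congr fun f => ?_
            rw [Set.indicator_apply]
            by_cases h : Function.Injective f
            · simp [h, Set.mem_setOf_eq]
            · simp [h, Set.mem_setOf_eq]
          rw [h2]
          exact hts.symm
      _ = (N.factorial : ℝ) * ∑' T : {s : Finset ℕ // s.card = N},
            ∏ t ∈ (T : Finset ℕ), σ t := hval
  rw [hdet]
  have hfac : (N.factorial : ℝ) ≠ 0 := Nat.cast_ne_zero.mpr N.factorial_ne_zero
  field_simp
end

section
/- Let x = (x_1,…,x_N) ∈ X^N with det E(x) ≠ 0, so that both K(x) and K̃(x) are invertible. Then for every n ∈ [N], σ_n ( 1 − σ_n u_nᵀ K(x)^{-1} u_n ) ≤ σ_1 ( 1 − σ_1 u_nᵀ K̃(x)^{-1} u_n ), where u_m := (e_m(x_j))_{j∈[N]} ∈ ℝ^N. Equivalently, σ_n ‖Π_{T(x)^⊥} e_n^F‖_F² ≤ σ_1 ‖Π_{T̃(x)^⊥} e_n^{F̃}‖_{F̃}², where F̃ is the RKHS of k̃, e_n^{F̃} = √σ_1 e_n for n ≤ N, and T̃(x) = span{k̃(x_j,·)}. 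-/
open scoped BigOperators Matrix


lemma aux_prod_summable (σ : ℕ → ℝ) (hσ : ∀ m, 0 ≤ σ m) (f g : ℕ → ℝ)
    (hf : Summable fun m => σ m * f m ^ 2) (hg : Summable fun m => σ m * g m ^ 2) :
    Summable fun m => σ m * f m * g m := by
  apply Summable.of_abs
  refine Summable.of_nonneg_of_le (fun m => abs_nonneg _) (fun m => ?_)
    (((hf.add hg).mul_left (1/2)))
  have h1 : |σ m * f m * g m| = σ m * |f m * g m| := by
    rw [mul_assoc, abs_mul, abs_of_nonneg (hσ m)]
  rw [h1, abs_mul]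
  nlinarith [sq_abs (f m), sq_abs (g m), sq_nonneg (|f m| - |g m|), abs_nonneg (f m),
    abs_nonneg (g m), hσ m, mul_le_mul_of_nonneg_left (sq_nonneg (|f m| - |g m|)) (hσ m)]

lemma aux_sq_summable {N : ℕ} (σ : ℕ → ℝ) (hσ : ∀ m, 0 ≤ σ m) (a : ℕ → Fin N → ℝ)
    (ha : ∀ j, Summable fun m => σ m * (a m j) ^ 2) (w : Fin N → ℝ) :
    Summable fun m => σ m * (∑ j, a m j * w j) ^ 2 := by
  have hexp : ∀ m, σ m * (∑ j, a m j * w j) ^ 2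
      = ∑ i, ∑ j, (σ m * a m i * a m j) * (w i * w j) := by
    intro m
    rw [sq, Finset.sum_mul_sum, Finset.mul_sum]
    refine Finset.sum_congr rfl fun i _ => ?_
    rw [Finset.mul_sum]
    exact Finset.sum_congr rfl fun j _ => by ring
  simp only [hexp]
  exact summable_sum fun i _ => summable_sum fun j _ =>
    (aux_prod_summable σ hσ _ _ (ha i) (ha j)).mul_right _

lemma aux_quad_eq {N : ℕ} (σ : ℕ → ℝ) (hσ : ∀ m, 0 ≤ σ m) (a : ℕ → Fin N → ℝ)
    (ha : ∀ j, Summable fun m => σ m * (a m j) ^ 2) (w : Fin N → ℝ) :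
    w ⬝ᵥ (Matrix.of fun i j : Fin N => ∑' m : ℕ, σ m * a m i * a m j).mulVec w
      = ∑' m : ℕ, σ m * (∑ j, a m j * w j) ^ 2 := by
  have hsum : ∀ i j : Fin N, Summable fun m => (σ m * a m i * a m j) * (w i * w j) :=
    fun i j => (aux_prod_summable σ hσ _ _ (ha i) (ha j)).mul_right _
  have hexp : ∀ m, σ m * (∑ j, a m j * w j) ^ 2
      = ∑ i, ∑ j, (σ m * a m i * a m j) * (w i * w j) := by
    intro m
    rw [sq, Finset.sum_mul_sum, Finset.mul_sum]
    refine Finset.sum_congr rfl fun i _ => ?_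
    rw [Finset.mul_sum]
    exact Finset.sum_congr rfl fun j _ => by ring
  rw [tsum_congr hexp]
  rw [Summable.tsum_finsetSum (fun i _ => summable_sum (fun j _ => hsum i j))]
  simp only [dotProduct, Matrix.mulVec, Matrix.of_apply]
  refine Finset.sum_congr rfl fun i _ => ?_
  rw [Summable.tsum_finsetSum (fun j _ => hsum i j), Finset.mul_sum]
  refine Finset.sum_congr rfl fun j _ => ?_
  rw [← tsum_mul_right, ← tsum_mul_left]
  exact tsum_congr fun m => by ring

lemma fin_quad_eq {N : ℕ} (a : Fin N → Fin N → ℝ) (w : Fin N → ℝ) :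
    w ⬝ᵥ (Matrix.of fun i j : Fin N => ∑ m : Fin N, a m i * a m j).mulVec w
      = ∑ m : Fin N, (∑ j, a m j * w j) ^ 2 := by
  calc w ⬝ᵥ (Matrix.of fun i j : Fin N => ∑ m : Fin N, a m i * a m j).mulVec w
      = ∑ i, ∑ j, ∑ m : Fin N, w i * (a m i * a m j) * w j := by
        simp only [dotProduct, Matrix.mulVec, Matrix.of_apply]
        refine Finset.sum_congr rfl fun i _ => ?_
        rw [Finset.mul_sum]
        refine Finset.sum_congr rfl fun j _ => ?_
        rw [Finset.sum_mul, Finset.mul_sum]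
        exact Finset.sum_congr rfl fun m _ => by ring
    _ = ∑ i, ∑ m : Fin N, ∑ j, w i * (a m i * a m j) * w j :=
        Finset.sum_congr rfl fun i _ => Finset.sum_comm
    _ = ∑ m : Fin N, ∑ i, ∑ j, w i * (a m i * a m j) * w j := Finset.sum_comm
    _ = ∑ m : Fin N, (∑ j, a m j * w j) ^ 2 := by
        refine Finset.sum_congr rfl fun m _ => ?_
        rw [sq, Finset.sum_mul_sum]
        refine Finset.sum_congr rfl fun i _ => ?_
        exact Finset.sum_congr rfl fun j _ => by ring

lemma aux_cross {N : ℕ} (M : Matrix (Fin N) (Fin N) ℝ) (hMs : Mᵀ = M)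
    (hM : IsUnit M.det) (a b : Fin N → ℝ) :
    (M⁻¹.mulVec a) ⬝ᵥ (M.mulVec b) = a ⬝ᵥ b := by
  rw [Matrix.dotProduct_mulVec, ← Matrix.mulVec_transpose, hMs, Matrix.mulVec_mulVec,
    Matrix.mul_nonsing_inv _ hM, Matrix.one_mulVec]


/-- **Proposition 6 of the paper.** With `k̃` the kernel whose first `N`
eigenvalues are capped at `σ_1`, if `det E(x) ≠ 0` then `K(x)` and `K̃(x)` are invertible and
for every `n ∈ [N]`,
`σ_n (1 − σ_n u_nᵀ K(x)⁻¹ u_n) ≤ σ_1 (1 − σ_1 u_nᵀ K̃(x)⁻¹ u_n)`.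
(Indices are 0-based: `σ 0` is the paper's `σ_1`.) -/
theorem stmt9 {X : Type*}
    (e : ℕ → X → ℝ) (σ : ℕ → ℝ)
    (hσpos : ∀ m, 0 < σ m) (hσanti : Antitone σ) (hσsum : Summable σ)
    (hdiag : ∀ z : X, Summable fun m => σ m * (e m z) ^ 2)
    (N : ℕ) (x : Fin N → X)
    (u : ℕ → Fin N → ℝ) (hu : ∀ m, u m = fun j => e m (x j))
    (K : Matrix (Fin N) (Fin N) ℝ)
    (hK : K = Matrix.of fun i j : Fin N => ∑' m : ℕ, σ m * e m (x i) * e m (x j))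
    (Kt : Matrix (Fin N) (Fin N) ℝ)
    (hKt : Kt = Matrix.of fun i j : Fin N =>
      σ 0 * ∑ m : Fin N, e m.val (x i) * e m.val (x j) +
        ∑' m : ℕ, σ (N + m) * e (N + m) (x i) * e (N + m) (x j))
    (hEdet : (Matrix.of fun i j : Fin N => e i.val (x j)).det ≠ 0) :
    IsUnit K ∧ IsUnit Kt ∧
    ∀ n : Fin N,
      σ n.val * (1 - σ n.val * (u n.val ⬝ᵥ K⁻¹.mulVec (u n.val)))
        ≤ σ 0 * (1 - σ 0 * (u n.val ⬝ᵥ Kt⁻¹.mulVec (u n.val))) := by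
  have hσ0 : ∀ m, 0 ≤ σ m := fun m => (hσpos m).le
  set a : ℕ → Fin N → ℝ := fun m j => e m (x j) with ha_def
  have ha : ∀ j, Summable fun m => σ m * (a m j) ^ 2 := fun j => hdiag (x j)
  have haN : ∀ j, Summable fun m => σ (N + m) * (a (N + m) j) ^ 2 := by
    intro j
    have := (summable_nat_add_iff N).2 (ha j)
    exact this.congr fun m => by simp [Nat.add_comm]
  -- quadratic forms
  have hquadK : ∀ w : Fin N → ℝ, w ⬝ᵥ K.mulVec w = ∑' m : ℕ, σ m * (∑ j, a m j * w j) ^ 2 := by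
    intro w; rw [hK]; exact aux_quad_eq σ hσ0 a ha w
  have hKtsplit : Kt = σ 0 • (Matrix.of fun i j : Fin N => ∑ m : Fin N, a m.val i * a m.val j)
      + Matrix.of fun i j : Fin N => ∑' m : ℕ, σ (N + m) * a (N + m) i * a (N + m) j := by
    rw [hKt]; ext i j
    simp [Matrix.smul_apply, Finset.mul_sum, a]
  have hquadKt : ∀ w : Fin N → ℝ, w ⬝ᵥ Kt.mulVec w
      = σ 0 * ∑ m : Fin N, (∑ j, a m.val j * w j) ^ 2
        + ∑' m : ℕ, σ (N + m) * (∑ j, a (N + m) j * w j) ^ 2 := by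
    intro w
    rw [hKtsplit, Matrix.add_mulVec, dotProduct_add, Matrix.smul_mulVec,
      dotProduct_smul, fin_quad_eq, aux_quad_eq (fun m => σ (N + m)) (fun m => hσ0 _)
        (fun m => a (N + m)) haN w]
    simp
  -- positivity
  have hEunit : IsUnit (Matrix.of fun i j : Fin N => e i.val (x j)).det :=
    isUnit_iff_ne_zero.2 hEdet
  have hEx : ∀ w : Fin N → ℝ, w ≠ 0 → ∃ i : Fin N, (∑ j, a i.val j * w j) ≠ 0 := by
    intro w hw
    by_contra h
    push_neg at h
    apply hw
    have hmv : (Matrix.of fun i j : Fin N => e i.val (x j)).mulVec w = 0 := by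
      ext i
      simpa [Matrix.mulVec, dotProduct, a] using h i
    have := Matrix.mulVec_injective_iff_isUnit.2 ((Matrix.isUnit_iff_isUnit_det _).2 hEunit)
    have h0 : (Matrix.of fun i j : Fin N => e i.val (x j)).mulVec 0 = 0 := by
      simp [Matrix.mulVec_zero]
    exact this (hmv.trans h0.symm)
  have hfinpos : ∀ w : Fin N → ℝ, w ≠ 0 →
      0 < ∑ m : Fin N, σ m.val * (∑ j, a m.val j * w j) ^ 2 := by
    intro w hw
    obtain ⟨i, hi⟩ := hEx w hw
    refine Finset.sum_pos' (fun m _ => mul_nonneg (hσ0 _) (sq_nonneg _)) ⟨i, Finset.mem_univ i, ?_⟩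
    have h2 : 0 < (∑ j, a i.val j * w j) ^ 2 :=
      lt_of_le_of_ne (sq_nonneg _) (Ne.symm (pow_ne_zero 2 hi))
    exact mul_pos (hσpos i.val) h2
  have hKherm : K.IsHermitian := by
    rw [hK]; ext i j
    simp only [Matrix.conjTranspose_apply, Matrix.of_apply, star_trivial]
    exact tsum_congr fun m => by ring
  have hKtherm : Kt.IsHermitian := by
    rw [hKt]; ext i j
    simp only [Matrix.conjTranspose_apply, Matrix.of_apply, star_trivial]
    congr 1
    · congr 1
      exact Finset.sum_congr rfl fun m _ => mul_comm _ _
    · exact tsum_congr fun m => by ring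
  have hKpd : K.PosDef := by
    refine Matrix.PosDef.of_dotProduct_mulVec_pos hKherm fun w hw => ?_
    have h1 : star w ⬝ᵥ K.mulVec w = w ⬝ᵥ K.mulVec w := by simp
    rw [h1, hquadK]
    have h2 : ∑ m : Fin N, σ m.val * (∑ j, a m.val j * w j) ^ 2
        ≤ ∑' m : ℕ, σ m * (∑ j, a m j * w j) ^ 2 := by
      rw [Fin.sum_univ_eq_sum_range (fun m => σ m * (∑ j, a m j * w j) ^ 2) N]
      exact Summable.sum_le_tsum _ (fun m _ => mul_nonneg (hσ0 _) (sq_nonneg _)) (aux_sq_summable σ hσ0 a ha w)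
    exact lt_of_lt_of_le (hfinpos w hw) h2
  have hKtpd : Kt.PosDef := by
    refine Matrix.PosDef.of_dotProduct_mulVec_pos hKtherm fun w hw => ?_
    have h1 : star w ⬝ᵥ Kt.mulVec w = w ⬝ᵥ Kt.mulVec w := by simp
    rw [h1, hquadKt]
    have htail : (0:ℝ) ≤ ∑' m : ℕ, σ (N + m) * (∑ j, a (N + m) j * w j) ^ 2 :=
      tsum_nonneg fun m => mul_nonneg (hσ0 _) (sq_nonneg _)
    have hmain : 0 < σ 0 * ∑ m : Fin N, (∑ j, a m.val j * w j) ^ 2 := by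
      obtain ⟨i, hi⟩ := hEx w hw
      have : 0 < ∑ m : Fin N, (∑ j, a m.val j * w j) ^ 2 := by
        exact Finset.sum_pos' (fun m _ => sq_nonneg _)
          ⟨i, Finset.mem_univ i, lt_of_le_of_ne (sq_nonneg _) (Ne.symm (pow_ne_zero 2 hi))⟩
      exact mul_pos (hσpos 0) this
    linarith
  have hKunit : IsUnit K := hKpd.isUnit
  have hKtunit : IsUnit Kt := hKtpd.isUnit
  have hKdet : IsUnit K.det := (Matrix.isUnit_iff_isUnit_det _).1 hKunit
  have hKtdet : IsUnit Kt.det := (Matrix.isUnit_iff_isUnit_det _).1 hKtunit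
  have hKsymm : Kᵀ = K := hKherm
  have hKtsymm : Ktᵀ = Kt := hKtherm
  have hKinvsymm : K⁻¹ᵀ = K⁻¹ := by rw [Matrix.transpose_nonsing_inv, hKsymm]
  have hKtinvsymm : Kt⁻¹ᵀ = Kt⁻¹ := by rw [Matrix.transpose_nonsing_inv, hKtsymm]
  refine ⟨hKunit, hKtunit, fun n => ?_⟩
  set un : Fin N → ℝ := u n.val with hun_def
  have hun : un = a n.val := by rw [hun_def, hu]
  set w : Fin N → ℝ := (-(σ 0)) • Kt⁻¹.mulVec un with hw_def
  set T : ℕ → ℝ := fun m => ∑ j, a m j * w j with hT_def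
  have hdT : ∀ m : ℕ, a m ⬝ᵥ w = T m := by
    intro m; simp [dotProduct, hT_def]
  have hunw : un ⬝ᵥ w = T n.val := by rw [hun, hdT]
  -- Step A : value of the tilde quadratic at w
  have hKtKtinv : ∀ b : Fin N → ℝ, Kt.mulVec (Kt⁻¹.mulVec b) = b := fun b => by
    rw [Matrix.mulVec_mulVec, Matrix.mul_nonsing_inv _ hKtdet, Matrix.one_mulVec]
  have hKKinv : ∀ b : Fin N → ℝ, K.mulVec (K⁻¹.mulVec b) = b := fun b => by
    rw [Matrix.mulVec_mulVec, Matrix.mul_nonsing_inv _ hKdet, Matrix.one_mulVec]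
  have hKtw : Kt.mulVec w = (-(σ 0)) • un := by
    rw [hw_def, Matrix.mulVec_smul, hKtKtinv]
  have hstepA : σ 0 + 2 * σ 0 * (un ⬝ᵥ w) + w ⬝ᵥ Kt.mulVec w
      = σ 0 * (1 - σ 0 * (un ⬝ᵥ Kt⁻¹.mulVec un)) := by
    rw [hKtw, hw_def, smul_dotProduct, dotProduct_smul,
      dotProduct_smul, dotProduct_comm (Kt⁻¹.mulVec un) un]
    simp only [smul_eq_mul]
    ring
  -- Step B : lower bound for the K-quadratic at w
  have hstepB : σ n.val * (1 - σ n.val * (un ⬝ᵥ K⁻¹.mulVec un))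
      ≤ σ n.val + 2 * σ n.val * (un ⬝ᵥ w) + w ⬝ᵥ K.mulVec w := by
    set v : Fin N → ℝ := w + σ n.val • K⁻¹.mulVec un with hv_def
    have hKv : K.mulVec v = K.mulVec w + σ n.val • un := by
      simp only [hv_def, Matrix.mulVec_add, Matrix.mulVec_smul, hKKinv]
    have hpos : 0 ≤ v ⬝ᵥ K.mulVec v := by
      have := hKpd.posSemidef.dotProduct_mulVec_nonneg v
      simpa using this
    have hexp : v ⬝ᵥ K.mulVec v = w ⬝ᵥ K.mulVec w + 2 * σ n.val * (un ⬝ᵥ w)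
        + σ n.val ^ 2 * (un ⬝ᵥ K⁻¹.mulVec un) := by
      rw [hKv, hv_def]
      simp only [add_dotProduct, dotProduct_add, smul_dotProduct,
        dotProduct_smul, smul_eq_mul]
      rw [aux_cross K hKsymm hKdet un w, dotProduct_comm (K⁻¹.mulVec un) un,
        dotProduct_comm w un]
      ring
    nlinarith [hpos, hexp]
  -- Step C : comparison of the two quadratics at w
  have hstepC : σ n.val + 2 * σ n.val * (un ⬝ᵥ w) + w ⬝ᵥ K.mulVec w
      ≤ σ 0 + 2 * σ 0 * (un ⬝ᵥ w) + w ⬝ᵥ Kt.mulVec w := by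
    set c : ℕ → ℝ := fun m => if m = n.val then 1 else 0 with hc_def
    set g : ℕ → ℝ := fun m => if m = n.val then σ m * (1 + 2 * T m) else 0 with hg_def
    have hpoint : ∀ m : ℕ, σ m * (c m + T m) ^ 2 = σ m * T m ^ 2 + g m := by
      intro m
      by_cases hm : m = n.val
      · simp only [hc_def, hg_def, if_pos hm]; ring
      · simp [hc_def, hg_def, if_neg hm]
    have hsT : Summable fun m => σ m * T m ^ 2 := aux_sq_summable σ hσ0 a ha w
    have hg : Summable g :=
      summable_of_ne_finset_zero (s := {n.val}) fun b hb => by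
        simp only [Finset.mem_singleton] at hb; simp [hg_def, hb]
    have hsCT : Summable fun m => σ m * (c m + T m) ^ 2 :=
      (hsT.add hg).congr fun m => (hpoint m).symm
    have htsg : ∑' m, g m = σ n.val * (1 + 2 * T n.val) := by
      have h1 : ∑' m, g m = g n.val :=
        tsum_eq_single n.val fun b hb => by simp [hg_def, hb]
      rw [h1, hg_def]
      simp
    have hq_eq : σ n.val + 2 * σ n.val * (un ⬝ᵥ w) + w ⬝ᵥ K.mulVec w
        = ∑' m, σ m * (c m + T m) ^ 2 := by
      rw [tsum_congr hpoint, Summable.tsum_add hsT hg, htsg, hquadK w, hunw]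
      ring
    -- split the tsum at N
    have hsplit : ∑' m, σ m * (c m + T m) ^ 2
        = ∑ m ∈ Finset.range N, σ m * (c m + T m) ^ 2
          + ∑' m, σ (m + N) * (c (m + N) + T (m + N)) ^ 2 :=
      (Summable.sum_add_tsum_nat_add N hsCT).symm
    have hctail : ∀ m : ℕ, σ (m + N) * (c (m + N) + T (m + N)) ^ 2
        = σ (N + m) * T (N + m) ^ 2 := by
      intro m
      rw [Nat.add_comm m N]
      have h1 : N + m ≠ n.val := by omega
      simp [hc_def, h1]
    have hhead : ∑ m ∈ Finset.range N, σ m * (c m + T m) ^ 2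
        ≤ σ 0 * ∑ m ∈ Finset.range N, (c m + T m) ^ 2 := by
      rw [Finset.mul_sum]
      exact Finset.sum_le_sum fun m _ =>
        mul_le_mul_of_nonneg_right (hσanti (Nat.zero_le m)) (sq_nonneg _)
    have hheadval : ∑ m ∈ Finset.range N, (c m + T m) ^ 2
        = ∑ m ∈ Finset.range N, T m ^ 2 + (1 + 2 * T n.val) := by
      have hexp2 : ∀ m ∈ Finset.range N, (c m + T m) ^ 2
          = T m ^ 2 + (if m = n.val then 1 + 2 * T m else 0) := by
        intro m _
        by_cases hm : m = n.val
        · simp only [hc_def, if_pos hm]; ring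
        · simp [hc_def, if_neg hm]
      rw [Finset.sum_congr rfl hexp2, Finset.sum_add_distrib,
        Finset.sum_ite_eq' (Finset.range N) n.val (fun m => 1 + 2 * T m),
        if_pos (Finset.mem_range.2 n.isLt)]
    have hqt_eq : σ 0 + 2 * σ 0 * (un ⬝ᵥ w) + w ⬝ᵥ Kt.mulVec w
        = σ 0 * ∑ m ∈ Finset.range N, (c m + T m) ^ 2
          + ∑' m, σ (N + m) * T (N + m) ^ 2 := by
      rw [hquadKt w, hheadval, hunw]
      have : ∑ m : Fin N, (∑ j, a m.val j * w j) ^ 2 = ∑ m ∈ Finset.range N, T m ^ 2 := by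
        rw [hT_def, Fin.sum_univ_eq_sum_range (fun m => (∑ j, a m j * w j) ^ 2) N]
      rw [this]
      have h2 : ∑' m : ℕ, σ (N + m) * (∑ j, a (N + m) j * w j) ^ 2
          = ∑' m, σ (N + m) * T (N + m) ^ 2 := by rw [hT_def]
      rw [h2]
      ring
    rw [hq_eq, hsplit, hqt_eq, tsum_congr hctail]
    linarith [hhead]
  calc σ n.val * (1 - σ n.val * (un ⬝ᵥ K⁻¹.mulVec un))
      ≤ σ n.val + 2 * σ n.val * (un ⬝ᵥ w) + w ⬝ᵥ K.mulVec w := hstepB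
    _ ≤ σ 0 + 2 * σ 0 * (un ⬝ᵥ w) + w ⬝ᵥ Kt.mulVec w := hstepC
    _ = σ 0 * (1 - σ 0 * (un ⬝ᵥ Kt⁻¹.mulVec un)) := hstepA
end

section
/- Let x = (x_1,…,x_N) ∈ X^N with det E(x) ≠ 0, so that each matrix K^{(ℓ)}(x) is invertible, and define Δ_n^{(ℓ)}(x) := σ^{(ℓ)}_n · u_nᵀ (K^{(ℓ)}(x))^{-1} u_n. Then for every n ∈ [N] with n ≠ 1: (i) σ_n ( 1 − Δ_n^{(n-1)}(x) ) ≤ σ_1 ( 1 − Δ_n^{(n)}(x) ), and (ii) for every ℓ ∈ [N] with ℓ ∉ {1, n}: 1 − Δ_n^{(ℓ-1)}(x) ≤ 1 − Δ_n^{(ℓ)}(x). -/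
open scoped BigOperators Matrix

section Aux
variable {X : Type*}

lemma stmt10_sum_base (e : ℕ → X → ℝ) (σ : ℕ → ℝ) (hσpos : ∀ m, 0 < σ m)
    (hdiag : ∀ z : X, Summable fun m => σ m * (e m z) ^ 2) (a b : X) :
    Summable fun m => σ m * e m a * e m b := by
  apply Summable.of_abs
  refine Summable.of_nonneg_of_le (fun m => abs_nonneg _) (fun m => ?_)
    (((hdiag a).add (hdiag b)).div_const 2)
  rw [abs_mul, abs_mul, abs_of_pos (hσpos m)]
  nlinarith [mul_nonneg (hσpos m).le (sq_nonneg (|e m a| - |e m b|)), sq_abs (e m a),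
    sq_abs (e m b), abs_nonneg (e m a), abs_nonneg (e m b), (hσpos m).le]

lemma stmt10_sum_coef (e : ℕ → X → ℝ) (σ : ℕ → ℝ) (hσpos : ∀ m, 0 < σ m)
    (hdiag : ∀ z : X, Summable fun m => σ m * (e m z) ^ 2) (h : ℕ → ℝ) (c : ℕ)
    (hh : ∀ m, c ≤ m → h m = σ m) (a b : X) :
    Summable fun m => h m * e m a * e m b := by
  have h1 : Summable fun m => (h m - σ m) * e m a * e m b := by
    apply summable_of_ne_finset_zero (s := Finset.range c)
    intro m hm
    rw [hh m (by simpa using hm)]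
    ring
  have := h1.add (stmt10_sum_base e σ hσpos hdiag a b)
  refine this.congr fun m => by ring

lemma stmt10_quad (e : ℕ → X → ℝ) {N : ℕ} (x : Fin N → X) (h : ℕ → ℝ)
    (hsum : ∀ i j : Fin N, Summable fun m => h m * e m (x i) * e m (x j)) (y : Fin N → ℝ) :
    Summable (fun m => h m * (∑ j, e m (x j) * y j) ^ 2) ∧
    y ⬝ᵥ (Matrix.of fun i j : Fin N => ∑' m, h m * e m (x i) * e m (x j)).mulVec y
      = ∑' m, h m * (∑ j, e m (x j) * y j) ^ 2 := by
  classical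
  have key : ∀ m, h m * (∑ j, e m (x j) * y j) ^ 2
      = ∑ i, ∑ j, y i * (h m * e m (x i) * e m (x j) * y j) := by
    intro m
    rw [sq, Finset.sum_mul_sum]
    rw [Finset.mul_sum]
    refine Finset.sum_congr rfl fun i _ => ?_
    rw [Finset.mul_sum]
    exact Finset.sum_congr rfl fun j _ => by ring
  have hs1 : ∀ i j : Fin N, Summable fun m => y i * (h m * e m (x i) * e m (x j) * y j) :=
    fun i j => ((hsum i j).mul_right _).mul_left _
  have hs2 : ∀ i : Fin N, Summable fun m => ∑ j, y i * (h m * e m (x i) * e m (x j) * y j) :=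
    fun i => summable_sum fun j _ => hs1 i j
  have hs3 : Summable fun m => ∑ i, ∑ j, y i * (h m * e m (x i) * e m (x j) * y j) :=
    summable_sum fun i _ => hs2 i
  constructor
  · exact hs3.congr fun m => (key m).symm
  · have expand : y ⬝ᵥ (Matrix.of fun i j : Fin N =>
        ∑' m, h m * e m (x i) * e m (x j)).mulVec y
        = ∑ i, ∑ j, y i * ((∑' m, h m * e m (x i) * e m (x j)) * y j) := by
      simp [Matrix.mulVec, dotProduct, Finset.mul_sum]
    rw [expand]
    have step1 : ∀ i j : Fin N, y i * ((∑' m, h m * e m (x i) * e m (x j)) * y j)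
        = ∑' m, y i * (h m * e m (x i) * e m (x j) * y j) := by
      intro i j
      rw [← tsum_mul_right, ← tsum_mul_left]
    calc ∑ i, ∑ j, y i * ((∑' m, h m * e m (x i) * e m (x j)) * y j)
        = ∑ i, ∑ j, ∑' m, y i * (h m * e m (x i) * e m (x j) * y j) :=
          Finset.sum_congr rfl fun i _ => Finset.sum_congr rfl fun j _ => step1 i j
      _ = ∑ i, ∑' m, ∑ j, y i * (h m * e m (x i) * e m (x j) * y j) :=
          Finset.sum_congr rfl fun i _ => (Summable.tsum_finsetSum fun j _ => hs1 i j).symm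
      _ = ∑' m, ∑ i, ∑ j, y i * (h m * e m (x i) * e m (x j) * y j) :=
          (Summable.tsum_finsetSum fun i _ => hs2 i).symm
      _ = ∑' m, h m * (∑ j, e m (x j) * y j) ^ 2 := tsum_congr fun m => (key m).symm

lemma stmt10_posdef (e : ℕ → X → ℝ) {N : ℕ} (x : Fin N → X) (h : ℕ → ℝ)
    (hpos : ∀ m, 0 < h m)
    (hsum : ∀ i j : Fin N, Summable fun m => h m * e m (x i) * e m (x j))
    (hEdet : (Matrix.of fun i j : Fin N => e i.val (x j)).det ≠ 0) :
    (Matrix.of fun i j : Fin N => ∑' m, h m * e m (x i) * e m (x j)).PosDef := by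
  classical
  set E : Matrix (Fin N) (Fin N) ℝ := Matrix.of fun i j : Fin N => e i.val (x j) with hE
  refine Matrix.PosDef.of_dotProduct_mulVec_pos ?_ ?_
  · ext i j
    simp only [Matrix.conjTranspose_apply, Matrix.of_apply, star_trivial]
    exact tsum_congr fun m => by ring
  · intro y hy
    have hquad := stmt10_quad e x h hsum y
    have hstar : star y = y := rfl
    rw [hstar, hquad.2]
    have hEy : E.mulVec y ≠ 0 := by
      intro h0
      apply hy
      have hEu : IsUnit E.det := hEdet.isUnit
      have := congrArg (fun z => E⁻¹.mulVec z) h0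
      simpa [Matrix.mulVec_mulVec, Matrix.nonsing_inv_mul E hEu] using this
    obtain ⟨i, hi⟩ := Function.ne_iff.mp hEy
    have hi' : (∑ j, e i.val (x j) * y j) ≠ 0 := by
      simpa [E, Matrix.mulVec, dotProduct] using hi
    have hterm : 0 < h i.val * (∑ j, e i.val (x j) * y j) ^ 2 :=
      mul_pos (hpos _) (by positivity)
    exact lt_of_lt_of_le hterm
      (Summable.le_tsum hquad.1 i.val fun m _ => mul_nonneg (hpos m).le (sq_nonneg _))

end Aux

/-- **Proposition 8 of the paper.** For the interpolating kernels `K^{(ℓ)}(x)`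
(first `ℓ` eigenvalues capped at `σ_1`), with `Δ_n^{(ℓ)}(x) = σ^{(ℓ)}_n u_nᵀ (K^{(ℓ)}(x))⁻¹ u_n`:
if `det E(x) ≠ 0` then each `K^{(ℓ)}(x)`, `ℓ ∈ [N]`, is invertible, and for `n ∈ [N]`, `n ≠ 1`:
(i) `σ_n (1 − Δ_n^{(n-1)}) ≤ σ_1 (1 − Δ_n^{(n)})`, and
(ii) for `ℓ ∈ [N] \ {1,n}`: `1 − Δ_n^{(ℓ-1)} ≤ 1 − Δ_n^{(ℓ)}`.
Indexing is 0-based: the matrix `Kl c` has its first `c` eigenvalues capped, so the paper's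
`K^{(ℓ)}` is `Kl ℓ`; the paper's index `n ∈ [N]` corresponds to `n : Fin N` via `n ↦ n+1`. -/
theorem stmt10 {X : Type*}
    (e : ℕ → X → ℝ) (σ : ℕ → ℝ)
    (hσpos : ∀ m, 0 < σ m) (hσanti : Antitone σ) (hσsum : Summable σ)
    (hdiag : ∀ z : X, Summable fun m => σ m * (e m z) ^ 2)
    (N : ℕ) (x : Fin N → X)
    (u : ℕ → Fin N → ℝ) (hu : ∀ m, u m = fun j => e m (x j))
    (Kl : ℕ → Matrix (Fin N) (Fin N) ℝ)
    (hKl : ∀ c, Kl c = Matrix.of fun i j : Fin N =>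
      ∑' m : ℕ, (if m < c then σ 0 else σ m) * e m (x i) * e m (x j))
    (Δ : Fin N → ℕ → ℝ)
    (hΔ : ∀ (n : Fin N) (c : ℕ), Δ n c =
      (if n.val < c then σ 0 else σ n.val) * (u n.val ⬝ᵥ (Kl c)⁻¹.mulVec (u n.val)))
    (hEdet : (Matrix.of fun i j : Fin N => e i.val (x j)).det ≠ 0) :
    (∀ c : ℕ, 1 ≤ c → c ≤ N → IsUnit (Kl c)) ∧
    (∀ n : Fin N, n.val ≠ 0 →
      σ n.val * (1 - Δ n n.val) ≤ σ 0 * (1 - Δ n (n.val + 1))) ∧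
    (∀ n : Fin N, n.val ≠ 0 → ∀ ℓ : Fin N, ℓ.val ≠ 0 → ℓ ≠ n →
      1 - Δ n ℓ.val ≤ 1 - Δ n (ℓ.val + 1)) := by
  classical
  have hgpos : ∀ c m, 0 < (if m < c then σ 0 else σ m) := by
    intro c m; split <;> [exact hσpos 0; exact hσpos m]
  have hgsum : ∀ c (i j : Fin N),
      Summable fun m => (if m < c then σ 0 else σ m) * e m (x i) * e m (x j) :=
    fun c i j => stmt10_sum_coef e σ hσpos hdiag _ c
      (fun m hm => if_neg (not_lt.2 hm)) _ _
  have hPD : ∀ c, (Kl c).PosDef := by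
    intro c
    rw [hKl]
    exact stmt10_posdef e x _ (hgpos c) (hgsum c) hEdet
  have hU : ∀ c, IsUnit (Kl c) := fun c => (hPD c).isUnit
  have hinvmul : ∀ c, (Kl c)⁻¹ * Kl c = 1 :=
    fun c => Matrix.nonsing_inv_mul _ ((Matrix.isUnit_iff_isUnit_det _).1 (hU c))
  have hmulinv : ∀ c, Kl c * (Kl c)⁻¹ = 1 :=
    fun c => Matrix.mul_nonsing_inv _ ((Matrix.isUnit_iff_isUnit_det _).1 (hU c))
  have hquad : ∀ c (y : Fin N → ℝ),
      Summable (fun m => (if m < c then σ 0 else σ m) * (∑ j, e m (x j) * y j) ^ 2) ∧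
      y ⬝ᵥ (Kl c).mulVec y
        = ∑' m, (if m < c then σ 0 else σ m) * (∑ j, e m (x j) * y j) ^ 2 := by
    intro c y
    rw [hKl]
    exact stmt10_quad e x _ (hgsum c) y
  -- recursion
  have hrecM : ∀ c, Kl (c + 1) = Kl c
      + Matrix.of (fun i j : Fin N => (σ 0 - σ c) * e c (x i) * e c (x j)) := by
    intro c
    ext i j
    rw [hKl, hKl]
    simp only [Matrix.add_apply, Matrix.of_apply]
    have hpt : ∀ m, (if m < c + 1 then σ 0 else σ m) * e m (x i) * e m (x j)
        = (if m < c then σ 0 else σ m) * e m (x i) * e m (x j)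
          + (if m = c then (σ 0 - σ c) * e c (x i) * e c (x j) else 0) := by
      intro m
      rcases lt_trichotomy m c with hm | hm | hm
      · simp [hm, Nat.lt_succ_of_lt hm, hm.ne]
      · subst hm
        simp only [lt_irrefl, if_false, Nat.lt_succ_self, if_true, if_pos rfl]
        ring
      · have h1 : ¬ m < c := not_lt.2 hm.le
        have h2 : ¬ m < c + 1 := by omega
        simp [h1, h2, hm.ne']
    rw [tsum_congr hpt,
      Summable.tsum_add (hgsum c i j) ((hasSum_ite_eq c _).summable), tsum_ite_eq]
  have hrec : ∀ c (z : Fin N → ℝ), (Kl (c + 1)).mulVec z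
      = (Kl c).mulVec z
        + ((σ 0 - σ c) * (∑ j, e c (x j) * z j)) • (fun j => e c (x j)) := by
    intro c z
    rw [hrecM c, Matrix.add_mulVec]
    congr 1
    ext i
    simp only [Matrix.mulVec, dotProduct, Matrix.of_apply, Pi.smul_apply,
      smul_eq_mul, Finset.mul_sum]
    rw [Finset.sum_mul]
    exact Finset.sum_congr rfl fun j _ => by ring
  refine ⟨fun c _ _ => hU c, ?_, ?_⟩
  · -- part (i)
    intro n hn
    rw [hΔ n n.val, hΔ n (n.val + 1)]
    simp only [hu, lt_irrefl, if_false, Nat.lt_succ_self, if_true]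
    set c := n.val with hc
    set v : Fin N → ℝ := fun j => e c (x j) with hv
    set a : Fin N → ℝ := (Kl c)⁻¹.mulVec v with ha
    set q : ℝ := v ⬝ᵥ a with hq
    have hAa : (Kl c).mulVec a = v := by
      rw [ha, Matrix.mulVec_mulVec, hmulinv c, Matrix.one_mulVec]
    have hsumq : (∑ j, e c (x j) * a j) = q := by
      rw [hq]; simp [dotProduct, hv]
    have hBa : (Kl (c + 1)).mulVec a = (1 + (σ 0 - σ c) * q) • v := by
      rw [hrec c a, hAa, hsumq]
      ext i
      simp only [Pi.add_apply, Pi.smul_apply, smul_eq_mul]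
      ring
    have haB : a = (1 + (σ 0 - σ c) * q) • (Kl (c + 1))⁻¹.mulVec v := by
      have h1 : (Kl (c + 1))⁻¹.mulVec ((Kl (c + 1)).mulVec a) = a := by
        rw [Matrix.mulVec_mulVec, hinvmul (c + 1), Matrix.one_mulVec]
      rw [← h1, hBa, Matrix.mulVec_smul]
    set qB : ℝ := v ⬝ᵥ (Kl (c + 1))⁻¹.mulVec v with hqB
    have hqrel : q = (1 + (σ 0 - σ c) * q) * qB := by
      conv_lhs => rw [hq, haB]
      rw [dotProduct_smul, smul_eq_mul, hqB]
    have haAa : a ⬝ᵥ (Kl c).mulVec a = q := by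
      rw [hAa, dotProduct_comm]
    have hq0 : 0 ≤ q := by
      rw [← haAa, (hquad c a).2]
      exact tsum_nonneg fun m => mul_nonneg (hgpos c m).le (sq_nonneg _)
    have hcq : σ c * q ≤ 1 := by
      have h3 : (if c < c then σ 0 else σ c) * (∑ j, e c (x j) * a j) ^ 2
          ≤ a ⬝ᵥ (Kl c).mulVec a := by
        rw [(hquad c a).2]
        exact Summable.le_tsum (hquad c a).1 c fun m _ => mul_nonneg (hgpos c m).le (sq_nonneg _)
      rw [haAa, hsumq, if_neg (lt_irrefl c)] at h3
      rcases hq0.eq_or_lt with h | h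
      · rw [← h]; simp
      · nlinarith [hσpos c]
    have hσc0 : σ c ≤ σ 0 := hσanti (Nat.zero_le c)
    have hD : (0:ℝ) < 1 + (σ 0 - σ c) * q := by
      nlinarith [mul_nonneg (sub_nonneg.2 hσc0) hq0]
    have h5 : (1 + (σ 0 - σ c) * q) * qB = q := hqrel.symm
    have step : σ c * (1 - σ c * q) * (1 + (σ 0 - σ c) * q)
        ≤ σ 0 * (1 - σ 0 * qB) * (1 + (σ 0 - σ c) * q) := by
      have expandR : σ 0 * (1 - σ 0 * qB) * (1 + (σ 0 - σ c) * q)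
          = σ 0 * (1 + (σ 0 - σ c) * q) - σ 0 ^ 2 * q := by
        calc σ 0 * (1 - σ 0 * qB) * (1 + (σ 0 - σ c) * q)
            = σ 0 * (1 + (σ 0 - σ c) * q)
              - σ 0 ^ 2 * ((1 + (σ 0 - σ c) * q) * qB) := by ring
          _ = σ 0 * (1 + (σ 0 - σ c) * q) - σ 0 ^ 2 * q := by rw [h5]
      rw [expandR]
      nlinarith [mul_nonneg (sub_nonneg.2 hσc0) (sq_nonneg (1 - σ c * q))]
    exact le_of_mul_le_mul_right step hD
  · -- part (ii)
    intro n hn ℓ hl hln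
    rw [hΔ n ℓ.val, hΔ n (ℓ.val + 1)]
    simp only [hu]
    set c := ℓ.val with hc
    have hnc : n.val ≠ c := fun h => hln (Fin.val_injective h.symm)
    set w : Fin N → ℝ := fun j => e n.val (x j) with hw
    set a : Fin N → ℝ := (Kl c)⁻¹.mulVec w with ha
    set b : Fin N → ℝ := (Kl (c + 1))⁻¹.mulVec w with hb
    have hAa : (Kl c).mulVec a = w := by
      rw [ha, Matrix.mulVec_mulVec, hmulinv c, Matrix.one_mulVec]
    have hBb : (Kl (c + 1)).mulVec b = w := by
      rw [hb, Matrix.mulVec_mulVec, hmulinv (c + 1), Matrix.one_mulVec]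
    have hsym : (Kl c)ᵀ = Kl c := by
      rw [hKl]
      ext i j
      simp only [Matrix.transpose_apply, Matrix.of_apply]
      exact tsum_congr fun m => by ring
    -- h1 : b ⬝ᵥ A b ≤ b ⬝ᵥ w
    have h1 : b ⬝ᵥ (Kl c).mulVec b ≤ b ⬝ᵥ w := by
      have e1 : b ⬝ᵥ (Kl (c + 1)).mulVec b
          = b ⬝ᵥ (Kl c).mulVec b
            + (σ 0 - σ c) * (∑ j, e c (x j) * b j) * (∑ j, e c (x j) * b j) := by
        rw [hrec c b, dotProduct_add, dotProduct_smul, smul_eq_mul]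
        congr 1
        have hbv : b ⬝ᵥ (fun j => e c (x j)) = ∑ j, e c (x j) * b j := by
          simp only [dotProduct]
          exact Finset.sum_congr rfl fun j _ => mul_comm _ _
        rw [hbv]
      have e2 : b ⬝ᵥ (Kl (c + 1)).mulVec b = b ⬝ᵥ w := by rw [hBb]
      have hσc0 : σ c ≤ σ 0 := hσanti (Nat.zero_le c)
      nlinarith [sq_nonneg (∑ j, e c (x j) * b j),
        mul_nonneg (sub_nonneg.2 hσc0) (sq_nonneg (∑ j, e c (x j) * b j))]
    have h2 : 0 ≤ (b - a) ⬝ᵥ (Kl c).mulVec (b - a) := by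
      rw [(hquad c (b - a)).2]
      exact tsum_nonneg fun m => mul_nonneg (hgpos c m).le (sq_nonneg _)
    have h3 : a ⬝ᵥ (Kl c).mulVec b = w ⬝ᵥ b := by
      rw [Matrix.dotProduct_mulVec, ← Matrix.mulVec_transpose, hsym, hAa]
    have h4 : (b - a) ⬝ᵥ (Kl c).mulVec (b - a)
        = b ⬝ᵥ (Kl c).mulVec b - b ⬝ᵥ w - (w ⬝ᵥ b) + (w ⬝ᵥ a) := by
      rw [Matrix.mulVec_sub, hAa, sub_dotProduct, dotProduct_sub,
        dotProduct_sub, h3]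
      have : a ⬝ᵥ w = w ⬝ᵥ a := dotProduct_comm _ _
      linarith [this]
    have hbw : b ⬝ᵥ w = w ⬝ᵥ b := dotProduct_comm _ _
    have hqBA : w ⬝ᵥ b ≤ w ⬝ᵥ a := by linarith [h1, h2, h4, hbw]
    -- coefficients agree
    have hiff : (n.val < c + 1) ↔ (n.val < c) := by omega
    by_cases hlt : n.val < c
    · simp only [if_pos hlt, if_pos (hiff.2 hlt)]
      have := mul_le_mul_of_nonneg_left hqBA (hσpos 0).le
      linarith
    · simp only [if_neg hlt, if_neg (fun h => hlt (hiff.1 h))]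
      have := mul_le_mul_of_nonneg_left hqBA (hσpos n.val).le
      linarith
end

section
/- Let N ≤ M, let A ∈ ℝ^{N×M} have full rank N, let i ∈ [M] and ρ > 0, and let W ∈ ℝ^{M×M} be the diagonal matrix with W_{ii} = √(1+ρ) and W_{jj} = 1 for j ≠ i. Then τ_i(AW) = (1+ρ) τ_i(A) / (1 + ρ τ_i(A)) ≥ τ_i(A), and for every j ∈ [M] with j ≠ i, τ_j(AW) = τ_j(A) − ρ τ_{i,j}(A)² / (1 + ρ τ_i(A)) ≤ τ_j(A). -/
open scoped BigOperators Matrix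
open Matrix

section aux
set_option linter.unusedSectionVars false
variable {m n : Type*} [Fintype m] [Fintype n]

lemma myVecMulVec_mulVec (v : m → ℝ) (w : n → ℝ) (x : n → ℝ) :
    (vecMulVec v w).mulVec x = (w ⬝ᵥ x) • v := by
  ext a
  simp only [mulVec, vecMulVec_apply, dotProduct, Pi.smul_apply, smul_eq_mul, Finset.mul_sum]
  rw [Finset.sum_mul]
  exact Finset.sum_congr rfl fun k _ => by ring

lemma myMat_mul_vecMulVec (X : Matrix m n ℝ) (v : n → ℝ) (w : n → ℝ) :
    X * vecMulVec v w = vecMulVec (X.mulVec v) w := by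
  ext a b
  simp only [mul_apply, vecMulVec_apply, mulVec, dotProduct, Finset.sum_mul]
  exact Finset.sum_congr rfl fun k _ => by ring

lemma myVecMulVec_mul_mat (v : m → ℝ) (w : n → ℝ) (X : Matrix n n ℝ) :
    vecMulVec v w * X = vecMulVec v (X.vecMul w) := by
  ext a b
  simp only [mul_apply, vecMulVec_apply, vecMul, dotProduct, Finset.mul_sum]
  exact Finset.sum_congr rfl fun k _ => by ring

lemma myVecMulVec_mul_vecMulVec (v : m → ℝ) (w : n → ℝ) (x : n → ℝ) (y : m → ℝ) :
    vecMulVec v w * vecMulVec x y = (w ⬝ᵥ x) • vecMulVec v y := by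
  ext a b
  simp only [mul_apply, vecMulVec_apply, Matrix.smul_apply, dotProduct, smul_eq_mul, Finset.sum_mul]
  exact Finset.sum_congr rfl fun k _ => by ring

end aux

/-- **leverage scores under rank-one reweighting.** For full-rank
`A ∈ ℝ^{N×M}` (`N ≤ M`), `ρ > 0`, and `W` diagonal with `W_{ii} = √(1+ρ)` and `1` elsewhere,
`τ_i(AW) = (1+ρ)τ_i(A)/(1+ρτ_i(A)) ≥ τ_i(A)` and for `j ≠ i`,
`τ_j(AW) = τ_j(A) − ρ τ_{i,j}(A)²/(1+ρτ_i(A)) ≤ τ_j(A)`. -/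
theorem stmt11 (N M : ℕ) (hNM : N ≤ M)
    (A : Matrix (Fin N) (Fin M) ℝ) (hrank : A.rank = N)
    (i : Fin M) (ρ : ℝ) (hρ : 0 < ρ)
    (W : Matrix (Fin M) (Fin M) ℝ)
    (hW : W = Matrix.diagonal fun j => if j = i then Real.sqrt (1 + ρ) else 1)
    (τ : Matrix (Fin N) (Fin M) ℝ → Fin M → ℝ)
    (hτ : ∀ B j, τ B j = (fun r => B r j) ⬝ᵥ (B * Bᵀ)⁻¹.mulVec fun r => B r j)
    (τc : Matrix (Fin N) (Fin M) ℝ → Fin M → Fin M → ℝ)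
    (hτc : ∀ B j l, τc B j l = (fun r => B r j) ⬝ᵥ (B * Bᵀ)⁻¹.mulVec fun r => B r l) :
    τ (A * W) i = (1 + ρ) * τ A i / (1 + ρ * τ A i) ∧
    τ A i ≤ τ (A * W) i ∧
    ∀ j : Fin M, j ≠ i →
      τ (A * W) j = τ A j - ρ * (τc A i j) ^ 2 / (1 + ρ * τ A i) ∧
      τ (A * W) j ≤ τ A j := by
  classical
  set S : Matrix (Fin N) (Fin N) ℝ := A * Aᵀ with hS
  set v : Fin N → ℝ := fun r => A r i with hv
  -- S is invertible
  have hSunit : IsUnit S := by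
    rw [← Matrix.mulVec_surjective_iff_isUnit]
    have hrk : S.rank = N := by
      rw [hS, Matrix.rank_self_mul_transpose, hrank]
    have htop : LinearMap.range S.mulVecLin = ⊤ := by
      apply Submodule.eq_top_of_finrank_eq
      rw [Module.finrank_pi]
      simpa [Matrix.rank, Fintype.card_fin] using hrk
    intro y
    obtain ⟨x, hx⟩ := LinearMap.range_eq_top.mp htop y
    exact ⟨x, by simpa using hx⟩
  have hdet : IsUnit S.det := (Matrix.isUnit_iff_isUnit_det S).mp hSunit
  set P : Matrix (Fin N) (Fin N) ℝ := S⁻¹ with hP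
  have hSr : S * P = 1 := Matrix.mul_nonsing_inv S hdet
  have hSl : P * S = 1 := Matrix.nonsing_inv_mul S hdet
  have hSsymm : Sᵀ = S := by rw [hS, Matrix.transpose_mul, Matrix.transpose_transpose]
  have hPsymm : Pᵀ = P := by
    rw [hP, Matrix.transpose_nonsing_inv, hSsymm]
  -- the projection matrix Q
  set Q : Matrix (Fin M) (Fin M) ℝ := Aᵀ * P * A with hQ
  have hQsymm : ∀ j l, Q j l = Q l j := by
    intro j l
    have hQt : Qᵀ = Q := by
      rw [hQ, Matrix.transpose_mul, Matrix.transpose_mul, Matrix.transpose_transpose,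
        hPsymm, Matrix.mul_assoc]
    conv_lhs => rw [← hQt]
    rfl
  have hQidem : Q * Q = Q := by
    have h1 : Aᵀ * P * A * (Aᵀ * P * A) = Aᵀ * (P * ((A * Aᵀ) * (P * A))) := by
      simp only [Matrix.mul_assoc]
    rw [hQ, h1, ← hS, ← Matrix.mul_assoc S P A, hSr, Matrix.one_mul, ← Matrix.mul_assoc]
  -- τ and τc in terms of Q
  have hτQ : ∀ j l, (fun r => A r j) ⬝ᵥ P.mulVec (fun r => A r l) = Q j l := by
    intro j l
    simp only [hQ, Matrix.mul_apply, Matrix.transpose_apply, dotProduct, Matrix.mulVec,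
      dotProduct, Finset.sum_mul, Finset.mul_sum]
    rw [Finset.sum_comm]
    exact Finset.sum_congr rfl fun r _ => Finset.sum_congr rfl fun s _ => by ring
  have hτA : ∀ j, τ A j = Q j j := by
    intro j; rw [hτ, ← hS, ← hP, hτQ]
  have hτcA : ∀ j l, τc A j l = Q j l := by
    intro j l; rw [hτc, ← hS, ← hP, hτQ]
  -- positivity facts
  set t : ℝ := Q i i with ht
  have hQQ : (Q * Q) i i = Q i i := by rw [hQidem]
  rw [Matrix.mul_apply] at hQQ
  have hsum : t = ∑ k, (Q i k) ^ 2 := by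
    rw [ht, ← hQQ]
    exact Finset.sum_congr rfl fun k _ => by rw [hQsymm k i]; ring
  have ht0 : 0 ≤ t := by
    rw [hsum]; exact Finset.sum_nonneg fun k _ => sq_nonneg _
  have ht1 : t ^ 2 ≤ t := by
    calc t ^ 2 = (Q i i) ^ 2 := by rw [ht]
      _ ≤ ∑ k, (Q i k) ^ 2 :=
          Finset.single_le_sum (fun k _ => sq_nonneg (Q i k)) (Finset.mem_univ i)
      _ = t := hsum.symm
  have hc0 : 0 < 1 + ρ * t := by positivity
  have hcne : (1 : ℝ) + ρ * t ≠ 0 := ne_of_gt hc0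
  -- the reweighted Gram matrix
  have h1ρ : (0:ℝ) ≤ 1 + ρ := by linarith
  have hsq : Real.sqrt (1 + ρ) * Real.sqrt (1 + ρ) = 1 + ρ := Real.mul_self_sqrt h1ρ
  set B : Matrix (Fin N) (Fin M) ℝ := A * W with hB
  have hBcol : ∀ r k, B r k = A r k * (if k = i then Real.sqrt (1 + ρ) else 1) := by
    intro r k
    rw [hB, hW, Matrix.mul_diagonal]
  set V : Matrix (Fin N) (Fin N) ℝ := vecMulVec v v with hV
  have hBB : B * Bᵀ = S + ρ • V := by
    ext r s
    simp only [Matrix.mul_apply, Matrix.transpose_apply, Matrix.add_apply, Matrix.smul_apply,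
      hV, vecMulVec_apply, smul_eq_mul, hS]
    have key : ∀ k, B r k * B s k = A r k * A s k + (if k = i then ρ * (v r * v s) else 0) := by
      intro k
      rw [hBcol, hBcol]
      split_ifs with h
      · subst h
        simp only [hv]
        linear_combination (A r k * A s k) * hsq
      · ring
    rw [Finset.sum_congr rfl fun k _ => key k, Finset.sum_add_distrib,
      Finset.sum_ite_eq' Finset.univ i (fun _ => ρ * (v r * v s))]
    simp
  -- the explicit inverse
  set K : Matrix (Fin N) (Fin N) ℝ := P - (ρ / (1 + ρ * t)) • (P * V * P) with hK
  have hVP : V * P = vecMulVec v (P.vecMul v) := myVecMulVec_mul_mat v v P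
  have hvPv : (P.vecMul v) ⬝ᵥ v = t := by
    have h1 : v ⬝ᵥ P.mulVec v = t := by
      have := hτQ i i
      rw [← hv] at this
      rw [this, ht]
    rw [← h1, Matrix.dotProduct_mulVec]
  have hSPVP : S * (P * V * P) = V * P := by
    rw [← Matrix.mul_assoc, ← Matrix.mul_assoc, hSr, Matrix.one_mul]
  have hVPV : V * P * V = t • V := by
    rw [hVP, hV, myVecMulVec_mul_vecMulVec, hvPv]
  have hVPVP : V * (P * V * P) = t • (V * P) := by
    calc V * (P * V * P) = (V * P * V) * P := by simp only [Matrix.mul_assoc]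
      _ = (t • V) * P := by rw [hVPV]
      _ = t • (V * P) := by rw [Matrix.smul_mul]
  have hNK : (S + ρ • V) * K = 1 := by
    rw [hK, Matrix.add_mul, Matrix.mul_sub, Matrix.mul_sub, Matrix.mul_smul, Matrix.mul_smul,
      Matrix.smul_mul, Matrix.smul_mul, hSr, hSPVP, hVPVP]
    match_scalars
    · ring
    · field_simp
      ring
  have hInv : (B * Bᵀ)⁻¹ = K := by
    rw [hBB]
    exact Matrix.inv_eq_right_inv hNK
  -- quadratic forms against K
  have hKform : ∀ j l, (fun r => A r j) ⬝ᵥ K.mulVec (fun r => A r l) =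
      Q j l - ρ / (1 + ρ * t) * (Q i j * Q i l) := by
    intro j l
    have hPVPw : (P * V * P).mulVec (fun r => A r l) =
        (v ⬝ᵥ P.mulVec (fun r => A r l)) • P.mulVec v := by
      rw [← Matrix.mulVec_mulVec, ← Matrix.mulVec_mulVec, hV, myVecMulVec_mulVec,
        Matrix.mulVec_smul]
    have e1 := hτQ j l
    have e2 := hτQ i l
    have e3 := hτQ j i
    rw [← hv] at e2 e3
    rw [hK, Matrix.sub_mulVec, dotProduct_sub, Matrix.smul_mulVec, dotProduct_smul,
      hPVPw, dotProduct_smul, e1, e2, e3, hQsymm j i, smul_eq_mul, smul_eq_mul]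
    ring
  -- columns of B
  have hBform : ∀ j, τ B j =
      (if j = i then 1 + ρ else 1) * (Q j j - ρ / (1 + ρ * t) * (Q i j * Q i j)) := by
    intro j
    rw [hτ, hInv]
    have hcol : (fun r => B r j) =
        (if j = i then Real.sqrt (1 + ρ) else 1) • (fun r => A r j) := by
      funext r
      rw [hBcol]
      simp [mul_comm]
    rw [hcol, smul_dotProduct, Matrix.mulVec_smul, dotProduct_smul, smul_smul, smul_eq_mul,
      hKform j j]
    split_ifs with h
    · subst h
      rw [hsq]
    · rw [one_mul, one_mul]
  have hτAi : τ A i = t := by rw [hτA i]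
  refine ⟨?_, ?_, ?_⟩
  · rw [hBform i, if_pos rfl, hτAi, ← ht]
    rw [eq_div_iff hcne]
    have h2 : ρ * (t * t) / (1 + ρ * t) * (1 + ρ * t) = ρ * (t * t) := div_mul_cancel₀ _ hcne
    linear_combination (-(1 + ρ)) * h2
  · rw [hBform i, if_pos rfl, hτAi, ← ht]
    rw [← sub_nonneg]
    have hid : (1 + ρ) * (t - ρ / (1 + ρ * t) * (t * t)) - t =
        ρ * (t - t ^ 2) / (1 + ρ * t) := by
      field_simp
      ring
    rw [hid]
    exact div_nonneg (mul_nonneg hρ.le (by nlinarith)) hc0.le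
  · intro j hj
    have hform := hBform j
    rw [if_neg hj, one_mul] at hform
    constructor
    · rw [hform, hτA j, hτcA i j, hτAi]
      ring
    · rw [hform, hτA j]
      have hnn : 0 ≤ ρ / (1 + ρ * t) * (Q i j * Q i j) :=
        mul_nonneg (div_nonneg hρ.le hc0.le) (mul_self_nonneg _)
      linarith
end
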